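/- arXiv:2403.15963 — 4 statements merged into one kernel-verified Lean document; each statement's English description precedes it below -/
import Mathlib

section
/- The set E is nonempty, inf E = −∞ and sup E = +∞; that is, E is unbounded both from above and from below. -/
open MeasureTheory Filter Set
open Topology
open scoped Interval

namespace HJCore

set_option linter.unusedSectionVars false
set_option maxHeartbeats 1000000

noncomputable def picard {Ω : Type} (F : ℝ → ℝ → Ω → ℝ) (c : ℝ) : ℕ → ℝ → Ω → ℝ
  | 0 => fun _ _ => c
  | k + 1 => fun x ω => c + ∫ t in (0:ℝ)..x, F t (picard F c k t ω) ω

lemma picard_succ {Ω : Type} (F : ℝ → ℝ → Ω → ℝ) (c : ℝ) (k : ℕ) (x : ℝ) (ω : Ω) :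
    picard F c (k+1) x ω = c + ∫ t in (0:ℝ)..x, F t (picard F c k t ω) ω := rfl

noncomputable def rawLim {Ω : Type} (F : ℝ → ℝ → Ω → ℝ) (c : ℝ) (x : ℝ) (ω : Ω) : ℝ :=
  (Filter.liminf (fun k => ((picard F c k x ω : ℝ) : EReal)) Filter.atTop).toReal

noncomputable def statFun {Ω : Type} (τ : ℝ → Ω → Ω) (F : ℝ → ℝ → Ω → ℝ) (c : ℝ)
    (x : ℝ) (ω : Ω) : ℝ :=
  ⨆ n : ℕ, rawLim F c n (τ (x - n) ω)


/-- Measurability of a parametrized interval integral with variable endpoint. -/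
lemma measurable_param_intervalIntegral {α : Type*} [MeasurableSpace α] {g : α → ℝ → ℝ}
    (hg : Measurable fun z : α × ℝ => g z.1 z.2) {e : α → ℝ} (he : Measurable e) :
    Measurable fun q => ∫ t in (0:ℝ)..(e q), g q t := by
  have key : ∀ (u v : α → ℝ), Measurable u → Measurable v →
      Measurable fun q => ∫ t in Ioc (u q) (v q), g q t := by
    intro u v hu hv
    have h1 : ∀ q, (∫ t in Ioc (u q) (v q), g q t) =
        ∫ t, ((Ioc (u q) (v q)).indicator (g q)) t := fun q =>
      (integral_indicator measurableSet_Ioc).symm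
    simp only [h1]
    have hsm : StronglyMeasurable fun z : α × ℝ => ((Ioc (u z.1) (v z.1)).indicator (g z.1)) z.2 := by
      have heq : (fun z : α × ℝ => ((Ioc (u z.1) (v z.1)).indicator (g z.1)) z.2) =
          ({z : α × ℝ | u z.1 < z.2 ∧ z.2 ≤ v z.1}).indicator (fun z => g z.1 z.2) := by
        funext z
        simp only [Set.indicator_apply, Set.mem_Ioc, Set.mem_setOf_eq]
      rw [heq]
      exact (hg.indicator ((measurableSet_lt (hu.comp measurable_fst) measurable_snd).inter
        (measurableSet_le measurable_snd (hv.comp measurable_fst)))).stronglyMeasurable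
    exact hsm.integral_prod_right'.measurable
  have h2 : ∀ q, (∫ t in (0:ℝ)..(e q), g q t) =
      (∫ t in Ioc (0:ℝ) (e q), g q t) - ∫ t in Ioc (e q) (0:ℝ), g q t := fun q => rfl
  simp only [h2]
  exact (key _ _ measurable_const he).sub (key _ _ he measurable_const)

structure CoreHyp {Ω : Type} [MeasurableSpace Ω] (τ : ℝ → Ω → Ω) (A : ℝ → Ω → ℝ)
    (F : ℝ → ℝ → Ω → ℝ) (c R C K : ℝ) : Prop where
  hτm : Measurable fun q : ℝ × Ω => τ q.1 q.2
  hτ0 : ∀ ω, τ 0 ω = ω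
  hτadd : ∀ x y ω, τ (x + y) ω = τ x (τ y ω)
  hAcont : ∀ ω, Continuous fun t => A t ω
  hApos : ∀ t ω, 0 < A t ω
  hFm : Measurable fun q : ℝ × ℝ × Ω => F q.1 q.2.1 q.2.2
  hFstat : ∀ t s p ω, F t p (τ s ω) = F (t + s) p ω
  hFlip : ∀ ω t p q, |F t p ω - F t q ω| ≤ K / A t ω * |p - q|
  hFbdd : ∀ ω t p, |F t p ω| ≤ C / A t ω
  hFcont : ∀ ω, Continuous fun q : ℝ × ℝ => F q.1 q.2 ω
  hFlow : ∀ ω t p, p ≤ c → 1 ≤ F t p ω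
  hFhigh : ∀ ω t p, R ≤ p → F t p ω ≤ -1
  hcR : c ≤ R
  hK : 0 < K
  hC : 0 < C

variable {Ω : Type} [MeasurableSpace Ω] {τ : ℝ → Ω → Ω} {A : ℝ → Ω → ℝ}
  {F : ℝ → ℝ → Ω → ℝ} {c R C K : ℝ}

section Basic

variable (hh : CoreHyp τ A F c R C K)
include hh

/-- Positive lower bound for `A` on a compact interval. -/
lemma alow (ω : Ω) (y x : ℝ) : ∃ α : ℝ, 0 < α ∧ ∀ t ∈ Icc y x, α ≤ A t ω := by
  rcases le_or_gt y x with h | h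
  · obtain ⟨z, hz, hmin⟩ := isCompact_Icc.exists_isMinOn (s := Icc y x)
      (Set.nonempty_Icc.2 h) (hh.hAcont ω).continuousOn
    exact ⟨A z ω, hh.hApos z ω, fun t ht => hmin ht⟩
  · exact ⟨1, one_pos, fun t ht => absurd (ht.1.trans ht.2) (not_le.2 h)⟩

lemma picard_measurable : ∀ k, Measurable fun q : ℝ × Ω => picard F c k q.1 q.2 := by
  intro k
  induction k with
  | zero => exact measurable_const
  | succ k ih =>
    have hbase : Measurable fun z : (ℝ × Ω) × ℝ => F z.2 (picard F c k z.2 z.1.2) z.1.2 :=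
      hh.hFm.comp <| measurable_snd.prodMk <|
        (ih.comp ((measurable_snd.prodMk (measurable_fst.snd)))).prodMk measurable_fst.snd
    exact measurable_const.add
      (measurable_param_intervalIntegral (g := fun (q : ℝ × Ω) t => F t (picard F c k t q.2) q.2)
        hbase measurable_fst)

lemma picard_meas_t (ω : Ω) (k : ℕ) : Measurable fun t => picard F c k t ω :=
  (picard_measurable hh k).comp (measurable_id.prodMk measurable_const)

lemma picard_meas_omega (x : ℝ) (k : ℕ) : Measurable fun ω : Ω => picard F c k x ω :=
  (picard_measurable hh k).comp (measurable_const.prodMk measurable_id)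

lemma integrand_meas (ω : Ω) (k : ℕ) : Measurable fun t => F t (picard F c k t ω) ω :=
  hh.hFm.comp (measurable_id.prodMk ((picard_meas_t hh ω k).prodMk measurable_const))

lemma bound_integrable (ω : Ω) (D x y : ℝ) :
    IntervalIntegrable (fun t => D / A t ω) volume x y :=
  (continuous_const.div (hh.hAcont ω) (fun t => (hh.hApos t ω).ne')).intervalIntegrable x y

lemma integrand_integrable (ω : Ω) (k : ℕ) (x y : ℝ) :
    IntervalIntegrable (fun t => F t (picard F c k t ω) ω) volume x y :=
  (bound_integrable hh ω C x y).mono_fun' (integrand_meas hh ω k).aestronglyMeasurable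
    (Filter.Eventually.of_forall fun t => by
      simpa [Real.norm_eq_abs] using hh.hFbdd ω t (picard F c k t ω))

lemma picard_zero (ω : Ω) (k : ℕ) : picard F c k 0 ω = c := by
  cases k with
  | zero => rfl
  | succ k => simp [picard]

lemma picard_est (ω : Ω) {x α : ℝ} (hx : 0 ≤ x) (hα : 0 < α)
    (hA : ∀ t ∈ Icc 0 x, α ≤ A t ω) :
    ∀ (k : ℕ), ∀ y ∈ Icc (0:ℝ) x, |picard F c (k+1) y ω - picard F c k y ω| ≤
      C / α * (K / α) ^ k * y ^ (k+1) / (Nat.factorial (k+1)) := by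
  have hCα : 0 ≤ C / α := div_nonneg hh.hC.le hα.le
  have hKα : 0 ≤ K / α := div_nonneg hh.hK.le hα.le
  intro k
  induction k with
  | zero =>
    intro y hy
    have hbound : ∀ t ∈ Ι (0:ℝ) y, ‖F t c ω‖ ≤ C / α := by
      intro t ht
      rw [uIoc_of_le hy.1] at ht
      have htm : t ∈ Icc 0 x := ⟨ht.1.le, ht.2.trans hy.2⟩
      calc ‖F t c ω‖ ≤ C / A t ω := by simpa [Real.norm_eq_abs] using hh.hFbdd ω t c
        _ ≤ C / α := div_le_div_of_nonneg_left hh.hC.le hα (hA t htm)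
    have := intervalIntegral.norm_integral_le_of_norm_le_const hbound
    simp only [picard, add_sub_cancel_left]
    calc |∫ t in (0:ℝ)..y, F t c ω| ≤ C / α * |y - 0| := by
          simpa [Real.norm_eq_abs] using this
      _ = C / α * (K / α) ^ 0 * y ^ (0+1) / (Nat.factorial (0+1)) := by
          rw [abs_of_nonneg (by linarith [hy.1] : (0:ℝ) ≤ y - 0)]
          simp
  | succ k ih =>
    intro y hy
    have hsub : picard F c (k+2) y ω - picard F c (k+1) y ω =
        ∫ t in (0:ℝ)..y, (F t (picard F c (k+1) t ω) ω - F t (picard F c k t ω) ω) := by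
      rw [picard_succ, picard_succ, add_sub_add_left_eq_sub,
        intervalIntegral.integral_sub (integrand_integrable hh ω (k+1) 0 y)
        (integrand_integrable hh ω k 0 y)]
    rw [hsub]
    set g : ℝ → ℝ := fun t => K / α * (C / α * (K / α) ^ k * t ^ (k+1) / (Nat.factorial (k+1)))
      with hg
    have hgint : IntervalIntegrable g volume 0 y := by
      apply Continuous.intervalIntegrable
      fun_prop
    have hbound : ∀ᵐ t ∂(volume.restrict (Ι (0:ℝ) y)),
        ‖F t (picard F c (k+1) t ω) ω - F t (picard F c k t ω) ω‖ ≤ g t := by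
      refine (ae_restrict_mem measurableSet_uIoc).mono fun t ht => ?_
      rw [uIoc_of_le hy.1] at ht
      have htm : t ∈ Icc 0 x := ⟨ht.1.le, ht.2.trans hy.2⟩
      have h1 := hh.hFlip ω t (picard F c (k+1) t ω) (picard F c k t ω)
      have h2 := ih t ⟨ht.1.le, ht.2.trans hy.2⟩
      have hKA : K / A t ω ≤ K / α := div_le_div_of_nonneg_left hh.hK.le hα (hA t htm)
      have habs : (0:ℝ) ≤ |picard F c (k+1) t ω - picard F c k t ω| := abs_nonneg _
      calc ‖F t (picard F c (k+1) t ω) ω - F t (picard F c k t ω) ω‖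
          ≤ K / A t ω * |picard F c (k+1) t ω - picard F c k t ω| := by
            simpa [Real.norm_eq_abs] using h1
        _ ≤ K / α * (C / α * (K / α) ^ k * t ^ (k+1) / (Nat.factorial (k+1))) :=
            mul_le_mul hKA h2 habs hKα
        _ = g t := rfl
    have := intervalIntegral.norm_integral_le_abs_of_norm_le hbound hgint
    rw [Real.norm_eq_abs] at this
    refine this.trans ?_
    have hfact : (0:ℝ) < Nat.factorial (k+1) := by positivity
    have hcalc : (∫ t in (0:ℝ)..y, g t) =
        K / α * (C / α * (K / α) ^ k / (Nat.factorial (k+1)) * (y ^ (k+2) / (k+2))) := by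
      rw [hg]
      simp only [mul_div_assoc]
      rw [intervalIntegral.integral_const_mul, intervalIntegral.integral_const_mul,
        intervalIntegral.integral_div]
      rw [integral_pow]
      push_cast
      ring
    rw [hcalc]
    have h2 : (Nat.factorial (k+1+1) : ℝ) = (k+2) * (Nat.factorial (k+1)) := by
      rw [Nat.factorial_succ]; push_cast; ring
    have hy0 : (0:ℝ) ≤ y := hy.1
    rw [abs_of_nonneg (by positivity)]
    rw [h2, pow_succ (K/α) k]
    apply le_of_eq
    have hk2 : ((k:ℝ) + 2) ≠ 0 := by positivity
    field_simp

lemma rawLim_eq_of_tendsto {ω : Ω} {x l : ℝ}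
    (h : Tendsto (fun k => picard F c k x ω) atTop (𝓝 l)) : rawLim F c x ω = l := by
  have h2 : Tendsto (fun k => ((picard F c k x ω : ℝ) : EReal)) atTop (𝓝 (l : EReal)) :=
    (EReal.tendsto_coe).2 h
  rw [rawLim, h2.liminf_eq, EReal.toReal_coe]

lemma picard_tendsto_rawLim (ω : Ω) {x : ℝ} (hx : 0 ≤ x) :
    Tendsto (fun k => picard F c k x ω) atTop (𝓝 (rawLim F c x ω)) := by
  obtain ⟨α, hα, hA⟩ := alow hh ω 0 x
  have hcauchy : CauchySeq (fun k => picard F c k x ω) := by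
    apply cauchySeq_of_dist_le_of_summable
      (fun k => C / α * (K / α) ^ k * x ^ (k+1) / (Nat.factorial (k+1)))
    · intro k
      rw [Real.dist_eq, abs_sub_comm]
      exact picard_est hh ω hx hα hA k x ⟨hx, le_rfl⟩
    · have hs := Real.summable_pow_div_factorial (K / α * x)
      have hs2 : Summable (fun k : ℕ => (K / α * x) ^ (k+1) / (Nat.factorial (k+1))) :=
        (summable_nat_add_iff 1).2 hs
      have := hs2.mul_left (C / K)
      apply this.congr
      intro k
      rw [mul_pow, pow_succ (K/α) k]
      have hK0 : K ≠ 0 := hh.hK.ne'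
      have hα0 : α ≠ 0 := hα.ne'
      field_simp
  obtain ⟨l, hl⟩ := cauchySeq_tendsto_of_complete hcauchy
  rw [rawLim_eq_of_tendsto hh hl]
  exact hl

lemma rawLim_zero (ω : Ω) : rawLim F c 0 ω = c := by
  apply rawLim_eq_of_tendsto hh
  have : (fun k => picard F c k 0 ω) = fun _ => c := funext fun k => picard_zero hh ω k
  rw [this]
  exact tendsto_const_nhds

lemma rawLim_aesm (ω : Ω) {s : Set ℝ} (hs : MeasurableSet s) (hsub : s ⊆ Ici 0) :
    AEStronglyMeasurable (fun t => F t (rawLim F c t ω) ω) (volume.restrict s) := by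
  have h1 : AEMeasurable (fun t => rawLim F c t ω) (volume.restrict s) := by
    apply aemeasurable_of_tendsto_metrizable_ae'
      (fun k => (picard_meas_t hh ω k).aemeasurable)
    exact (ae_restrict_mem hs).mono fun t ht => picard_tendsto_rawLim hh ω (hsub ht)
  have h2 : Measurable fun z : ℝ × ℝ => F z.1 z.2 ω :=
    hh.hFm.comp (measurable_fst.prodMk (measurable_snd.prodMk measurable_const))
  exact (h2.comp_aemeasurable (aemeasurable_id.prodMk h1)).aestronglyMeasurable

lemma rawG_integrable (ω : Ω) {x y : ℝ} (hx : 0 ≤ x) (hy : 0 ≤ y) :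
    IntervalIntegrable (fun t => F t (rawLim F c t ω) ω) volume x y := by
  have hsub : Ι x y ⊆ Ici 0 := fun t ht => (le_min hx hy).trans ht.1.le |>.trans le_rfl
  exact (bound_integrable hh ω C x y).mono_fun'
    (rawLim_aesm hh ω measurableSet_uIoc hsub)
    (Filter.Eventually.of_forall fun t => by
      simpa [Real.norm_eq_abs] using hh.hFbdd ω t (rawLim F c t ω))

lemma rawLim_inteq (ω : Ω) {x : ℝ} (hx : 0 ≤ x) :
    rawLim F c x ω = c + ∫ t in (0:ℝ)..x, F t (rawLim F c t ω) ω := by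
  have hDCT := intervalIntegral.tendsto_integral_filter_of_dominated_convergence
    (μ := volume) (a := 0) (b := x) (F := fun k t => F t (picard F c k t ω) ω)
    (f := fun t => F t (rawLim F c t ω) ω) (bound := fun t => C / A t ω) (l := atTop)
    (Filter.Eventually.of_forall fun k => (integrand_meas hh ω k).aestronglyMeasurable)
    (Filter.Eventually.of_forall fun k => Filter.Eventually.of_forall fun t _ => by
      simpa [Real.norm_eq_abs] using hh.hFbdd ω t (picard F c k t ω))
    (bound_integrable hh ω C 0 x)
    (Filter.Eventually.of_forall fun t ht => by
      rw [uIoc_of_le hx] at ht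
      have hcont : Continuous fun p : ℝ => F t p ω :=
        (hh.hFcont ω).comp (continuous_const.prodMk continuous_id)
      exact (hcont.tendsto _).comp (picard_tendsto_rawLim hh ω ht.1.le))
  have h1 : Tendsto (fun k => picard F c (k+1) x ω) atTop (𝓝 (rawLim F c x ω)) :=
    (picard_tendsto_rawLim hh ω hx).comp (tendsto_add_atTop_nat 1)
  have h2 : Tendsto (fun k => picard F c (k+1) x ω) atTop
      (𝓝 (c + ∫ t in (0:ℝ)..x, F t (rawLim F c t ω) ω)) := by
    have := hDCT.const_add c
    simpa only [picard_succ] using this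
  exact tendsto_nhds_unique h1 h2

lemma rawLim_sub (ω : Ω) {y x : ℝ} (hy : 0 ≤ y) (hx : 0 ≤ x) :
    rawLim F c x ω - rawLim F c y ω = ∫ t in y..x, F t (rawLim F c t ω) ω := by
  rw [rawLim_inteq hh ω hx, rawLim_inteq hh ω hy]
  rw [add_sub_add_left_eq_sub]
  exact intervalIntegral.integral_interval_sub_left
    (rawG_integrable hh ω (le_refl 0) hx) (rawG_integrable hh ω (le_refl 0) hy)

lemma rawLim_cont (ω : Ω) {X : ℝ} (hX : 0 ≤ X) :
    ContinuousOn (fun t => rawLim F c t ω) (Icc 0 X) := by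
  obtain ⟨α, hα, hA⟩ := alow hh ω 0 X
  apply LipschitzOnWith.continuousOn (K := Real.toNNReal (C/α))
  apply LipschitzOnWith.of_dist_le_mul
  intro x hx y hy
  rw [Real.dist_eq, Real.dist_eq, Real.coe_toNNReal _ (div_nonneg hh.hC.le hα.le),
    rawLim_sub hh ω hy.1 hx.1]
  have hbound : ∀ t ∈ Ι y x, ‖F t (rawLim F c t ω) ω‖ ≤ C / α := by
    intro t ht
    have ht1 : t ∈ Icc 0 X :=
      ⟨(le_min hy.1 hx.1).trans ht.1.le, ht.2.trans (max_le hy.2 hx.2)⟩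
    calc ‖F t (rawLim F c t ω) ω‖ ≤ C / A t ω := by
          simpa [Real.norm_eq_abs] using hh.hFbdd ω t (rawLim F c t ω)
      _ ≤ C / α := div_le_div_of_nonneg_left hh.hC.le hα (hA t ht1)
  simpa [Real.norm_eq_abs] using intervalIntegral.norm_integral_le_of_norm_le_const hbound

lemma rawLim_cwa (ω : Ω) {x : ℝ} (hx : 0 ≤ x) :
    ContinuousWithinAt (fun t => rawLim F c t ω) (Ioi x) x := by
  have h := (rawLim_cont hh ω (by linarith : (0:ℝ) ≤ x + 1)).continuousWithinAt
    (⟨hx, by linarith⟩ : x ∈ Icc 0 (x+1))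
  apply h.mono_of_mem_nhdsWithin
  apply mem_of_superset (inter_mem self_mem_nhdsWithin
    (nhdsWithin_le_nhds (Iio_mem_nhds (lt_add_one x))))
  intro t ht
  exact ⟨hx.trans (le_of_lt ht.1), le_of_lt ht.2⟩

lemma rawG_cwa (ω : Ω) {x : ℝ} (hx : 0 ≤ x) :
    ContinuousWithinAt (fun t => F t (rawLim F c t ω) ω) (Ioi x) x := by
  exact (hh.hFcont ω).continuousAt.comp_continuousWithinAt
    (continuousWithinAt_id.prodMk (rawLim_cwa hh ω hx))

lemma rawG_smaf (ω : Ω) {x : ℝ} (hx : 0 ≤ x) :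
    StronglyMeasurableAtFilter (fun t => F t (rawLim F c t ω) ω) (𝓝[Ioi x] x) volume := by
  refine ⟨Ioo x (x+1), ?_, rawLim_aesm hh ω measurableSet_Ioo
    (fun t ht => hx.trans (le_of_lt ht.1))⟩
  apply mem_of_superset (inter_mem self_mem_nhdsWithin
    (nhdsWithin_le_nhds (Iio_mem_nhds (lt_add_one x))))
  exact fun t ht => ⟨ht.1, ht.2⟩

lemma rawLim_hasDerivWithinAt (ω : Ω) {x : ℝ} (hx : 0 ≤ x) :
    HasDerivWithinAt (fun t => rawLim F c t ω) (F x (rawLim F c x ω) ω) (Ici x) x := by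
  have hprim : HasDerivWithinAt (fun u => ∫ t in (0:ℝ)..u, F t (rawLim F c t ω) ω)
      (F x (rawLim F c x ω) ω) (Ici x) x :=
    intervalIntegral.integral_hasDerivWithinAt_right (rawG_integrable hh ω le_rfl hx)
      (rawG_smaf hh ω hx) (rawG_cwa hh ω hx)
  have h2 := hprim.const_add c
  exact h2.congr (fun y hy => rawLim_inteq hh ω (hx.trans hy)) (rawLim_inteq hh ω hx)

lemma rawLim_hasDerivAt (ω : Ω) {x : ℝ} (hx : 0 < x) :
    HasDerivAt (fun t => rawLim F c t ω) (F x (rawLim F c x ω) ω) x := by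
  have hsm : StronglyMeasurableAtFilter (fun t => F t (rawLim F c t ω) ω) (𝓝 x) volume := by
    refine ⟨Ioo (x/2) (x+1), Ioo_mem_nhds (by linarith) (lt_add_one x),
      rawLim_aesm hh ω measurableSet_Ioo (fun t ht => (by linarith [ht.1] : (0:ℝ) ≤ t))⟩
  have hca : ContinuousAt (fun t => F t (rawLim F c t ω) ω) x := by
    have hraw : ContinuousAt (fun t => rawLim F c t ω) x :=
      (rawLim_cont hh ω (by linarith : (0:ℝ) ≤ x + 1)).continuousAt
        (Icc_mem_nhds hx (lt_add_one x))
    exact (hh.hFcont ω).continuousAt.comp (continuousAt_id.prodMk hraw)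
  have hprim : HasDerivAt (fun u => ∫ t in (0:ℝ)..u, F t (rawLim F c t ω) ω)
      (F x (rawLim F c x ω) ω) x :=
    intervalIntegral.integral_hasDerivAt_right (rawG_integrable hh ω le_rfl hx.le) hsm hca
  have heq : (fun t => rawLim F c t ω) =ᶠ[𝓝 x]
      (fun u => c + ∫ t in (0:ℝ)..u, F t (rawLim F c t ω) ω) :=
    Filter.eventuallyEq_of_mem (Ioo_mem_nhds hx (lt_add_one x))
      (fun y hy => rawLim_inteq hh ω hy.1.le)
  exact (hprim.const_add c).congr_of_eventuallyEq heq

lemma rawLim_mem (ω : Ω) {x : ℝ} (hx : 0 ≤ x) : rawLim F c x ω ∈ Icc c R := by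
  set u : ℝ → ℝ := fun t => rawLim F c t ω with hudef
  have hcont : ContinuousOn u (Icc 0 x) := rawLim_cont hh ω hx
  have hu0 : u 0 = c := rawLim_zero hh ω
  constructor
  · by_contra hbad
    push_neg at hbad
    set S := Icc 0 x ∩ u ⁻¹' (Ici c) with hS
    have hclosed : IsClosed S := hcont.preimage_isClosed_of_isClosed isClosed_Icc isClosed_Ici
    have hScpt : IsCompact S := isCompact_Icc.of_isClosed_subset hclosed inter_subset_left
    have hne : S.Nonempty := ⟨0, ⟨le_rfl, hx⟩, by simp [hu0]⟩
    have htS := hScpt.sSup_mem hne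
    set t₀ := sSup S with ht₀def
    have ht₀0 : 0 ≤ t₀ := htS.1.1
    have ht₀x : t₀ ≤ x := htS.1.2
    have hut₀ : c ≤ u t₀ := htS.2
    have htlt : t₀ < x := lt_of_le_of_ne ht₀x (fun h => absurd (h ▸ hut₀) (not_le.2 hbad))
    have hlt : ∀ t ∈ Ioc t₀ x, u t < c := by
      intro t ht
      by_contra hge
      push_neg at hge
      have htmem : t ∈ S := ⟨⟨ht₀0.trans ht.1.le, ht.2⟩, hge⟩
      exact absurd (le_csSup hScpt.bddAbove htmem) (not_le.2 ht.1)
    have hmono : StrictMonoOn u (Icc t₀ x) := by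
      apply strictMonoOn_of_deriv_pos (convex_Icc _ _)
        (hcont.mono (Icc_subset_Icc ht₀0 le_rfl))
      intro t ht
      rw [interior_Icc] at ht
      have htpos : 0 < t := lt_of_le_of_lt ht₀0 ht.1
      rw [(rawLim_hasDerivAt hh ω htpos).deriv]
      have := hh.hFlow ω t (u t) (hlt t ⟨ht.1, ht.2.le⟩).le
      linarith
    have := hmono ⟨le_rfl, htlt.le⟩ ⟨htlt.le, le_rfl⟩ htlt
    linarith
  · by_contra hbad
    push_neg at hbad
    set S := Icc 0 x ∩ u ⁻¹' (Iic R) with hS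
    have hclosed : IsClosed S := hcont.preimage_isClosed_of_isClosed isClosed_Icc isClosed_Iic
    have hScpt : IsCompact S := isCompact_Icc.of_isClosed_subset hclosed inter_subset_left
    have hne : S.Nonempty := ⟨0, ⟨le_rfl, hx⟩, by simp [hu0, hh.hcR]⟩
    have htS := hScpt.sSup_mem hne
    set t₀ := sSup S with ht₀def
    have ht₀0 : 0 ≤ t₀ := htS.1.1
    have ht₀x : t₀ ≤ x := htS.1.2
    have hut₀ : u t₀ ≤ R := htS.2
    have htlt : t₀ < x := lt_of_le_of_ne ht₀x (fun h => absurd (h ▸ hut₀) (not_le.2 hbad))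
    have hlt : ∀ t ∈ Ioc t₀ x, R < u t := by
      intro t ht
      by_contra hge
      push_neg at hge
      have htmem : t ∈ S := ⟨⟨ht₀0.trans ht.1.le, ht.2⟩, hge⟩
      exact absurd (le_csSup hScpt.bddAbove htmem) (not_le.2 ht.1)
    have hmono : StrictAntiOn u (Icc t₀ x) := by
      apply strictAntiOn_of_deriv_neg (convex_Icc _ _)
        (hcont.mono (Icc_subset_Icc ht₀0 le_rfl))
      intro t ht
      rw [interior_Icc] at ht
      have htpos : 0 < t := lt_of_le_of_lt ht₀0 ht.1
      rw [(rawLim_hasDerivAt hh ω htpos).deriv]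
      have := hh.hFhigh ω t (u t) (hlt t ⟨ht.1, ht.2.le⟩).le
      linarith
    have := hmono ⟨le_rfl, htlt.le⟩ ⟨htlt.le, le_rfl⟩ htlt
    linarith

lemma compare (ω : Ω) {t₀ t₁ : ℝ} (h01 : t₀ ≤ t₁) {u v : ℝ → ℝ}
    (hu_c : ContinuousOn u (Icc t₀ t₁)) (hv_c : ContinuousOn v (Icc t₀ t₁))
    (hu' : ∀ t ∈ Ico t₀ t₁, HasDerivWithinAt u (F t (u t) ω) (Ici t) t)
    (hv' : ∀ t ∈ Ico t₀ t₁, HasDerivWithinAt v (F t (v t) ω) (Ici t) t)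
    (h0 : u t₀ ≤ v t₀) : ∀ t ∈ Icc t₀ t₁, u t ≤ v t := by
  obtain ⟨α, hα, hA⟩ := alow hh ω t₀ t₁
  intro t₂ ht₂
  by_contra hbad
  push_neg at hbad
  have hsub : Icc t₀ t₂ ⊆ Icc t₀ t₁ := Icc_subset_Icc le_rfl ht₂.2
  have hc2 : ContinuousOn (fun t => u t - v t) (Icc t₀ t₂) :=
    (hu_c.mono hsub).sub (hv_c.mono hsub)
  obtain ⟨t₃, ht₃, heq3⟩ := intermediate_value_Icc ht₂.1 hc2
    (⟨by linarith, by linarith⟩ : (0:ℝ) ∈ Icc (u t₀ - v t₀) (u t₂ - v t₂))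
  have hclamp : ∀ t, t₀ ≤ t → t ≤ t₁ → max t₀ (min t t₁) = t := by
    intro t h1 h2
    rw [min_eq_left h2, max_eq_right h1]
  have hlipw : ∀ t, LipschitzOnWith (Real.toNNReal (K/α))
      (fun p => F (max t₀ (min t t₁)) p ω) univ := by
    intro t
    apply LipschitzOnWith.of_dist_le_mul
    intro p _ q _
    rw [Real.dist_eq, Real.dist_eq, Real.coe_toNNReal _ (div_nonneg hh.hK.le hα.le)]
    have hmem : max t₀ (min t t₁) ∈ Icc t₀ t₁ :=
      ⟨le_max_left _ _, max_le h01 (min_le_right _ _)⟩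
    calc |F (max t₀ (min t t₁)) p ω - F (max t₀ (min t t₁)) q ω|
        ≤ K / A (max t₀ (min t t₁)) ω * |p - q| := hh.hFlip ω _ p q
      _ ≤ K / α * |p - q| := mul_le_mul_of_nonneg_right
          (div_le_div_of_nonneg_left hh.hK.le hα (hA _ hmem)) (abs_nonneg _)
  have hsub2 : Icc t₃ t₂ ⊆ Icc t₀ t₁ := Icc_subset_Icc ht₃.1 ht₂.2
  have huniq := ODE_solution_unique_of_mem_Icc_right
    (v := fun t p => F (max t₀ (min t t₁)) p ω) (s := fun _ => univ) (fun t _ => hlipw t)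
    (f := u) (g := v) (a := t₃) (b := t₂)
    (hu_c.mono hsub2)
    (fun t ht => by
      have h2 := hu' t ⟨ht₃.1.trans ht.1, lt_of_lt_of_le ht.2 ht₂.2⟩
      simpa [hclamp t (ht₃.1.trans ht.1) (ht.2.le.trans ht₂.2)] using h2)
    (fun t _ => mem_univ _)
    (hv_c.mono hsub2)
    (fun t ht => by
      have h2 := hv' t ⟨ht₃.1.trans ht.1, lt_of_lt_of_le ht.2 ht₂.2⟩
      simpa [hclamp t (ht₃.1.trans ht.1) (ht.2.le.trans ht₂.2)] using h2)
    (fun t _ => mem_univ _)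
    (by simp only at heq3; linarith : u t₃ = v t₃)
  have := huniq (⟨ht₃.2, le_rfl⟩ : t₂ ∈ Icc t₃ t₂)
  linarith

lemma shift_cont (ω : Ω) (s : ℝ) {Y : ℝ} (hY : s ≤ Y) :
    ContinuousOn (fun z => rawLim F c (z - s) (τ s ω)) (Icc s Y) := by
  apply (rawLim_cont hh (τ s ω) (by linarith : (0:ℝ) ≤ Y - s)).comp
    (continuous_id.sub continuous_const).continuousOn
  intro z hz
  simp only [id_eq, mem_Icc, Pi.sub_apply]
  exact ⟨by linarith [hz.1], by linarith [hz.2]⟩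

lemma shift_deriv (ω : Ω) (s : ℝ) {z : ℝ} (hz : s ≤ z) :
    HasDerivWithinAt (fun y => rawLim F c (y - s) (τ s ω))
      (F z (rawLim F c (z - s) (τ s ω)) ω) (Ici z) z := by
  have h1 := rawLim_hasDerivWithinAt hh (τ s ω) (x := z - s) (by linarith)
  have hcomp := h1.comp z ((hasDerivWithinAt_id z (Ici z)).sub_const s)
    (fun y hy => by simp only [mem_Ici, id_eq] at *; linarith)
  have hstat : F (z - s) (rawLim F c (z - s) (τ s ω)) (τ s ω) =
      F z (rawLim F c (z - s) (τ s ω)) ω := by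
    rw [hh.hFstat, sub_add_cancel]
  simpa [Function.comp_def, hstat] using hcomp

lemma mono_s (ω : Ω) {s s' y : ℝ} (hss : s ≤ s') (hsy : s' ≤ y) :
    rawLim F c (y - s') (τ s' ω) ≤ rawLim F c (y - s) (τ s ω) := by
  have h := compare hh ω hsy
    (u := fun z => rawLim F c (z - s') (τ s' ω)) (v := fun z => rawLim F c (z - s) (τ s ω))
    (shift_cont hh ω s' hsy)
    ((shift_cont hh ω s (hss.trans hsy)).mono (Icc_subset_Icc hss le_rfl))
    (fun t ht => shift_deriv hh ω s' ht.1)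
    (fun t ht => shift_deriv hh ω s (hss.trans ht.1))
    (by
      show rawLim F c (s' - s') (τ s' ω) ≤ rawLim F c (s' - s) (τ s ω)
      rw [sub_self, rawLim_zero hh]
      exact (rawLim_mem hh (τ s ω) (by linarith : (0:ℝ) ≤ s' - s)).1)
  exact h y ⟨hsy, le_rfl⟩

omit hh in
lemma statFun_def (x : ℝ) (ω : Ω) :
    statFun τ F c x ω = ⨆ n : ℕ, rawLim F c n (τ (x - n) ω) := rfl

lemma statFun_term_mem (ω : Ω) (x : ℝ) (n : ℕ) :
    rawLim F c n (τ (x - n) ω) ∈ Icc c R :=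
  rawLim_mem hh (τ (x - n) ω) n.cast_nonneg

lemma statFun_bddAbove (ω : Ω) (x : ℝ) :
    BddAbove (range fun n : ℕ => rawLim F c n (τ (x - n) ω)) :=
  ⟨R, forall_mem_range.2 fun n => (statFun_term_mem hh ω x n).2⟩

lemma statFun_mem (ω : Ω) (x : ℝ) : statFun τ F c x ω ∈ Icc c R := by
  rw [statFun_def]
  constructor
  · refine le_trans ?_ (le_ciSup (statFun_bddAbove hh ω x) 0)
    exact (statFun_term_mem hh ω x 0).1
  · exact ciSup_le fun n => (statFun_term_mem hh ω x n).2

lemma statFun_mono_term (ω : Ω) (x : ℝ) :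
    Monotone fun n : ℕ => rawLim F c n (τ (x - n) ω) := by
  intro n m hnm
  have h1 : x - (m:ℝ) ≤ x - n := by
    have : (n:ℝ) ≤ m := Nat.cast_le.2 hnm
    linarith
  have h2 : x - (n:ℝ) ≤ x := by
    have : (0:ℝ) ≤ n := n.cast_nonneg
    linarith
  have := mono_s hh ω h1 h2
  simpa [sub_sub_cancel] using this

lemma statFun_tendsto_term (ω : Ω) (x : ℝ) :
    Tendsto (fun n : ℕ => rawLim F c n (τ (x - n) ω)) atTop (𝓝 (statFun τ F c x ω)) :=
  tendsto_atTop_ciSup (statFun_mono_term hh ω x) (statFun_bddAbove hh ω x)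

lemma rawLim_meas_omega {x : ℝ} (hx : 0 ≤ x) : Measurable fun ω : Ω => rawLim F c x ω :=
  measurable_of_tendsto_metrizable (fun k => picard_meas_omega hh x k)
    (tendsto_pi_nhds.2 fun ω => picard_tendsto_rawLim hh ω hx)

lemma statFun_measurable : Measurable fun q : ℝ × Ω => statFun τ F c q.1 q.2 := by
  apply measurable_of_tendsto_metrizable
    (f := fun n (q : ℝ × Ω) => rawLim F c n (τ (q.1 - n) q.2))
  · intro n
    exact (rawLim_meas_omega hh n.cast_nonneg).comp
      (hh.hτm.comp ((measurable_fst.sub measurable_const).prodMk measurable_snd))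
  · rw [tendsto_pi_nhds]
    intro q
    exact statFun_tendsto_term hh q.2 q.1

lemma statFun_stat (x : ℝ) (ω : Ω) : statFun τ F c x ω = statFun τ F c 0 (τ x ω) := by
  rw [statFun_def, statFun_def]
  congr 1
  funext n
  rw [show x - (n:ℝ) = -(n:ℝ) + x by ring, hh.hτadd, zero_sub]

lemma statFun_tendsto_W (ω : Ω) (y : ℝ) {s : ℕ → ℝ} (hs : Tendsto s atTop atBot) :
    Tendsto (fun n => rawLim F c (y - s n) (τ (s n) ω)) atTop (𝓝 (statFun τ F c y ω)) := by
  have hbdd := statFun_bddAbove hh ω y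
  rw [tendsto_order]
  constructor
  · intro b hb
    rw [statFun_def] at hb
    obtain ⟨m, hm⟩ := exists_lt_of_lt_ciSup hb
    filter_upwards [hs.eventually_le_atBot (y - m)] with n hn
    have hym : y - (m:ℝ) ≤ y := by
      have : (0:ℝ) ≤ m := m.cast_nonneg
      linarith
    have := mono_s hh ω hn hym
    rw [sub_sub_cancel] at this
    exact lt_of_lt_of_le hm this
  · intro b hb
    filter_upwards [hs.eventually_le_atBot y] with n hn
    have h1 : y - ((⌈y - s n⌉₊ : ℕ):ℝ) ≤ s n := by
      have := Nat.le_ceil (y - s n)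
      linarith
    have h2 := mono_s hh ω h1 hn
    rw [sub_sub_cancel] at h2
    have h3 : rawLim F c (⌈y - s n⌉₊ : ℕ) (τ (y - (⌈y - s n⌉₊ : ℕ)) ω) ≤ statFun τ F c y ω := by
      rw [statFun_def]
      exact le_ciSup hbdd ⌈y - s n⌉₊
    exact lt_of_le_of_lt (h2.trans h3) hb

lemma statFun_meas_t (ω : Ω) : Measurable fun t => statFun τ F c t ω := by
  have h := statFun_measurable hh
  have h2 : (fun t : ℝ => statFun τ F c t ω)
      = (fun q : ℝ × Ω => statFun τ F c q.1 q.2) ∘ (fun t : ℝ => (t, ω)) := rfl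
  rw [h2]
  exact h.comp (measurable_id.prodMk measurable_const)

lemma statG_integrable (ω : Ω) (x y : ℝ) :
    IntervalIntegrable (fun t => F t (statFun τ F c t ω) ω) volume x y := by
  have hmeas : Measurable fun t => F t (statFun τ F c t ω) ω :=
    hh.hFm.comp (measurable_id.prodMk ((statFun_meas_t hh ω).prodMk measurable_const))
  exact (bound_integrable hh ω C x y).mono_fun' hmeas.aestronglyMeasurable
    (Filter.Eventually.of_forall fun t => by simpa [Real.norm_eq_abs] using hh.hFbdd ω t _)

lemma statFun_inteq (ω : Ω) {y₀ y : ℝ} (h : y₀ ≤ y) :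
    statFun τ F c y ω = statFun τ F c y₀ ω + ∫ t in y₀..y, F t (statFun τ F c t ω) ω := by
  set N : ℕ := ⌈-y₀⌉₊ with hN
  set sfun : ℕ → ℝ := fun n => -((n:ℝ) + N) with hsfun
  have hNy : ∀ n : ℕ, sfun n ≤ y₀ := by
    intro n
    have h1 : -y₀ ≤ (N:ℝ) := Nat.le_ceil (-y₀)
    have h2 : (0:ℝ) ≤ n := n.cast_nonneg
    simp only [hsfun]
    linarith
  have hstend : Tendsto sfun atTop atBot := by
    rw [hsfun]
    have h1 : Tendsto (fun n : ℕ => (n:ℝ) + N) atTop atTop :=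
      tendsto_atTop_add_const_right atTop (N:ℝ) tendsto_natCast_atTop_atTop
    exact tendsto_neg_atBot_iff.2 h1
  set v : ℕ → ℝ → ℝ := fun n z => rawLim F c (z - sfun n) (τ (sfun n) ω) with hv
  have hvt : ∀ z, Tendsto (fun n => v n z) atTop (𝓝 (statFun τ F c z ω)) :=
    fun z => statFun_tendsto_W hh ω z hstend
  have hvint : ∀ n, ∀ z ∈ Icc y₀ y, v n z = v n y₀ + ∫ t in y₀..z, F t (v n t) ω := by
    intro n z hz
    have hs0 : sfun n ≤ y₀ := hNy n
    have h1 : (0:ℝ) ≤ y₀ - sfun n := by linarith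
    have h2 : (0:ℝ) ≤ z - sfun n := by linarith [hz.1]
    have hsub := rawLim_sub hh (τ (sfun n) ω) h1 h2
    have hcv := intervalIntegral.integral_comp_sub_right (a := y₀) (b := z)
      (fun t => F t (rawLim F c t (τ (sfun n) ω)) (τ (sfun n) ω)) (sfun n)
    rw [← hcv] at hsub
    have hkey : ∀ t : ℝ, F (t - sfun n) (rawLim F c (t - sfun n) (τ (sfun n) ω)) (τ (sfun n) ω)
        = F t (v n t) ω := by
      intro t
      rw [hh.hFstat, sub_add_cancel]
    simp only [hkey] at hsub
    simp only [hv]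
    linarith [hsub]
  have hvcont : ∀ n, ContinuousOn (fun t => F t (v n t) ω) (Icc y₀ y) := by
    intro n
    have h1 : ContinuousOn (v n) (Icc y₀ y) := by
      have := shift_cont hh ω (sfun n) ((hNy n).trans h)
      exact this.mono (Icc_subset_Icc (hNy n) le_rfl)
    exact (hh.hFcont ω).comp_continuousOn (continuousOn_id.prodMk h1)
  have hDCT := intervalIntegral.tendsto_integral_filter_of_dominated_convergence
    (μ := volume) (a := y₀) (b := y) (F := fun n t => F t (v n t) ω)
    (f := fun t => F t (statFun τ F c t ω) ω) (bound := fun t => C / A t ω) (l := atTop)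
    (Filter.Eventually.of_forall fun n =>
      ((hvcont n).aestronglyMeasurable measurableSet_Icc).mono_measure
        (Measure.restrict_mono (by rw [uIoc_of_le h]; exact Ioc_subset_Icc_self) le_rfl))
    (Filter.Eventually.of_forall fun n => Filter.Eventually.of_forall fun t _ => by
      simpa [Real.norm_eq_abs] using hh.hFbdd ω t (v n t))
    (bound_integrable hh ω C y₀ y)
    (Filter.Eventually.of_forall fun t _ => by
      have hcont : Continuous fun p : ℝ => F t p ω :=
        (hh.hFcont ω).comp (continuous_const.prodMk continuous_id)
      exact (hcont.tendsto _).comp (hvt t))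
  have hL : Tendsto (fun n => v n y₀ + ∫ t in y₀..y, F t (v n t) ω) atTop
      (𝓝 (statFun τ F c y₀ ω + ∫ t in y₀..y, F t (statFun τ F c t ω) ω)) :=
    (hvt y₀).add hDCT
  have hfe : (fun n => v n y) = fun n => v n y₀ + ∫ t in y₀..y, F t (v n t) ω :=
    funext fun n => hvint n y ⟨h, le_rfl⟩
  exact tendsto_nhds_unique (hfe ▸ hvt y) hL

lemma statFun_contOn (ω : Ω) {y₀ y₁ : ℝ} (h : y₀ ≤ y₁) :
    ContinuousOn (fun t => statFun τ F c t ω) (Icc y₀ y₁) := by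
  obtain ⟨α, hα, hA⟩ := alow hh ω y₀ y₁
  apply LipschitzOnWith.continuousOn (K := Real.toNNReal (C/α))
  apply LipschitzOnWith.of_dist_le_mul
  intro z hz w hw
  rw [Real.dist_eq, Real.dist_eq, Real.coe_toNNReal _ (div_nonneg hh.hC.le hα.le)]
  have hsub : statFun τ F c z ω - statFun τ F c w ω
      = ∫ t in w..z, F t (statFun τ F c t ω) ω := by
    rcases le_total w z with hwz | hwz
    · rw [statFun_inteq hh ω hwz]
      ring
    · rw [statFun_inteq hh ω hwz, intervalIntegral.integral_symm]
      ring
  rw [hsub]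
  have hbound : ∀ t ∈ Ι w z, ‖F t (statFun τ F c t ω) ω‖ ≤ C / α := by
    intro t ht
    have ht1 : t ∈ Icc y₀ y₁ :=
      ⟨(le_min hw.1 hz.1).trans ht.1.le, ht.2.trans (max_le hw.2 hz.2)⟩
    calc ‖F t (statFun τ F c t ω) ω‖ ≤ C / A t ω := by
          simpa [Real.norm_eq_abs] using hh.hFbdd ω t _
      _ ≤ C / α := div_le_div_of_nonneg_left hh.hC.le hα (hA t ht1)
  simpa [Real.norm_eq_abs] using intervalIntegral.norm_integral_le_of_norm_le_const hbound

lemma statFun_hasDerivAt (ω : Ω) (x : ℝ) :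
    HasDerivAt (fun t => statFun τ F c t ω) (F x (statFun τ F c x ω) ω) x := by
  have hca : ContinuousAt (fun t => statFun τ F c t ω) x :=
    (statFun_contOn hh ω (by linarith : x - 1 ≤ x + 1)).continuousAt
      (Icc_mem_nhds (by linarith) (by linarith))
  have hGca : ContinuousAt (fun t => F t (statFun τ F c t ω) ω) x :=
    (hh.hFcont ω).continuousAt.comp (continuousAt_id.prodMk hca)
  have hGmeas : Measurable fun t => F t (statFun τ F c t ω) ω :=
    hh.hFm.comp (measurable_id.prodMk ((statFun_meas_t hh ω).prodMk measurable_const))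
  have hprim : HasDerivAt (fun u => ∫ t in (x-1)..u, F t (statFun τ F c t ω) ω)
      (F x (statFun τ F c x ω) ω) x :=
    intervalIntegral.integral_hasDerivAt_right (statG_integrable hh ω (x-1) x)
      ⟨univ, univ_mem, hGmeas.aestronglyMeasurable⟩ hGca
  have heq : (fun t => statFun τ F c t ω) =ᶠ[𝓝 x]
      (fun u => statFun τ F c (x-1) ω + ∫ t in (x-1)..u, F t (statFun τ F c t ω) ω) :=
    Filter.eventuallyEq_of_mem (Ioo_mem_nhds (by linarith : x - 1 < x) (lt_add_one x))
      (fun z hz => statFun_inteq hh ω (le_of_lt hz.1))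
  exact (hprim.const_add _).congr_of_eventuallyEq heq

theorem core_exists : ∃ f : ℝ → Ω → ℝ,
    Measurable (fun q : ℝ × Ω => f q.1 q.2) ∧
    (∀ x ω, f x ω = f 0 (τ x ω)) ∧
    (∀ x ω, f x ω ∈ Icc c R) ∧
    (∀ ω x, HasDerivAt (fun y => f y ω) (F x (f x ω) ω) x) :=
  ⟨statFun τ F c, statFun_measurable hh, statFun_stat hh, fun x ω => statFun_mem hh ω x,
    fun ω x => statFun_hasDerivAt hh ω x⟩

end Basic

end HJCore

structure HJSetting {Ω : Type} [MeasurableSpace Ω] (P : Measure Ω) (τ : ℝ → Ω → Ω)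
    (a : ℝ → Ω → ℝ) (H : ℝ → ℝ → Ω → ℝ) (G_L G_U : ℝ → ℝ) : Prop where
  prob : IsProbabilityMeasure P
  meas_tau : Measurable fun q : ℝ × Ω => τ q.1 q.2
  mp_tau : ∀ x, MeasurePreserving (τ x) P P
  tau_zero : ∀ ω, τ 0 ω = ω
  tau_add : ∀ x y ω, τ (x + y) ω = τ x (τ y ω)
  ergodic : ∀ A : Set Ω, MeasurableSet A → (∀ x, τ x ⁻¹' A = A) → P A = 0 ∨ P A = 1
  meas_a : Measurable fun q : ℝ × Ω => a q.1 q.2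
  a_pos : ∀ x ω, 0 < a x ω
  a_le_one : ∀ x ω, a x ω ≤ 1
  a_stat : ∀ x ω, a x ω = a 0 (τ x ω)
  a_sqrt_lip : ∃ κ > (0:ℝ), ∀ x ω, |Real.sqrt (a x ω) - Real.sqrt (a 0 ω)| ≤ κ * |x|
  meas_H : Measurable fun q : ℝ × ℝ × Ω => H q.1 q.2.1 q.2.2
  H_stat : ∀ p x ω, H p x ω = H p 0 (τ x ω)
  GL_cont : Continuous G_L
  GU_cont : Continuous G_U
  GL_even : ∀ p, G_L (-p) = G_L p
  GU_even : ∀ p, G_U (-p) = G_U p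
  GL_mono : MonotoneOn G_L (Ici 0)
  GU_mono : MonotoneOn G_U (Ici 0)
  GL_coercive : Tendsto G_L atTop atTop
  GU_coercive : Tendsto G_U atTop atTop
  H_lower : ∀ p ω, G_L p ≤ H p 0 ω
  H_upper : ∀ p ω, H p 0 ω ≤ G_U p
  H_lip : ∀ R > (0:ℝ), ∃ K > (0:ℝ), ∀ p q ω, |p| ≤ R → |q| ≤ R →
      |H p 0 ω - H q 0 ω| ≤ K * |p - q|
  H_mod : ∀ R > (0:ℝ), ∃ m : ℝ → ℝ, (∀ r, 0 ≤ m r) ∧ MonotoneOn m (Ici 0) ∧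
      Tendsto m (nhdsWithin 0 (Ioi 0)) (nhds 0) ∧
      ∀ p x ω, |p| ≤ R → |H p x ω - H p 0 ω| ≤ m |x|

/-- `f` is a stationary solution of `a(x,ω) f' + H(f,x,ω) = lam`. -/
def StatSol {Ω : Type} [MeasurableSpace Ω] (P : Measure Ω) (τ : ℝ → Ω → Ω)
    (a : ℝ → Ω → ℝ) (H : ℝ → ℝ → Ω → ℝ) (lam : ℝ) (f : ℝ → Ω → ℝ) : Prop :=
  (Measurable fun q : ℝ × Ω => f q.1 q.2) ∧
  (∀ x ω, f x ω = f 0 (τ x ω)) ∧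
  (∀ ω, ContDiff ℝ 1 fun x => f x ω) ∧
  (∀ᵐ ω ∂P, (∃ M, ∀ x, |f x ω| ≤ M) ∧
    ∀ x, a x ω * deriv (fun y => f y ω) x + H (f x ω) x ω = lam)

/-- The set `E` of expectations `𝔼[f(0,·)]` over all stationary solutions `f`. -/
def Eset {Ω : Type} [MeasurableSpace Ω] (P : Measure Ω) (τ : ℝ → Ω → Ω)
    (a : ℝ → Ω → ℝ) (H : ℝ → ℝ → Ω → ℝ) : Set ℝ :=
  {θ | ∃ lam f, StatSol P τ a H lam f ∧ (∫ ω, f 0 ω ∂P) = θ}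


open HJCore in
theorem exists_statSol_ge {Ω : Type} [MeasurableSpace Ω] {P : Measure Ω} {τ : ℝ → Ω → Ω}
    {a : ℝ → Ω → ℝ} {H : ℝ → ℝ → Ω → ℝ} {G_L G_U : ℝ → ℝ}
    (hset : HJSetting P τ a H G_L G_U) {c : ℝ} (hc : 0 ≤ c) :
    ∃ (lam R : ℝ) (f : ℝ → Ω → ℝ), StatSol P τ a H lam f ∧ ∀ x ω, f x ω ∈ Icc c R := by
  classical
  set lam := G_U c + 1 with hlam
  have hcoer := hset.GL_coercive.eventually_ge_atTop (lam + 1)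
  rw [eventually_atTop] at hcoer
  obtain ⟨R₀, hR₀⟩ := hcoer
  set R := max R₀ (max c 1) with hRdef
  have hRc : c ≤ R := le_max_of_le_right (le_max_left _ _)
  have hR1 : (1:ℝ) ≤ R := le_max_of_le_right (le_max_right _ _)
  have hRpos : (0:ℝ) < R := lt_of_lt_of_le one_pos hR1
  have hGLR : lam + 1 ≤ G_L R := hR₀ R (le_max_left _ _)
  obtain ⟨K, hK, hHlip⟩ := hset.H_lip R hRpos
  obtain ⟨BL, hBL⟩ := (isCompact_Icc (a := -R) (b := R)).exists_bound_of_continuousOn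
    hset.GL_cont.continuousOn
  obtain ⟨BU, hBU⟩ := (isCompact_Icc (a := -R) (b := R)).exists_bound_of_continuousOn
    hset.GU_cont.continuousOn
  set B := max BL BU with hBdef
  have hHbd : ∀ (p t : ℝ) (ω : Ω), |p| ≤ R → |H p t ω| ≤ B := by
    intro p t ω hp
    rw [hset.H_stat p t ω]
    have hpmem : p ∈ Icc (-R) R := abs_le.1 hp
    have h1 := hset.H_lower p (τ t ω)
    have h2 := hset.H_upper p (τ t ω)
    have h3 : |G_L p| ≤ BL := by simpa [Real.norm_eq_abs] using hBL p hpmem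
    have h4 : |G_U p| ≤ BU := by simpa [Real.norm_eq_abs] using hBU p hpmem
    rw [abs_le] at h3 h4 ⊢
    constructor
    · calc -B ≤ -BL := neg_le_neg (le_max_left _ _)
        _ ≤ G_L p := h3.1
        _ ≤ _ := h1
    · calc H p 0 (τ t ω) ≤ G_U p := h2
        _ ≤ BU := h4.2
        _ ≤ B := le_max_right _ _
  have hB0 : (0:ℝ) ≤ B := by
    have h4 : |G_U 0| ≤ BU := by
      simpa [Real.norm_eq_abs] using hBU 0 ⟨by linarith, by linarith⟩
    exact le_trans (abs_nonneg _) (h4.trans (le_max_right _ _))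
  set C := |lam| + B + 1 with hCdef
  have hCpos : 0 < C := by
    have := abs_nonneg lam
    rw [hCdef]
    linarith
  -- the clamping function
  set pr : ℝ → ℝ := fun p => max c (min p R) with hprdef
  have hpr_mem : ∀ p, pr p ∈ Icc c R := fun p =>
    ⟨le_max_left _ _, max_le hRc (min_le_right _ _)⟩
  have hpr_abs : ∀ p, |pr p| ≤ R := fun p => abs_le.2
    ⟨le_trans (by linarith : -R ≤ c) (hpr_mem p).1, (hpr_mem p).2⟩
  have hpr_lip : ∀ p q, |pr p - pr q| ≤ |p - q| := by
    intro p q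
    calc |pr p - pr q| ≤ max |c - c| |min p R - min q R| := abs_max_sub_max_le_max _ _ _ _
      _ = |min p R - min q R| := by simp
      _ ≤ max |p - q| |R - R| := abs_min_sub_min_le_max _ _ _ _
      _ = |p - q| := by simp
  have hpr_id : ∀ p, c ≤ p → p ≤ R → pr p = p := by
    intro p h1 h2
    show max c (min p R) = p
    rw [min_eq_left h2, max_eq_right h1]
  -- stationarity helpers
  have hHshift : ∀ (p t s : ℝ) (ω : Ω), H p t (τ s ω) = H p (t + s) ω := by
    intro p t s ω
    rw [hset.H_stat p t (τ s ω), hset.H_stat p (t+s) ω, ← hset.tau_add t s ω]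
  have hashift : ∀ (t s : ℝ) (ω : Ω), a t (τ s ω) = a (t + s) ω := by
    intro t s ω
    rw [hset.a_stat t (τ s ω), hset.a_stat (t+s) ω, ← hset.tau_add t s ω]
  -- continuity of a in t
  obtain ⟨κ, hκ, hlipa⟩ := hset.a_sqrt_lip
  have hacont : ∀ ω, Continuous fun t => a t ω := by
    intro ω
    have hlip2 : ∀ t t' : ℝ, |Real.sqrt (a t' ω) - Real.sqrt (a t ω)| ≤ κ * |t' - t| := by
      intro t t'
      have e1 : a t' ω = a (t' - t) (τ t ω) := by
        rw [hset.a_stat t' ω, hset.a_stat (t' - t) (τ t ω), ← hset.tau_add (t' - t) t ω,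
          sub_add_cancel]
      have e2 : a t ω = a 0 (τ t ω) := hset.a_stat t ω
      rw [e1, e2]
      exact hlipa (t' - t) (τ t ω)
    have hsq : Continuous fun t => Real.sqrt (a t ω) := by
      apply (LipschitzWith.of_dist_le_mul (K := Real.toNNReal κ) ?_).continuous
      intro t t'
      rw [Real.dist_eq, Real.dist_eq, Real.coe_toNNReal _ hκ.le]
      exact hlip2 t' t
    have heq : (fun t => a t ω) = fun t => (Real.sqrt (a t ω))^2 :=
      funext fun t => (Real.sq_sqrt (hset.a_pos t ω).le).symm
    rw [heq]
    exact hsq.pow 2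
  -- the vector field
  set F : ℝ → ℝ → Ω → ℝ := fun t p ω => (lam - H (pr p) t ω) / a t ω with hFdef
  -- Lipschitz-in-p bound for H ∘ pr
  have hHlip2 : ∀ (t p q : ℝ) (ω : Ω), |H (pr q) t ω - H (pr p) t ω| ≤ K * |p - q| := by
    intro t p q ω
    rw [hset.H_stat (pr q) t ω, hset.H_stat (pr p) t ω]
    calc |H (pr q) 0 (τ t ω) - H (pr p) 0 (τ t ω)| ≤ K * |pr q - pr p| :=
          hHlip (pr q) (pr p) (τ t ω) (hpr_abs q) (hpr_abs p)
      _ ≤ K * |p - q| := by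
          have := hpr_lip q p
          rw [abs_sub_comm p q]
          exact mul_le_mul_of_nonneg_left this hK.le
  -- joint continuity of H ∘ pr
  obtain ⟨m, hm0, hmmono, hmtend, hmbd⟩ := hset.H_mod R hRpos
  have hHcont : ∀ ω, Continuous fun q : ℝ × ℝ => H (pr q.2) q.1 ω := by
    intro ω
    rw [Metric.continuous_iff]
    rintro ⟨t₀, p₀⟩ ε hε
    obtain ⟨δ₁, hδ₁, hδ₁p⟩ := Metric.tendsto_nhdsWithin_nhds.1 hmtend (ε/4) (by positivity : (0:ℝ) < ε/4)
    refine ⟨min δ₁ (ε / (4 * (K+1))), lt_min hδ₁ (by positivity), ?_⟩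
    rintro ⟨t, p⟩ hq
    rw [Prod.dist_eq] at hq
    simp only at hq
    have hdt : dist t t₀ < δ₁ :=
      lt_of_le_of_lt (le_max_left _ _) (lt_of_lt_of_le hq (min_le_left _ _))
    have hdp : dist p p₀ < ε / (4 * (K+1)) :=
      lt_of_le_of_lt (le_max_right _ _) (lt_of_lt_of_le hq (min_le_right _ _))
    have e1 : |H (pr p) t ω - H (pr p₀) t ω| ≤ K * |p₀ - p| := hHlip2 t p₀ p ω
    have e1' : |H (pr p) t ω - H (pr p₀) t ω| ≤ ε/4 := by
      have h5 : K * |p₀ - p| ≤ K * (ε / (4 * (K+1))) := by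
        apply mul_le_mul_of_nonneg_left _ hK.le
        rw [abs_sub_comm]
        exact le_of_lt (by rwa [Real.dist_eq] at hdp)
      have h6 : K * (ε / (4 * (K+1))) ≤ ε/4 := by
        have hK1 : (0:ℝ) < K + 1 := by linarith
        have heq2 : K * (ε / (4*(K+1))) = (K/(K+1)) * (ε/4) := by
          field_simp
        rw [heq2]
        exact mul_le_of_le_one_left (by positivity) ((div_le_one hK1).2 (by linarith))
      linarith [e1]
    have e2 : |H (pr p₀) t ω - H (pr p₀) t₀ ω| ≤ ε/4 := by
      rcases eq_or_ne t t₀ with rfl | hne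
      · simp
        linarith
      · have h3 : H (pr p₀) t ω = H (pr p₀) (t - t₀) (τ t₀ ω) := by
          rw [hHshift, sub_add_cancel]
        have h4 : H (pr p₀) t₀ ω = H (pr p₀) 0 (τ t₀ ω) := hset.H_stat _ _ _
        rw [h3, h4]
        have h5 := hmbd (pr p₀) (t - t₀) (τ t₀ ω) (hpr_abs p₀)
        have h6 : m |t - t₀| < ε/4 := by
          have hmem2 : |t - t₀| ∈ Ioi (0:ℝ) := abs_pos.2 (sub_ne_zero.2 hne)
          have hd2 : dist |t - t₀| 0 < δ₁ := by
            rw [Real.dist_eq, sub_zero, abs_abs]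
            rwa [Real.dist_eq] at hdt
          have h7 := hδ₁p hmem2 hd2
          rw [Real.dist_eq, sub_zero, abs_of_nonneg (hm0 _)] at h7
          exact h7
        linarith
    rw [Real.dist_eq]
    calc |H (pr p) t ω - H (pr p₀) t₀ ω|
        ≤ |H (pr p) t ω - H (pr p₀) t ω| + |H (pr p₀) t ω - H (pr p₀) t₀ ω| :=
          abs_sub_le _ _ _
      _ ≤ ε/4 + ε/4 := add_le_add e1' e2
      _ < ε := by linarith
  -- assemble the Core hypotheses
  have hh : CoreHyp τ a F c R C K := by
    refine ⟨hset.meas_tau, hset.tau_zero, hset.tau_add, hacont, hset.a_pos,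
      ?_, ?_, ?_, ?_, ?_, ?_, ?_, hRc, hK, hCpos⟩
    · -- measurability of F
      have hprm : Measurable pr := measurable_const.max (measurable_id.min measurable_const)
      simp only [hFdef]
      apply Measurable.div
      · exact measurable_const.sub (hset.meas_H.comp ((hprm.comp measurable_snd.fst).prodMk
          (measurable_fst.prodMk measurable_snd.snd)))
      · exact hset.meas_a.comp (measurable_fst.prodMk measurable_snd.snd)
    · -- stationarity of F
      intro t s p ω
      simp only [hFdef]
      rw [hHshift, hashift]
    · -- Lipschitz in p
      intro ω t p q
      have hnum := hHlip2 t p q ω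
      have ha := hset.a_pos t ω
      have heq : F t p ω - F t q ω = (H (pr q) t ω - H (pr p) t ω) / a t ω := by
        simp only [hFdef]
        rw [div_sub_div_same]
        ring_nf
      rw [heq, abs_div, abs_of_pos ha]
      calc |H (pr q) t ω - H (pr p) t ω| / a t ω ≤ K * |p - q| / a t ω :=
            (div_le_div_iff_of_pos_right ha).2 hnum
        _ = K / a t ω * |p - q| := by ring
    · -- bound on F
      intro ω t p
      have ha := hset.a_pos t ω
      simp only [hFdef]
      rw [abs_div, abs_of_pos ha]
      apply (div_le_div_iff_of_pos_right ha).2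
      calc |lam - H (pr p) t ω| ≤ |lam| + |H (pr p) t ω| := by
            rw [sub_eq_add_neg]
            exact (abs_add_le _ _).trans (by rw [abs_neg])
        _ ≤ |lam| + B := add_le_add le_rfl (hHbd _ _ _ (hpr_abs p))
        _ ≤ C := by rw [hCdef]; linarith
    · -- continuity of F in (t, p)
      intro ω
      simp only [hFdef]
      exact (continuous_const.sub (hHcont ω)).div ((hacont ω).comp continuous_fst)
        (fun q => (hset.a_pos q.1 ω).ne')
    · -- lower pushing
      intro ω t p hp
      have hpr2 : pr p = c := by
        show max c (min p R) = c
        rw [min_eq_left (hp.trans hRc), max_eq_left hp]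
      simp only [hFdef, hpr2]
      have h1 : H c t ω ≤ G_U c := by
        rw [hset.H_stat]
        exact hset.H_upper c (τ t ω)
      have h2 : a t ω ≤ lam - H c t ω := by
        have := hset.a_le_one t ω
        rw [hlam]
        linarith
      exact (one_le_div (hset.a_pos t ω)).2 h2
    · -- upper pushing
      intro ω t p hp
      have hpr2 : pr p = R := by
        show max c (min p R) = R
        rw [min_eq_right hp, max_eq_right hRc]
      simp only [hFdef, hpr2]
      have h1 : G_L R ≤ H R t ω := by
        rw [hset.H_stat]
        exact hset.H_lower R (τ t ω)
      rw [div_le_iff₀ (hset.a_pos t ω)]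
      have := hset.a_le_one t ω
      linarith
  obtain ⟨f, hmeas, hstat, hmem, hder⟩ := core_exists hh
  refine ⟨lam, R, f, ⟨hmeas, hstat, ?_, ?_⟩, hmem⟩
  · intro ω
    have hdiff : Differentiable ℝ fun x => f x ω := fun x => (hder ω x).differentiableAt
    rw [contDiff_one_iff_deriv]
    refine ⟨hdiff, ?_⟩
    have hderiv : deriv (fun y => f y ω) = fun x => F x (f x ω) ω :=
      funext fun x => (hder ω x).deriv
    rw [hderiv]
    have hfcont : Continuous fun x => f x ω := hdiff.continuous
    exact (hh.hFcont ω).comp (continuous_id.prodMk hfcont)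
  · apply ae_of_all
    intro ω
    constructor
    · exact ⟨R, fun x => abs_le.2 ⟨by linarith [(hmem x ω).1], (hmem x ω).2⟩⟩
    · intro x
      rw [(hder ω x).deriv]
      have hfx := hmem x ω
      have hpr2 : pr (f x ω) = f x ω := hpr_id _ hfx.1 hfx.2
      simp only [hFdef, hpr2]
      rw [mul_comm, div_mul_cancel₀ _ (hset.a_pos x ω).ne', sub_add_cancel]


theorem exists_mem_Eset_ge {Ω : Type} [MeasurableSpace Ω] {P : Measure Ω} {τ : ℝ → Ω → Ω}
    {a : ℝ → Ω → ℝ} {H : ℝ → ℝ → Ω → ℝ} {G_L G_U : ℝ → ℝ}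
    (hset : HJSetting P τ a H G_L G_U) {c : ℝ} (hc : 0 ≤ c) :
    ∃ θ ∈ Eset P τ a H, c ≤ θ := by
  obtain ⟨lam, R, f, hss, hmem⟩ := exists_statSol_ge hset hc
  have hprob := hset.prob
  have hmeas0 : Measurable fun ω => f 0 ω := by
    have h2 : (fun ω : Ω => f 0 ω) = (fun q : ℝ × Ω => f q.1 q.2) ∘ (fun ω => ((0:ℝ), ω)) := rfl
    rw [h2]
    exact hss.1.comp (measurable_const.prodMk measurable_id)
  have hint : Integrable (fun ω => f 0 ω) P := by
    apply Integrable.mono' (integrable_const R) hmeas0.aestronglyMeasurable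
    apply ae_of_all
    intro ω
    rw [Real.norm_eq_abs]
    have h1 := hmem 0 ω
    exact abs_le.2 ⟨by linarith [h1.1, h1.2], h1.2⟩
  refine ⟨∫ ω, f 0 ω ∂P, ⟨lam, f, hss, rfl⟩, ?_⟩
  have h1 : ∫ _ω, (c:ℝ) ∂P ≤ ∫ ω, f 0 ω ∂P :=
    integral_mono (integrable_const c) hint fun ω => (hmem 0 ω).1
  rwa [integral_const, probReal_univ, one_smul] at h1

theorem HJSetting.reflect {Ω : Type} [MeasurableSpace Ω] {P : Measure Ω} {τ : ℝ → Ω → Ω}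
    {a : ℝ → Ω → ℝ} {H : ℝ → ℝ → Ω → ℝ} {G_L G_U : ℝ → ℝ}
    (hset : HJSetting P τ a H G_L G_U) :
    HJSetting P (fun x ω => τ (-x) ω) (fun x ω => a (-x) ω)
      (fun p x ω => H (-p) (-x) ω) G_L G_U where
  prob := hset.prob
  meas_tau := hset.meas_tau.comp (measurable_fst.neg.prodMk measurable_snd)
  mp_tau := fun x => hset.mp_tau (-x)
  tau_zero := fun ω => by rw [neg_zero]; exact hset.tau_zero ω
  tau_add := fun x y ω => by rw [neg_add]; exact hset.tau_add (-x) (-y) ω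
  ergodic := fun A hA hinv => hset.ergodic A hA (fun x => by simpa using hinv (-x))
  meas_a := hset.meas_a.comp (measurable_fst.neg.prodMk measurable_snd)
  a_pos := fun x ω => hset.a_pos (-x) ω
  a_le_one := fun x ω => hset.a_le_one (-x) ω
  a_stat := fun x ω => by rw [neg_zero]; exact hset.a_stat (-x) ω
  a_sqrt_lip := by
    obtain ⟨κ, hκ, hl⟩ := hset.a_sqrt_lip
    refine ⟨κ, hκ, fun x ω => ?_⟩
    rw [neg_zero]
    simpa [abs_neg] using hl (-x) ω
  meas_H := hset.meas_H.comp
    (measurable_fst.neg.prodMk ((measurable_snd.fst.neg).prodMk measurable_snd.snd))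
  H_stat := fun p x ω => by rw [neg_zero]; exact hset.H_stat (-p) (-x) ω
  GL_cont := hset.GL_cont
  GU_cont := hset.GU_cont
  GL_even := hset.GL_even
  GU_even := hset.GU_even
  GL_mono := hset.GL_mono
  GU_mono := hset.GU_mono
  GL_coercive := hset.GL_coercive
  GU_coercive := hset.GU_coercive
  H_lower := fun p ω => by
    rw [neg_zero, ← hset.GL_even p]
    exact hset.H_lower (-p) ω
  H_upper := fun p ω => by
    rw [neg_zero, ← hset.GU_even p]
    exact hset.H_upper (-p) ω
  H_lip := fun R hR => by
    obtain ⟨K, hK, hl⟩ := hset.H_lip R hR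
    refine ⟨K, hK, fun p q ω hp hq => ?_⟩
    rw [neg_zero]
    have := hl (-p) (-q) ω (by rwa [abs_neg]) (by rwa [abs_neg])
    have he : -p - -q = -(p - q) := by ring
    rwa [he, abs_neg] at this
  H_mod := fun R hR => by
    obtain ⟨m, h0, hmono, htend, hbd⟩ := hset.H_mod R hR
    refine ⟨m, h0, hmono, htend, fun p x ω hp => ?_⟩
    rw [neg_zero]
    simpa [abs_neg] using hbd (-p) (-x) ω (by rwa [abs_neg])

theorem Eset_reflect {Ω : Type} [MeasurableSpace Ω] {P : Measure Ω} {τ : ℝ → Ω → Ω}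
    {a : ℝ → Ω → ℝ} {H : ℝ → ℝ → Ω → ℝ} {θ : ℝ}
    (hθ : θ ∈ Eset P (fun x ω => τ (-x) ω) (fun x ω => a (-x) ω)
      (fun p x ω => H (-p) (-x) ω)) :
    -θ ∈ Eset P τ a H := by
  obtain ⟨lam, f, ⟨hm, hst, hcd, hae⟩, hint⟩ := hθ
  refine ⟨lam, fun x ω => -f (-x) ω, ⟨?_, ?_, ?_, ?_⟩, ?_⟩
  · exact (hm.comp (measurable_fst.neg.prodMk measurable_snd)).neg
  · intro x ω
    show -f (-x) ω = -f (-0) (τ x ω)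
    rw [neg_zero]
    exact congrArg Neg.neg (by simpa [neg_neg] using hst (-x) ω)
  · intro ω
    have h1 := hcd ω
    have h2 : (fun x : ℝ => -f (-x) ω) = fun x : ℝ => -((fun y => f y ω) (-x)) := rfl
    rw [h2]
    exact (h1.comp (contDiff_id.neg)).neg
  · filter_upwards [hae] with ω hω
    obtain ⟨⟨M, hM⟩, hode⟩ := hω
    refine ⟨⟨M, fun x => by simpa [abs_neg] using hM (-x)⟩, ?_⟩
    intro x
    have hdiff := (hcd ω).differentiable one_ne_zero
    have hd : HasDerivAt (fun y => f y ω) (deriv (fun y => f y ω) (-x)) (-x) :=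
      (hdiff (-x)).hasDerivAt
    have hneg : HasDerivAt (fun y : ℝ => f (-y) ω) (-(deriv (fun y => f y ω) (-x))) x := by
      have := hd.comp x (hasDerivAt_neg x)
      simpa [Function.comp_def, mul_comm] using this
    have hg : HasDerivAt (fun y : ℝ => -f (-y) ω) (deriv (fun y => f y ω) (-x)) x := by
      have := hneg.neg
      rw [neg_neg] at this
      exact this
    rw [hg.deriv]
    simpa [neg_neg] using hode (-x)
  · show (∫ ω, -f (-(0:ℝ)) ω ∂P) = -θ
    rw [neg_zero, integral_neg, hint]

theorem Eset_nonempty_and_unbounded'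
    {Ω : Type} [MeasurableSpace Ω] (P : Measure Ω) (τ : ℝ → Ω → Ω)
    (a : ℝ → Ω → ℝ) (H : ℝ → ℝ → Ω → ℝ) (G_L G_U : ℝ → ℝ)
    (hset : HJSetting P τ a H G_L G_U) :
    (Eset P τ a H).Nonempty ∧ ¬ BddBelow (Eset P τ a H) ∧ ¬ BddAbove (Eset P τ a H) := by
  have h0 : ∀ c : ℝ, 0 ≤ c → ∃ θ ∈ Eset P τ a H, c ≤ θ := fun c hc => exists_mem_Eset_ge hset hc
  have hneg : ∀ c : ℝ, 0 ≤ c → ∃ θ ∈ Eset P τ a H, θ ≤ -c := by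
    intro c hc
    obtain ⟨θ, hθ, hcθ⟩ := exists_mem_Eset_ge hset.reflect hc
    exact ⟨-θ, Eset_reflect hθ, by linarith⟩
  refine ⟨?_, ?_, ?_⟩
  · obtain ⟨θ, hθ, _⟩ := h0 0 le_rfl
    exact ⟨θ, hθ⟩
  · rintro ⟨b, hb⟩
    obtain ⟨θ, hθ, hle⟩ := hneg (max (-b) 0 + 1)
      (by linarith [le_max_right (-b) (0:ℝ)])
    have h2 := hb hθ
    have h3 : -b ≤ max (-b) 0 := le_max_left _ _
    linarith
  · rintro ⟨b, hb⟩
    obtain ⟨θ, hθ, hle⟩ := h0 (max b 0 + 1) (by linarith [le_max_right b (0:ℝ)])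
    have h2 := hb hθ
    have h3 : b ≤ max b 0 := le_max_left _ _
    linarith

theorem Eset_nonempty_and_unbounded
    {Ω : Type} [MeasurableSpace Ω] (P : Measure Ω) (τ : ℝ → Ω → Ω)
    (a : ℝ → Ω → ℝ) (H : ℝ → ℝ → Ω → ℝ) (G_L G_U : ℝ → ℝ)
    (hset : HJSetting P τ a H G_L G_U)
 :
    (Eset P τ a H).Nonempty ∧ ¬ BddBelow (Eset P τ a H) ∧ ¬ BddAbove (Eset P τ a H) := by
  exact Eset_nonempty_and_unbounded' P τ a H G_L G_U hset
end

section
/- If λ₁, λ₂ ∈ ℝ, f₁ ∈ S_st^{λ₁}, f₂ ∈ S_st^{λ₂} and 𝔼[f₁(0,·)] = 𝔼[f₂(0,·)], then λ₁ = λ₂ and ℙ(f₁(x,ω) = f₂(x,ω) for all x ∈ ℝ) = 1. In particular, for every θ ∈ E there is a unique λ(θ) ∈ ℝ such that some f ∈ S_st^{λ(θ)} has 𝔼[f(0,·)] = θ, and this f is unique up to ℙ-null sets. -/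
open MeasureTheory Filter Set

/-- A continuity criterion from a Lipschitz-plus-modulus bound. -/
lemma cont_of_modulus {F g : ℝ → ℝ} {K : ℝ} {m : ℝ → ℝ}
    (hg : Continuous g) (hK : 0 ≤ K)
    (hm : Tendsto m (nhdsWithin 0 (Ioi 0)) (nhds 0))
    (hbd : ∀ x y, x ≠ y → |F x - F y| ≤ K * |g x - g y| + m |x - y|) :
    Continuous F := by
  rw [continuous_iff_continuousAt]
  intro x
  rw [Metric.continuousAt_iff]
  intro ε hε
  obtain ⟨δ₁, hδ₁, hδ₁'⟩ := (Metric.tendsto_nhdsWithin_nhds.mp hm) (ε/2) (by linarith)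
  have hgx : ContinuousAt g x := hg.continuousAt
  obtain ⟨δ₂, hδ₂, hδ₂'⟩ := (Metric.continuousAt_iff.mp hgx) (ε/(2*(K+1))) (by positivity)
  refine ⟨min δ₁ δ₂, lt_min hδ₁ hδ₂, fun {y} hy => ?_⟩
  rcases eq_or_ne y x with rfl | hne
  · simpa using hε
  · have h1 : |F y - F x| ≤ K * |g y - g x| + m |y - x| := hbd y x hne
    have h2 : |g y - g x| < ε/(2*(K+1)) := by
      have := hδ₂' (lt_of_lt_of_le hy (min_le_right _ _))
      rwa [Real.dist_eq] at this
    have h3 : m |y - x| < ε/2 := by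
      have hr : |y - x| ∈ Ioi (0:ℝ) := by
        simp only [mem_Ioi]
        exact abs_pos.mpr (sub_ne_zero.mpr hne)
      have hd : dist |y - x| 0 < δ₁ := by
        rw [Real.dist_eq, sub_zero, abs_abs]
        have := hy
        rw [Real.dist_eq] at this
        exact lt_of_lt_of_le this (min_le_left _ _)
      have := hδ₁' hr hd
      rw [Real.dist_eq, sub_zero] at this
      exact lt_of_le_of_lt (le_abs_self _) this
    rw [Real.dist_eq]
    have hKK : K * |g y - g x| ≤ K * (ε/(2*(K+1))) := by
      apply mul_le_mul_of_nonneg_left h2.le hK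
    have : K * (ε/(2*(K+1))) ≤ ε/2 := by
      rw [mul_div_assoc', div_le_div_iff₀ (by positivity) (by norm_num)]
      nlinarith
    calc |F y - F x| ≤ K * |g y - g x| + m |y - x| := h1
      _ < ε/2 + ε/2 := by linarith
      _ = ε := by ring

/-- Sign propagation forward for the difference of two solutions. -/
lemma det_fw {lam₁ lam₂ K : ℝ} {α f₁ f₂ h₁ h₂ : ℝ → ℝ}
    (hK : 0 ≤ K) (hlam : lam₂ ≤ lam₁)
    (hα0 : ∀ x, 0 < α x) (hαc : Continuous α)
    (hf₁ : ContDiff ℝ 1 f₁) (hf₂ : ContDiff ℝ 1 f₂)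
    (hode₁ : ∀ x, α x * deriv f₁ x + h₁ x = lam₁)
    (hode₂ : ∀ x, α x * deriv f₂ x + h₂ x = lam₂)
    (hlip : ∀ x, |h₁ x - h₂ x| ≤ K * |f₁ x - f₂ x|)
    {x₀ x : ℝ} (hx : x₀ ≤ x) (h0 : 0 ≤ f₁ x₀ - f₂ x₀) : 0 ≤ f₁ x - f₂ x := by
  by_contra hneg
  push_neg at hneg
  set w : ℝ → ℝ := fun y => f₁ y - f₂ y with hw
  have hwc : ContDiff ℝ 1 w := hf₁.sub hf₂
  have hwd : Differentiable ℝ w := hwc.differentiable one_ne_zero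
  have hwcont : Continuous w := hwc.continuous
  -- the set of points in [x₀, x] where w ≥ 0
  set T : Set ℝ := {y ∈ Icc x₀ x | 0 ≤ w y} with hT
  have hTcomp : IsCompact T := by
    have : T = Icc x₀ x ∩ w ⁻¹' (Ici 0) := by
      ext y; simp [hT, and_comm]
    rw [this]
    exact isCompact_Icc.inter_right (isClosed_Ici.preimage hwcont)
  have hTne : T.Nonempty := ⟨x₀, ⟨le_rfl, hx⟩, h0⟩
  set s := sSup T with hs
  have hsT : s ∈ T := hTcomp.sSup_mem hTne
  have hsx : s < x := by
    rcases lt_or_eq_of_le hsT.1.2 with h | h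
    · exact h
    · exact absurd (h ▸ hsT.2) (not_le.mpr hneg)
  have hIoc : ∀ y ∈ Ioc s x, w y < 0 := by
    intro y hy
    by_contra hy'
    push_neg at hy'
    have : y ∈ T := ⟨⟨le_trans hsT.1.1 hy.1.le, hy.2⟩, hy'⟩
    exact absurd (le_csSup hTcomp.bddAbove this) (not_le.mpr hy.1)
  have hws : w s = 0 := by
    refine le_antisymm ?_ hsT.2
    have htend : Tendsto w (nhdsWithin s (Ioi s)) (nhds (w s)) :=
      (hwcont.tendsto s).mono_left nhdsWithin_le_nhds
    refine le_of_tendsto htend ?_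
    filter_upwards [Ioc_mem_nhdsGT_of_mem ⟨le_rfl, hsx⟩] with y hy
    exact (hIoc y hy).le
  -- w ≤ 0 on [s, x]
  have hwle : ∀ y ∈ Icc s x, w y ≤ 0 := by
    intro y hy
    rcases eq_or_lt_of_le hy.1 with h | h
    · rw [← h, hws]
    · exact (hIoc y ⟨h, hy.2⟩).le
  -- minimum of α on [s, x]
  obtain ⟨y₀, hy₀mem, hy₀⟩ := isCompact_Icc.exists_isMinOn (nonempty_Icc.mpr hsx.le)
    hαc.continuousOn
  set α₀ := α y₀ with hα₀
  have hα₀pos : 0 < α₀ := hα0 y₀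
  set L := K / α₀ with hL
  have hLnn : 0 ≤ L := div_nonneg hK hα₀pos.le
  -- derivative bound
  have hkey : ∀ y ∈ Icc s x, L * w y ≤ deriv w y := by
    intro y hy
    have hαy : α₀ ≤ α y := hy₀ hy
    have hd₁ : DifferentiableAt ℝ f₁ y := (hf₁.differentiable one_ne_zero) y
    have hd₂ : DifferentiableAt ℝ f₂ y := (hf₂.differentiable one_ne_zero) y
    have hder : deriv w y = deriv f₁ y - deriv f₂ y := deriv_sub hd₁ hd₂
    have hwy : w y ≤ 0 := hwle y hy
    have habs : |w y| = -w y := abs_of_nonpos hwy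
    have h1 : K * w y ≤ α y * deriv w y := by
      have e1 : α y * deriv w y = (lam₁ - lam₂) + (h₂ y - h₁ y) := by
        rw [hder]; have := hode₁ y; have := hode₂ y; ring_nf; linarith [hode₁ y, hode₂ y]
      have e2 : |h₁ y - h₂ y| ≤ K * (-w y) := by rw [← habs]; exact hlip y
      have e3 : h₂ y - h₁ y ≥ -(K * (-w y)) := by
        have := abs_le.mp (le_trans (le_refl _) e2 |> fun h => h)
        have h4 : -(K * (-w y)) ≤ h₁ y - h₂ y := (abs_le.mp e2).1
        linarith [(abs_le.mp e2).2]
      rw [e1]; linarith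
    -- conclude L * w y ≤ deriv w y
    rcases le_or_gt 0 (deriv w y) with hD | hD
    · have : L * w y ≤ 0 := mul_nonpos_of_nonneg_of_nonpos hLnn hwy
      linarith
    · have h5 : α₀ * deriv w y ≥ α y * deriv w y := by nlinarith
      have h6 : K * w y ≤ α₀ * deriv w y := le_trans h1 (by linarith)
      rw [hL, div_mul_eq_mul_div, div_le_iff₀ hα₀pos]
      linarith [h6]
  -- integrating factor
  set g : ℝ → ℝ := fun y => w y * Real.exp (-L * y) with hg
  have hgd : ∀ y, HasDerivAt g (deriv w y * Real.exp (-L * y)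
      + w y * (Real.exp (-L * y) * -L)) y := by
    intro y
    have h1 : HasDerivAt w (deriv w y) y := (hwd y).hasDerivAt
    have h2 : HasDerivAt (fun y : ℝ => -L * y) (-L) y := by
      simpa using (hasDerivAt_id y).const_mul (-L)
    have h3 : HasDerivAt (fun y : ℝ => Real.exp (-L * y)) (Real.exp (-L * y) * -L) y := h2.exp
    exact h1.mul h3
  have hgmono : MonotoneOn g (Icc s x) := by
    apply monotoneOn_of_deriv_nonneg (convex_Icc s x)
    · exact (hwcont.mul ((Real.continuous_exp).comp (continuous_const.mul continuous_id))).continuousOn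
    · intro y hy
      exact (hgd y).differentiableAt.differentiableWithinAt
    · intro y hy
      rw [interior_Icc] at hy
      rw [(hgd y).deriv]
      have h7 : L * w y ≤ deriv w y := hkey y ⟨hy.1.le, hy.2.le⟩
      have h8 : (0:ℝ) < Real.exp (-L * y) := Real.exp_pos _
      nlinarith
  have h9 : g s ≤ g x := hgmono ⟨le_rfl, hsx.le⟩ ⟨hsx.le, le_rfl⟩ hsx.le
  have h10 : g s = 0 := by rw [hg]; simp [hws]
  have h11 : g x < 0 := mul_neg_of_neg_of_pos hneg (Real.exp_pos _)
  linarith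


/-- A priori bound (positive side). -/
lemma det_bound_pos {G : ℝ → ℝ} {lam C₀ M : ℝ} {α f h : ℝ → ℝ}
    (hGmono : MonotoneOn G (Ici 0))
    (hC₀0 : 0 ≤ C₀) (hC : ∀ p, C₀ ≤ p → lam < G p)
    (hα0 : ∀ x, 0 < α x) (hα1 : ∀ x, α x ≤ 1)
    (hf : ContDiff ℝ 1 f) (hM : ∀ x, |f x| ≤ M)
    (hode : ∀ x, α x * deriv f x + h x = lam)
    (hGh : ∀ x, G (f x) ≤ h x) :
    ∀ x, f x ≤ C₀ := by
  have hfd : Differentiable ℝ f := hf.differentiable one_ne_zero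
  have hfc : Continuous f := hf.continuous
  -- key derivative bound
  have hkey : ∀ y, C₀ ≤ f y → deriv f y ≤ lam - G (f y) := by
    intro y hy
    have h1 : α y * deriv f y = lam - h y := by linarith [hode y]
    have h2 : lam - h y ≤ lam - G (f y) := by linarith [hGh y]
    have h3 : lam - G (f y) < 0 := by linarith [hC (f y) hy]
    have h4 : α y * deriv f y < 0 := by linarith
    have h5 : deriv f y < 0 := by
      by_contra h6
      push_neg at h6
      nlinarith [hα0 y]
    nlinarith [hα0 y, hα1 y]
  by_contra hcon
  push_neg at hcon
  obtain ⟨x₀, hx₀⟩ := hcon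
  -- step 1 : f x₀ ≤ f x for all x ≤ x₀
  have step1 : ∀ x ≤ x₀, f x₀ ≤ f x := by
    by_contra hs
    push_neg at hs
    obtain ⟨x₁, hx₁le, hx₁⟩ := hs
    set c := max (f x₁) C₀ with hc
    have hcf : c < f x₀ := max_lt hx₁ hx₀
    set T : Set ℝ := {y ∈ Icc x₁ x₀ | f y ≤ c} with hT
    have hTcomp : IsCompact T := by
      have : T = Icc x₁ x₀ ∩ f ⁻¹' (Iic c) := by ext y; simp [hT, and_comm]
      rw [this]
      exact isCompact_Icc.inter_right (isClosed_Iic.preimage hfc)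
    have hTne : T.Nonempty := ⟨x₁, ⟨le_rfl, hx₁le⟩, le_max_left _ _⟩
    set z := sSup T with hz
    have hzT : z ∈ T := hTcomp.sSup_mem hTne
    have hzlt : z < x₀ := lt_of_le_of_ne hzT.1.2 (by
      intro h; rw [h] at hzT; exact absurd hzT.2 (not_le.mpr hcf))
    have hIoc : ∀ y ∈ Ioc z x₀, c < f y := by
      intro y hy
      by_contra hy'
      push_neg at hy'
      have : y ∈ T := ⟨⟨le_trans hzT.1.1 hy.1.le, hy.2⟩, hy'⟩
      exact absurd (le_csSup hTcomp.bddAbove this) (not_le.mpr hy.1)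
    have hanti : AntitoneOn f (Icc z x₀) := by
      apply antitoneOn_of_deriv_nonpos (convex_Icc z x₀) hfc.continuousOn
        hfd.differentiableOn
      intro y hy
      rw [interior_Icc] at hy
      have h7 : C₀ ≤ f y := le_trans (le_max_right _ _) (hIoc y ⟨hy.1, hy.2.le⟩).le
      have := hkey y h7
      linarith [hC (f y) h7]
    have := hanti ⟨le_rfl, hzlt.le⟩ ⟨hzlt.le, le_rfl⟩ hzlt.le
    -- f x₀ ≤ f z ≤ c < f x₀
    linarith [hzT.2]
  -- step 2 : quantitative decay backwards
  set δ := G (f x₀) - lam with hδ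
  have hδpos : 0 < δ := by have := hC (f x₀) hx₀.le; linarith
  have hMf : 0 ≤ M := le_trans (abs_nonneg _) (hM x₀)
  set x := x₀ - (M + 1 + |f x₀|)/δ with hxdef
  have hxle : x ≤ x₀ := by
    have h0 : 0 ≤ (M + 1 + |f x₀|)/δ := by positivity
    rw [hxdef]
    linarith
  set φ : ℝ → ℝ := fun y => f y + δ * y with hφ
  have hφd : ∀ y, HasDerivAt φ (deriv f y + δ) y := by
    intro y
    have h1 : HasDerivAt f (deriv f y) y := (hfd y).hasDerivAt
    have h2 : HasDerivAt (fun y : ℝ => δ * y) δ y := by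
      simpa using (hasDerivAt_id y).const_mul δ
    exact h1.add h2
  have hφanti : AntitoneOn φ (Icc x x₀) := by
    apply antitoneOn_of_deriv_nonpos (convex_Icc x x₀)
    · exact (hfc.add (continuous_const.mul continuous_id)).continuousOn
    · intro y hy
      exact (hφd y).differentiableAt.differentiableWithinAt
    · intro y hy
      rw [interior_Icc] at hy
      have h7 : f x₀ ≤ f y := step1 y hy.2.le
      have h8 : C₀ ≤ f y := le_trans hx₀.le h7
      have h9 := hkey y h8
      have h10 : G (f x₀) ≤ G (f y) :=
        hGmono (mem_Ici.mpr (le_trans hC₀0 hx₀.le)) (mem_Ici.mpr (le_trans hC₀0 h8)) h7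
      rw [(hφd y).deriv]
      linarith
  have h11 : φ x₀ ≤ φ x := hφanti ⟨le_rfl, hxle⟩ ⟨hxle, le_rfl⟩ hxle
  -- f x ≥ f x₀ + δ (x₀ - x) = f x₀ + M + 1 + |f x₀| > M
  have h12 : f x₀ + δ * (x₀ - x) ≤ f x := by
    have : δ * x₀ - δ * x = δ * (x₀ - x) := by ring
    simp only [hφ] at h11
    nlinarith
  have h13 : δ * (x₀ - x) = M + 1 + |f x₀| := by
    rw [hxdef]
    field_simp
    ring
  have h14 : f x ≤ M := le_trans (le_abs_self _) (hM x)
  nlinarith [neg_abs_le (f x₀)]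

/-- A priori bound. -/
lemma det_bound {G : ℝ → ℝ} {lam C₀ M : ℝ} {α f h : ℝ → ℝ}
    (hGmono : MonotoneOn G (Ici 0)) (hGeven : ∀ p, G (-p) = G p)
    (hC₀0 : 0 ≤ C₀) (hC : ∀ p, C₀ ≤ p → lam < G p)
    (hα0 : ∀ x, 0 < α x) (hα1 : ∀ x, α x ≤ 1)
    (hf : ContDiff ℝ 1 f) (hM : ∀ x, |f x| ≤ M)
    (hode : ∀ x, α x * deriv f x + h x = lam)
    (hGh : ∀ x, G (f x) ≤ h x) :
    ∀ x, |f x| ≤ C₀ := by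
  intro x
  rw [abs_le]
  constructor
  · -- apply det_bound_pos to the reflected system
    set g : ℝ → ℝ := fun y => -f (-y) with hg
    have hgc : ContDiff ℝ 1 g := (hf.comp contDiff_neg).neg
    have hgderiv : ∀ y, deriv g y = deriv f (-y) := by
      intro y
      have h1 : deriv g y = -deriv (fun z => f (-z)) y := deriv.neg
      rw [h1, deriv_comp_neg]
      ring
    have := det_bound_pos (α := fun y => α (-y)) (f := g) (h := fun y => h (-y))
      (M := M) hGmono hC₀0 hC (fun y => hα0 (-y)) (fun y => hα1 (-y)) hgc
      (fun y => by simpa [hg] using hM (-y))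
      (fun y => by rw [hgderiv y]; exact hode (-y))
      (fun y => by rw [hg]; simpa [hGeven (f (-y))] using hGh (-y))
    have h2 := this (-x)
    simp only [hg, neg_neg] at h2
    linarith
  · exact det_bound_pos hGmono hC₀0 hC hα0 hα1 hf hM hode hGh x

theorem key_lemma {Ω : Type} [MeasurableSpace Ω] (P : Measure Ω) (τ : ℝ → Ω → Ω)
    (a : ℝ → Ω → ℝ) (H : ℝ → ℝ → Ω → ℝ) (G_L G_U : ℝ → ℝ)
    (hset : HJSetting P τ a H G_L G_U)
    (lam₁ lam₂ : ℝ) (f₁ f₂ : ℝ → Ω → ℝ)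
    (hf₁ : StatSol P τ a H lam₁ f₁) (hf₂ : StatSol P τ a H lam₂ f₂)
    (hmean : (∫ ω, f₁ 0 ω ∂P) = ∫ ω, f₂ 0 ω ∂P)
    (hle : lam₂ ≤ lam₁) :
    lam₁ = lam₂ ∧ ∀ᵐ ω ∂P, ∀ x, f₁ x ω = f₂ x ω := by
  haveI hProb : IsProbabilityMeasure P := hset.prob
  -- translation identities
  have hshift : ∀ (f : ℝ → Ω → ℝ), (∀ x ω, f x ω = f 0 (τ x ω)) →
      ∀ x y ω, f x (τ y ω) = f (x + y) ω := by
    intro f hstat x y ω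
    rw [hstat x (τ y ω), ← hset.tau_add, ← hstat]
  have ha_shift : ∀ x y ω, a x (τ y ω) = a (x + y) ω := by
    intro x y ω; rw [hset.a_stat x (τ y ω), ← hset.tau_add, ← hset.a_stat]
  have hH_shift : ∀ p x y ω, H p x (τ y ω) = H p (x + y) ω := by
    intro p x y ω; rw [hset.H_stat p x (τ y ω), ← hset.tau_add, ← hset.H_stat]
  have hH_lb : ∀ p x ω, G_L p ≤ H p x ω := by
    intro p x ω; rw [hset.H_stat p x ω]; exact hset.H_lower p (τ x ω)
  -- continuity of a in x
  have ha_cont : ∀ ω, Continuous fun x => a x ω := by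
    intro ω
    obtain ⟨κ, hκ, hlip⟩ := hset.a_sqrt_lip
    have hsq : LipschitzWith ⟨κ, hκ.le⟩ fun x => Real.sqrt (a x ω) := by
      apply LipschitzWith.of_dist_le_mul
      intro x y
      rw [Real.dist_eq, Real.dist_eq]
      have e1 : a x ω = a (x - y) (τ y ω) := by rw [ha_shift]; norm_num
      have e2 : a y ω = a 0 (τ y ω) := hset.a_stat y ω
      rw [e1, e2]
      exact hlip (x - y) (τ y ω)
    have he : (fun x => a x ω) = fun x => (Real.sqrt (a x ω))^2 :=
      funext fun x => (Real.sq_sqrt (hset.a_pos x ω).le).symm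
    rw [he]
    exact hsq.continuous.pow 2
  -- choice of the uniform bound C₀
  obtain ⟨c, hc⟩ := eventually_atTop.mp
    (hset.GL_coercive.eventually_ge_atTop (max lam₁ lam₂ + 1))
  set C₀ : ℝ := max c 1 with hC₀def
  have hC₀1 : (1:ℝ) ≤ C₀ := le_max_right _ _
  have hC₀0 : (0:ℝ) ≤ C₀ := by linarith
  have hC₀pos : (0:ℝ) < C₀ := by linarith
  have hC' : ∀ p, C₀ ≤ p → max lam₁ lam₂ < G_L p := by
    intro p hp
    have := hc p (le_trans (le_max_left c 1) hp)
    linarith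
  -- Lipschitz constant for H in p
  obtain ⟨K, hKpos, hK⟩ := hset.H_lip C₀ hC₀pos
  have hHlipx : ∀ p q x ω, |p| ≤ C₀ → |q| ≤ C₀ → |H p x ω - H q x ω| ≤ K * |p - q| := by
    intro p q x ω hp hq
    rw [hset.H_stat p x ω, hset.H_stat q x ω]
    exact hK p q (τ x ω) hp hq
  -- modulus of continuity of H in x
  obtain ⟨m, hm0, hmmono, hmtend, hmbd⟩ := hset.H_mod C₀ hC₀pos
  have hHmodx : ∀ p x y ω, |p| ≤ C₀ → |H p x ω - H p y ω| ≤ m |x - y| := by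
    intro p x y ω hp
    have e1 : H p x ω = H p (x - y) (τ y ω) := by rw [hH_shift]; norm_num
    have e2 : H p y ω = H p 0 (τ y ω) := hset.H_stat p y ω
    rw [e1, e2]
    exact hmbd p (x - y) (τ y ω) hp
  -- continuity of the composed Hamiltonian term
  have hHcomp_cont : ∀ (f : ℝ → Ω → ℝ) (ω : Ω), ContDiff ℝ 1 (fun x => f x ω) →
      (∀ x, |f x ω| ≤ C₀) → Continuous fun x => H (f x ω) x ω := by
    intro f ω hcd hbd
    apply cont_of_modulus (g := fun x => f x ω) (K := K) (m := m)
      hcd.continuous hKpos.le hmtend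
    intro x y _
    have h1 : |H (f x ω) x ω - H (f y ω) y ω| ≤
        |H (f x ω) x ω - H (f y ω) x ω| + |H (f y ω) x ω - H (f y ω) y ω| := by
      have := abs_sub_le (H (f x ω) x ω) (H (f y ω) x ω) (H (f y ω) y ω)
      linarith
    have h2 := hHlipx (f x ω) (f y ω) x ω (hbd x) (hbd y)
    have h3 := hHmodx (f y ω) x y ω (hbd y)
    linarith
  -- the difference w
  set w : ℝ → Ω → ℝ := fun x ω => f₁ x ω - f₂ x ω with hwdef
  have hw_shift : ∀ x y ω, w x (τ y ω) = w (x + y) ω := by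
    intro x y ω
    simp only [hwdef]
    rw [hshift f₁ hf₁.2.1 x y ω, hshift f₂ hf₂.2.1 x y ω]
  have hw_cont : ∀ ω, Continuous fun x => w x ω :=
    fun ω => ((hf₁.2.2.1 ω).sub (hf₂.2.2.1 ω)).continuous
  -- measurability of sections
  have hmeasf : ∀ (f : ℝ → Ω → ℝ), Measurable (fun q : ℝ × Ω => f q.1 q.2) →
      ∀ x : ℝ, Measurable fun ω => f x ω := by
    intro f hf x
    exact hf.comp (measurable_const.prodMk measurable_id)
  have hmeasw : ∀ x : ℝ, Measurable fun ω => w x ω :=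
    fun x => (hmeasf f₁ hf₁.1 x).sub (hmeasf f₂ hf₂.1 x)
  -- measurability of the derivative sections
  have hmeasderiv : ∀ (f : ℝ → Ω → ℝ), Measurable (fun q : ℝ × Ω => f q.1 q.2) →
      (∀ ω, ContDiff ℝ 1 fun x => f x ω) →
      ∀ x : ℝ, Measurable fun ω => deriv (fun y => f y ω) x := by
    intro f hmf hcd x
    have hseq : ∀ ω, Tendsto (fun n : ℕ => ((n:ℝ)+1) * (f (x + 1/((n:ℝ)+1)) ω - f x ω)) atTop
        (nhds (deriv (fun y => f y ω) x)) := by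
      intro ω
      have hder : HasDerivAt (fun y => f y ω) (deriv (fun y => f y ω) x) x :=
        (((hcd ω).differentiable one_ne_zero) x).hasDerivAt
      have hslope := hasDerivAt_iff_tendsto_slope.mp hder
      have hu : Tendsto (fun n : ℕ => x + 1/((n:ℝ)+1)) atTop (nhdsWithin x {x}ᶜ) := by
        apply tendsto_nhdsWithin_iff.mpr
        constructor
        · have : Tendsto (fun n : ℕ => 1/((n:ℝ)+1)) atTop (nhds 0) :=
            tendsto_one_div_add_atTop_nhds_zero_nat
          have := this.const_add x
          simpa using this
        · filter_upwards with n
          simp only [mem_compl_iff, mem_singleton_iff]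
          intro hcontra
          have h1 : 1/((n:ℝ)+1) = 0 := by linarith [congrArg (fun z => z - x) hcontra]
          have h2 : 0 < 1/((n:ℝ)+1) := by positivity
          linarith
      have := hslope.comp hu
      convert this using 2 with n
      show ((n:ℝ)+1) * (f (x + 1/((n:ℝ)+1)) ω - f x ω)
          = slope (fun y => f y ω) x (x + 1/((n:ℝ)+1))
      rw [slope_def_field]
      field_simp
      ring
    apply measurable_of_tendsto_metrizable
      (f := fun n ω => ((n:ℝ)+1) * (f (x + 1/((n:ℝ)+1)) ω - f x ω))
    · intro n
      exact (((hmeasf f hmf _).sub (hmeasf f hmf x)).const_mul _)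
    · rw [tendsto_pi_nhds]
      exact hseq
  -- the good event
  set Good : Set Ω := {ω | (∀ x : ℝ, |f₁ x ω| ≤ C₀ ∧ |f₂ x ω| ≤ C₀) ∧
      (∀ x : ℝ, a x ω * deriv (fun y => f₁ y ω) x + H (f₁ x ω) x ω = lam₁ ∧
                a x ω * deriv (fun y => f₂ y ω) x + H (f₂ x ω) x ω = lam₂)} with hGooddef
  have hdense : Dense (range ((↑) : ℚ → ℝ)) := Rat.denseRange_cast
  -- rational characterization of Good
  have hGoodQ : Good = {ω | (∀ q : ℚ, |f₁ q ω| ≤ C₀ ∧ |f₂ q ω| ≤ C₀) ∧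
      (∀ q : ℚ, a q ω * deriv (fun y => f₁ y ω) q + H (f₁ q ω) q ω = lam₁ ∧
                a q ω * deriv (fun y => f₂ y ω) q + H (f₂ q ω) q ω = lam₂)} := by
    ext ω
    constructor
    · intro h
      exact ⟨fun q => h.1 q, fun q => h.2 q⟩
    · rintro ⟨hb, ho⟩
      have hbd : ∀ x : ℝ, |f₁ x ω| ≤ C₀ ∧ |f₂ x ω| ≤ C₀ := by
        have hcl : IsClosed {x : ℝ | |f₁ x ω| ≤ C₀ ∧ |f₂ x ω| ≤ C₀} := by
          apply IsClosed.inter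
          · exact isClosed_le (hf₁.2.2.1 ω).continuous.abs continuous_const
          · exact isClosed_le (hf₂.2.2.1 ω).continuous.abs continuous_const
        have hsub : range ((↑) : ℚ → ℝ) ⊆ {x : ℝ | |f₁ x ω| ≤ C₀ ∧ |f₂ x ω| ≤ C₀} := by
          rintro _ ⟨q, rfl⟩; exact hb q
        have := hcl.closure_subset_iff.mpr hsub
        rw [hdense.closure_eq] at this
        intro x; exact this (mem_univ x)
      refine ⟨hbd, ?_⟩
      have hode : ∀ (f : ℝ → Ω → ℝ) (lam : ℝ), ContDiff ℝ 1 (fun x => f x ω) →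
          (∀ x : ℝ, |f x ω| ≤ C₀) →
          (∀ q : ℚ, a q ω * deriv (fun y => f y ω) q + H (f q ω) q ω = lam) →
          ∀ x : ℝ, a x ω * deriv (fun y => f y ω) x + H (f x ω) x ω = lam := by
        intro f lam hcd hfbd hq x
        have hcont : Continuous fun x => a x ω * deriv (fun y => f y ω) x
            + H (f x ω) x ω := by
          exact ((ha_cont ω).mul (hcd.continuous_deriv le_rfl)).add
            (hHcomp_cont f ω hcd hfbd)
        have heq : (fun x => a x ω * deriv (fun y => f y ω) x + H (f x ω) x ω)
            = fun _ => lam := by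
          apply Continuous.ext_on hdense hcont continuous_const
          rintro _ ⟨q, rfl⟩
          exact hq q
        exact congrFun heq x
      intro x
      exact ⟨hode f₁ lam₁ (hf₁.2.2.1 ω) (fun x => (hbd x).1) (fun q => (ho q).1) x,
             hode f₂ lam₂ (hf₂.2.2.1 ω) (fun x => (hbd x).2) (fun q => (ho q).2) x⟩
  -- measurability of Good
  have hmeasHterm : ∀ (f : ℝ → Ω → ℝ), Measurable (fun q : ℝ × Ω => f q.1 q.2) →
      ∀ x : ℝ, Measurable fun ω => H (f x ω) x ω := by
    intro f hmf x
    have : (fun ω => H (f x ω) x ω)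
        = (fun q : ℝ × ℝ × Ω => H q.1 q.2.1 q.2.2) ∘ (fun ω => (f x ω, x, ω)) := rfl
    rw [this]
    exact hset.meas_H.comp ((hmeasf f hmf x).prodMk (measurable_const.prodMk measurable_id))
  have hmeasODE : ∀ (f : ℝ → Ω → ℝ) (lam : ℝ), Measurable (fun q : ℝ × Ω => f q.1 q.2) →
      (∀ ω, ContDiff ℝ 1 fun x => f x ω) → ∀ x : ℝ,
      MeasurableSet {ω | a x ω * deriv (fun y => f y ω) x + H (f x ω) x ω = lam} := by
    intro f lam hmf hcd x
    have hmx : Measurable fun ω => a x ω * deriv (fun y => f y ω) x + H (f x ω) x ω :=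
      ((hmeasf a hset.meas_a x).mul (hmeasderiv f hmf hcd x)).add (hmeasHterm f hmf x)
    exact hmx (measurableSet_singleton lam)
  have hGoodMeas : MeasurableSet Good := by
    rw [hGoodQ]
    have : {ω | (∀ q : ℚ, |f₁ q ω| ≤ C₀ ∧ |f₂ q ω| ≤ C₀) ∧
        (∀ q : ℚ, a q ω * deriv (fun y => f₁ y ω) q + H (f₁ q ω) q ω = lam₁ ∧
                  a q ω * deriv (fun y => f₂ y ω) q + H (f₂ q ω) q ω = lam₂)}
        = (⋂ q : ℚ, ({ω | |f₁ q ω| ≤ C₀} ∩ {ω | |f₂ q ω| ≤ C₀})) ∩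
          (⋂ q : ℚ, ({ω | a q ω * deriv (fun y => f₁ y ω) q + H (f₁ q ω) q ω = lam₁} ∩
                     {ω | a q ω * deriv (fun y => f₂ y ω) q + H (f₂ q ω) q ω = lam₂})) := by
      ext ω
      simp only [mem_setOf_eq, mem_inter_iff, mem_iInter] <;> tauto
    rw [this]
    apply MeasurableSet.inter
    · apply MeasurableSet.iInter
      intro q
      exact (measurableSet_le (hmeasf f₁ hf₁.1 q).abs measurable_const).inter
        (measurableSet_le (hmeasf f₂ hf₂.1 q).abs measurable_const)
    · apply MeasurableSet.iInter
      intro q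
      exact (hmeasODE f₁ lam₁ hf₁.1 hf₁.2.2.1 q).inter (hmeasODE f₂ lam₂ hf₂.1 hf₂.2.2.1 q)
  -- invariance of Good
  have hGoodFwd : ∀ (y : ℝ) (ω : Ω), ω ∈ Good → τ y ω ∈ Good := by
    intro y ω hω
    have e₁ : (fun s => f₁ s (τ y ω)) = fun s => f₁ (s + y) ω :=
      funext fun s => hshift f₁ hf₁.2.1 s y ω
    have e₂ : (fun s => f₂ s (τ y ω)) = fun s => f₂ (s + y) ω :=
      funext fun s => hshift f₂ hf₂.2.1 s y ω
    constructor
    · intro x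
      rw [hshift f₁ hf₁.2.1 x y ω, hshift f₂ hf₂.2.1 x y ω]
      exact hω.1 (x + y)
    · intro x
      constructor
      · have e₁d : deriv (fun s => f₁ s (τ y ω)) x = deriv (fun s => f₁ s ω) (x + y) := by
          rw [e₁]; exact deriv_comp_add_const (fun t => f₁ t ω) y x
        rw [ha_shift x y ω, hshift f₁ hf₁.2.1 x y ω, hH_shift _ x y ω, e₁d]
        exact (hω.2 (x + y)).1
      · have e₂d : deriv (fun s => f₂ s (τ y ω)) x = deriv (fun s => f₂ s ω) (x + y) := by
          rw [e₂]; exact deriv_comp_add_const (fun t => f₂ t ω) y x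
        rw [ha_shift x y ω, hshift f₂ hf₂.2.1 x y ω, hH_shift _ x y ω, e₂d]
        exact (hω.2 (x + y)).2
  have hGoodIff : ∀ (y : ℝ) (ω : Ω), τ y ω ∈ Good ↔ ω ∈ Good := by
    intro y ω
    constructor
    · intro h
      have := hGoodFwd (-y) (τ y ω) h
      rwa [← hset.tau_add, neg_add_cancel, hset.tau_zero] at this
    · exact hGoodFwd y ω
  have hGoodInv : ∀ y : ℝ, τ y ⁻¹' Good = Good := by
    intro y; ext ω; rw [mem_preimage]; exact hGoodIff y ω
  -- Good holds almost surely
  have hGoodae : ∀ᵐ ω ∂P, ω ∈ Good := by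
    filter_upwards [hf₁.2.2.2, hf₂.2.2.2] with ω h₁ h₂
    obtain ⟨⟨M₁, hM₁⟩, hode₁⟩ := h₁
    obtain ⟨⟨M₂, hM₂⟩, hode₂⟩ := h₂
    refine ⟨fun x => ⟨?_, ?_⟩, fun x => ⟨hode₁ x, hode₂ x⟩⟩
    · exact det_bound hset.GL_mono hset.GL_even hC₀0
        (fun p hp => lt_of_le_of_lt (le_max_left lam₁ lam₂) (hC' p hp))
        (fun s => hset.a_pos s ω) (fun s => hset.a_le_one s ω) (hf₁.2.2.1 ω) hM₁ hode₁
        (fun s => hH_lb (f₁ s ω) s ω) x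
    · exact det_bound hset.GL_mono hset.GL_even hC₀0
        (fun p hp => lt_of_le_of_lt (le_max_right lam₁ lam₂) (hC' p hp))
        (fun s => hset.a_pos s ω) (fun s => hset.a_le_one s ω) (hf₂.2.2.1 ω) hM₂ hode₂
        (fun s => hH_lb (f₂ s ω) s ω) x
  -- sign propagation on Good
  have hup : ∀ ω ∈ Good, ∀ x₀ x : ℝ, x₀ ≤ x → 0 ≤ w x₀ ω → 0 ≤ w x ω := by
    intro ω hω x₀ x hx h0
    exact det_fw (K := K) hKpos.le hle (fun s => hset.a_pos s ω) (ha_cont ω)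
      (hf₁.2.2.1 ω) (hf₂.2.2.1 ω) (fun s => (hω.2 s).1) (fun s => (hω.2 s).2)
      (fun s => hHlipx _ _ s ω (hω.1 s).1 (hω.1 s).2) hx h0
  have hdown : ∀ ω ∈ Good, ∀ x₀ x : ℝ, x ≤ x₀ → w x₀ ω < 0 → w x ω < 0 := by
    intro ω hω x₀ x hx h0
    by_contra hcon
    push_neg at hcon
    exact absurd (hup ω hω x x₀ hx hcon) (not_le.mpr h0)
  -- the events U and V
  set U : Set Ω := Good ∩ {ω | ∃ x : ℝ, 0 < w x ω} with hUdef
  set V : Set Ω := Good ∩ {ω | ∃ x : ℝ, w x ω < 0} with hVdef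
  have hUrat : {ω : Ω | ∃ x : ℝ, 0 < w x ω} = {ω : Ω | ∃ q : ℚ, 0 < w q ω} := by
    ext ω
    simp only [mem_setOf_eq]
    constructor
    · rintro ⟨x, hx⟩
      have hopen : IsOpen {y : ℝ | 0 < w y ω} := isOpen_lt continuous_const (hw_cont ω)
      obtain ⟨_, ⟨q, rfl⟩, hq⟩ := hdense.exists_mem_open hopen ⟨x, hx⟩
      exact ⟨q, hq⟩
    · rintro ⟨q, hq⟩; exact ⟨q, hq⟩
  have hVrat : {ω : Ω | ∃ x : ℝ, w x ω < 0} = {ω : Ω | ∃ q : ℚ, w q ω < 0} := by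
    ext ω
    simp only [mem_setOf_eq]
    constructor
    · rintro ⟨x, hx⟩
      have hopen : IsOpen {y : ℝ | w y ω < 0} := isOpen_lt (hw_cont ω) continuous_const
      obtain ⟨_, ⟨q, rfl⟩, hq⟩ := hdense.exists_mem_open hopen ⟨x, hx⟩
      exact ⟨q, hq⟩
    · rintro ⟨q, hq⟩; exact ⟨q, hq⟩
  have hUmeas : MeasurableSet U := by
    rw [hUdef, hUrat]
    refine hGoodMeas.inter ?_
    have : {ω : Ω | ∃ q : ℚ, 0 < w q ω} = ⋃ q : ℚ, {ω | 0 < w q ω} := by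
      ext ω; simp [mem_iUnion]
    rw [this]
    exact MeasurableSet.iUnion fun q => measurableSet_lt measurable_const (hmeasw q)
  have hVmeas : MeasurableSet V := by
    rw [hVdef, hVrat]
    refine hGoodMeas.inter ?_
    have : {ω : Ω | ∃ q : ℚ, w q ω < 0} = ⋃ q : ℚ, {ω | w q ω < 0} := by
      ext ω; simp [mem_iUnion]
    rw [this]
    exact MeasurableSet.iUnion fun q => measurableSet_lt (hmeasw q) measurable_const
  have hUinv : ∀ y : ℝ, τ y ⁻¹' U = U := by
    intro y
    ext ω
    simp only [hUdef, mem_preimage, mem_inter_iff, mem_setOf_eq]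
    rw [hGoodIff y ω]
    constructor
    · rintro ⟨hg, x, hx⟩
      rw [hw_shift x y ω] at hx
      exact ⟨hg, x + y, hx⟩
    · rintro ⟨hg, x, hx⟩
      refine ⟨hg, x - y, ?_⟩
      rw [hw_shift (x - y) y ω, sub_add_cancel]
      exact hx
  have hVinv : ∀ y : ℝ, τ y ⁻¹' V = V := by
    intro y
    ext ω
    simp only [hVdef, mem_preimage, mem_inter_iff, mem_setOf_eq]
    rw [hGoodIff y ω]
    constructor
    · rintro ⟨hg, x, hx⟩
      rw [hw_shift x y ω] at hx
      exact ⟨hg, x + y, hx⟩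
    · rintro ⟨hg, x, hx⟩
      refine ⟨hg, x - y, ?_⟩
      rw [hw_shift (x - y) y ω, sub_add_cancel]
      exact hx
  -- the crossing event has measure zero
  set D : ℤ → Set Ω := fun n => (U ∩ V) ∩
      {ω | (∃ q : ℚ, (q:ℝ) < n + 1 ∧ 0 ≤ w q ω) ∧ (∀ q : ℚ, (q:ℝ) < n → w q ω < 0)} with hDdef
  have hDmeas : ∀ n : ℤ, MeasurableSet (D n) := by
    intro n
    refine (hUmeas.inter hVmeas).inter ?_
    have hsplit : {ω : Ω | (∃ q : ℚ, (q:ℝ) < n + 1 ∧ 0 ≤ w q ω)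
          ∧ (∀ q : ℚ, (q:ℝ) < n → w q ω < 0)}
        = (⋃ q : ℚ, ⋃ _ : (q:ℝ) < n + 1, {ω | 0 ≤ w q ω}) ∩
          (⋂ q : ℚ, ⋂ _ : (q:ℝ) < n, {ω | w q ω < 0}) := by
      ext ω
      simp only [mem_setOf_eq, mem_inter_iff, mem_iUnion, mem_iInter]
      tauto
    rw [hsplit]
    apply MeasurableSet.inter
    · exact MeasurableSet.iUnion fun q => MeasurableSet.iUnion fun _ =>
        measurableSet_le measurable_const (hmeasw q)
    · exact MeasurableSet.iInter fun q => MeasurableSet.iInter fun _ =>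
        measurableSet_lt (hmeasw q) measurable_const
  have hDcover : U ∩ V = ⋃ n : ℤ, D n := by
    apply Subset.antisymm
    · intro ω hω
      have hg : ω ∈ Good := hω.1.1
      obtain ⟨xp, hxp⟩ := hω.1.2
      obtain ⟨xm, hxm⟩ := hω.2.2
      -- the candidate set of integers
      have Hinh : ∃ n : ℤ, ∀ q : ℚ, (q:ℝ) < n → w q ω < 0 := by
        refine ⟨⌊xm⌋, fun q hq => ?_⟩
        exact hdown ω hg xm q (le_trans hq.le (Int.floor_le xm)) hxm
      have Hbdd : ∃ b : ℤ, ∀ n : ℤ, (∀ q : ℚ, (q:ℝ) < n → w q ω < 0) → n ≤ b := by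
        refine ⟨⌈xp⌉, fun n hn => ?_⟩
        by_contra hcon
        push_neg at hcon
        have h1 : (xp:ℝ) < n := by
          have := Int.le_ceil xp
          have h2 : (⌈xp⌉:ℝ) + 1 ≤ (n:ℝ) := by exact_mod_cast Int.add_one_le_iff.mpr hcon
          linarith
        obtain ⟨q, hq1, hq2⟩ := exists_rat_btwn h1
        have h3 : 0 ≤ w q ω := hup ω hg xp q hq1.le hxp.le
        exact absurd (hn q hq2) (not_lt.mpr h3)
      obtain ⟨n, hnN, hmax⟩ := Int.exists_greatest_of_bdd Hbdd Hinh
      refine mem_iUnion.mpr ⟨n, hω, ?_, hnN⟩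
      by_contra hcon
      push_neg at hcon
      have hn1 : ∀ q : ℚ, (q:ℝ) < (n+1 : ℤ) → w q ω < 0 := by
        intro q hq
        have : (q:ℝ) < (n:ℝ) + 1 := by exact_mod_cast hq
        exact hcon q this
      exact absurd (hmax (n+1) hn1) (by omega)
    · exact iUnion_subset fun n => inter_subset_left
  have hDdisj : Pairwise (Function.onFun Disjoint D) := by
    have haux : ∀ m n : ℤ, m < n → Disjoint (D m) (D n) := by
      intro m n hmn
      rw [Set.disjoint_left]
      rintro ω ⟨_, ⟨q, hq1, hq2⟩, _⟩ ⟨_, _, hn⟩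
      have h1 : (q:ℝ) < n := by
        have : (m:ℝ) + 1 ≤ (n:ℝ) := by exact_mod_cast Int.add_one_le_iff.mpr hmn
        linarith
      exact absurd hq2 (not_le.mpr (hn q h1))
    intro mn n hmn
    rcases lt_or_gt_of_ne hmn with h | h
    · exact haux _ _ h
    · exact (haux _ _ h).symm
  have hDshift : ∀ n : ℤ, τ (n:ℝ) ⁻¹' (D 0) = D n := by
    intro n
    ext ω
    simp only [hDdef, mem_preimage, mem_inter_iff, mem_setOf_eq]
    have hU' : τ (n:ℝ) ω ∈ U ↔ ω ∈ U := by
      conv_rhs => rw [← hUinv (n:ℝ)]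
      exact Iff.rfl
    have hV' : τ (n:ℝ) ω ∈ V ↔ ω ∈ V := by
      conv_rhs => rw [← hVinv (n:ℝ)]
      exact Iff.rfl
    rw [hU', hV']
    constructor
    · rintro ⟨hUV, ⟨q, hq1, hq2⟩, hall⟩
      rw [hw_shift (q:ℝ) (n:ℝ) ω] at hq2
      refine ⟨hUV, ⟨q + n, ?_, ?_⟩, ?_⟩
      · push_cast; push_cast at hq1; linarith
      · push_cast; exact hq2
      · intro q' hq'
        have h1 : ((q' - n : ℚ):ℝ) < (0:ℤ) := by push_cast; push_cast at hq'; linarith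
        have := hall (q' - n) h1
        rw [hw_shift ((q' - n : ℚ):ℝ) (n:ℝ) ω] at this
        have h2 : ((q' - n : ℚ):ℝ) + (n:ℝ) = (q':ℝ) := by push_cast; ring
        rwa [h2] at this
    · rintro ⟨hUV, ⟨q, hq1, hq2⟩, hall⟩
      refine ⟨hUV, ⟨q - n, ?_, ?_⟩, ?_⟩
      · push_cast; push_cast at hq1; linarith
      · rw [hw_shift ((q - n : ℚ):ℝ) (n:ℝ) ω]
        have h2 : ((q - n : ℚ):ℝ) + (n:ℝ) = (q:ℝ) := by push_cast; ring
        rwa [h2]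
      · intro q' hq'
        rw [hw_shift (q':ℝ) (n:ℝ) ω]
        have h1 : ((q' + n : ℚ):ℝ) < (n:ℝ) := by push_cast; push_cast at hq'; linarith
        have := hall (q' + n) (by push_cast; push_cast at hq'; linarith)
        have h2 : ((q' + n : ℚ):ℝ) = (q':ℝ) + (n:ℝ) := by push_cast; ring
        rwa [h2] at this
  have hPD : ∀ n : ℤ, P (D n) = P (D 0) := by
    intro n
    rw [← hDshift n]
    exact (hset.mp_tau (n:ℝ)).measure_preimage (hDmeas 0).nullMeasurableSet
  have hPUV : P (U ∩ V) = 0 := by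
    have hsum : P (U ∩ V) = ∑' n : ℤ, P (D n) := by
      rw [hDcover]
      exact measure_iUnion hDdisj hDmeas
    rcases eq_or_ne (P (D 0)) 0 with h0 | h0
    · rw [hsum, tsum_congr (fun n => (hPD n).trans h0)]
      simp
    · exfalso
      have htop : ∑' n : ℤ, P (D n) = ⊤ := by
        rw [tsum_congr (fun n => hPD n)]
        exact ENNReal.tsum_const_eq_top_of_ne_zero h0
      have : P (U ∩ V) ≤ 1 := prob_le_one
      rw [hsum, htop] at this
      exact absurd this (by simp)
  -- zero-one laws
  have hU01 := hset.ergodic U hUmeas hUinv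
  have hV01 := hset.ergodic V hVmeas hVinv
  -- a.e. sign of w at 0
  have hUc : P U = 0 → ∀ᵐ ω ∂P, w 0 ω ≤ 0 := by
    intro h0
    have h1 : ∀ᵐ ω ∂P, ω ∉ U := measure_eq_zero_iff_ae_notMem.mp h0
    filter_upwards [hGoodae, h1] with ω hg hU
    by_contra hcon
    push_neg at hcon
    exact hU ⟨hg, 0, hcon⟩
  have hVc : P V = 0 → ∀ᵐ ω ∂P, 0 ≤ w 0 ω := by
    intro h0
    have h1 : ∀ᵐ ω ∂P, ω ∉ V := measure_eq_zero_iff_ae_notMem.mp h0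
    filter_upwards [hGoodae, h1] with ω hg hV
    by_contra hcon
    push_neg at hcon
    exact hV ⟨hg, 0, hcon⟩
  have hsign : (∀ᵐ ω ∂P, w 0 ω ≤ 0) ∨ (∀ᵐ ω ∂P, 0 ≤ w 0 ω) := by
    rcases hU01 with h | h
    · exact Or.inl (hUc h)
    · rcases hV01 with h' | h'
      · exact Or.inr (hVc h')
      · exfalso
        have h2 : P (U \ V) ≤ P Vᶜ := measure_mono fun ω hω => hω.2
        have h3 : P Vᶜ = 0 := by
          rw [measure_compl hVmeas (measure_ne_top P V), h']
          simp
        have h4 : P U ≤ P (U ∩ V) + P (U \ V) := measure_le_inter_add_diff P U V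
        rw [h, hPUV] at h4
        have : (1:ENNReal) ≤ P (U \ V) := by simpa using h4
        rw [h3] at h2
        have := le_trans this h2
        simp at this
  -- integrability
  have hint₁ : Integrable (fun ω => f₁ 0 ω) P := by
    apply Integrable.mono' (integrable_const C₀) ((hmeasf f₁ hf₁.1 0).aestronglyMeasurable)
    filter_upwards [hGoodae] with ω hg
    rw [Real.norm_eq_abs]
    exact (hg.1 0).1
  have hint₂ : Integrable (fun ω => f₂ 0 ω) P := by
    apply Integrable.mono' (integrable_const C₀) ((hmeasf f₂ hf₂.1 0).aestronglyMeasurable)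
    filter_upwards [hGoodae] with ω hg
    rw [Real.norm_eq_abs]
    exact (hg.1 0).2
  have hintw : Integrable (fun ω => w 0 ω) P := hint₁.sub hint₂
  have hiw : ∫ ω, w 0 ω ∂P = 0 := by
    simp only [hwdef]
    rw [integral_sub hint₁ hint₂, hmean, sub_self]
  -- w vanishes at 0 a.e.
  have hw0 : ∀ᵐ ω ∂P, w 0 ω = 0 := by
    rcases hsign with hs | hs
    · have hnn : 0 ≤ᵐ[P] fun ω => -w 0 ω := by
        filter_upwards [hs] with ω h
        simpa using h
      have h2 : ∫ ω, -w 0 ω ∂P = 0 := by rw [integral_neg, hiw, neg_zero]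
      have h3 := (integral_eq_zero_iff_of_nonneg_ae hnn hintw.neg).mp h2
      filter_upwards [h3] with ω h
      have : -w 0 ω = 0 := h
      linarith
    · have h3 := (integral_eq_zero_iff_of_nonneg_ae hs hintw).mp hiw
      filter_upwards [h3] with ω h
      exact h
  -- w vanishes everywhere a.e.
  have hZmeas : MeasurableSet {ω | w 0 ω = 0} := (hmeasw 0) (measurableSet_singleton 0)
  have hallx : ∀ᵐ ω ∂P, ∀ x : ℝ, w x ω = 0 := by
    have hq : ∀ x : ℝ, ∀ᵐ ω ∂P, w x ω = 0 := by
      intro x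
      have h1 : P {ω | w 0 ω = 0} = 1 := by
        rw [← prob_compl_eq_zero_iff hZmeas]
        have : {ω | w 0 ω = 0}ᶜ = {ω | ¬ (w 0 ω = 0)} := rfl
        rw [this, ← ae_iff]
        exact hw0
      have h3 : {ω | w x ω = 0} = τ x ⁻¹' {ω | w 0 ω = 0} := by
        ext ω
        simp only [mem_preimage, mem_setOf_eq]
        rw [hw_shift 0 x ω, zero_add]
      have h4 : P {ω | w x ω = 0} = 1 := by
        rw [h3, (hset.mp_tau x).measure_preimage hZmeas.nullMeasurableSet]
        exact h1
      have hm : MeasurableSet {ω : Ω | w x ω = 0} := (hmeasw x) (measurableSet_singleton 0)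
      have h5 : P {ω | w x ω = 0}ᶜ = 0 := by
        rw [prob_compl_eq_zero_iff hm]
        exact h4
      rw [ae_iff]
      exact h5
    have hq2 : ∀ᵐ ω ∂P, ∀ q : ℚ, w q ω = 0 := ae_all_iff.mpr fun q => hq q
    filter_upwards [hq2] with ω h
    have heq : (fun x => w x ω) = fun _ => (0:ℝ) := by
      apply Continuous.ext_on hdense (hw_cont ω) continuous_const
      rintro _ ⟨q, rfl⟩
      exact h q
    exact fun x => congrFun heq x
  -- the two values of lambda agree
  have hlam : lam₁ = lam₂ := by
    have h1 : ∀ᵐ ω ∂P, ω ∈ Good ∧ ∀ x : ℝ, w x ω = 0 := hGoodae.and hallx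
    haveI : (ae P).NeBot := by
      apply Filter.NeBot.mono ?_ (le_refl (ae P))
      exact (ae_neBot).mpr (IsProbabilityMeasure.ne_zero P)
    obtain ⟨ω, hg, hw⟩ := h1.exists
    have e : (fun y => f₁ y ω) = fun y => f₂ y ω := by
      funext y
      have := hw y
      simp only [hwdef] at this
      linarith
    have e0 : f₁ 0 ω = f₂ 0 ω := congrFun e 0
    have o1 := (hg.2 0).1
    have o2 := (hg.2 0).2
    rw [e, e0] at o1
    exact o1.symm.trans o2
  refine ⟨hlam, ?_⟩
  filter_upwards [hallx] with ω h x
  have := h x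
  simp only [hwdef] at this
  linarith

theorem stationary_solution_unique_given_mean
    {Ω : Type} [MeasurableSpace Ω] (P : Measure Ω) (τ : ℝ → Ω → Ω)
    (a : ℝ → Ω → ℝ) (H : ℝ → ℝ → Ω → ℝ) (G_L G_U : ℝ → ℝ)
    (hset : HJSetting P τ a H G_L G_U)
    (lam₁ lam₂ : ℝ) (f₁ f₂ : ℝ → Ω → ℝ)
    (hf₁ : StatSol P τ a H lam₁ f₁) (hf₂ : StatSol P τ a H lam₂ f₂)
    (hmean : (∫ ω, f₁ 0 ω ∂P) = ∫ ω, f₂ 0 ω ∂P) :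
    lam₁ = lam₂ ∧ ∀ᵐ ω ∂P, ∀ x, f₁ x ω = f₂ x ω := by
  rcases le_total lam₂ lam₁ with h | h
  · exact key_lemma P τ a H G_L G_U hset lam₁ lam₂ f₁ f₂ hf₁ hf₂ hmean h
  · obtain ⟨h1, h2⟩ := key_lemma P τ a H G_L G_U hset lam₂ lam₁ f₂ f₁ hf₂ hf₁ hmean.symm h
    refine ⟨h1.symm, ?_⟩
    filter_upwards [h2] with ω hω x
    exact (hω x).symm
end

section
/- Let θ ∈ ℝ, λ ∈ ℝ and f ∈ S_st^λ with 𝔼[f(0,·)] = θ. Then ℙ( G_L(f(x,ω)) ≤ λ ≤ G_U(f(x,ω)) for all x ∈ ℝ ) = 1, and consequently G_L(θ) ≤ λ ≤ G_U(θ). -/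
open MeasureTheory Filter Set

/-- Blocking lemma: if the derivative is strictly positive whenever `f` hits level `b`
(at points `≥ y`), and `f y ≥ b`, then `f` stays `≥ b` on `[y, ∞)`. -/
lemma aux_block (f : ℝ → ℝ) (hf : ContDiff ℝ 1 f) (y b : ℝ) (hb : b ≤ f y)
    (hkey : ∀ x, y ≤ x → f x = b → 0 < deriv f x) : ∀ x, y ≤ x → b ≤ f x := by
  have hcont : Continuous f := hf.continuous
  intro z hz
  by_contra hfz
  push_neg at hfz
  have hyz : y < z := by
    rcases lt_or_eq_of_le hz with h | h
    · exact h
    · exfalso; rw [← h] at hfz; linarith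
  set S : Set ℝ := {x | x ∈ Icc y z ∧ b ≤ f x} with hS
  have hSc : IsClosed S := by
    have : S = Icc y z ∩ f ⁻¹' Ici b := by ext x; simp [hS, and_comm]
    rw [this]
    exact isClosed_Icc.inter (isClosed_Ici.preimage hcont)
  have hScomp : IsCompact S := (isCompact_Icc).of_isClosed_subset hSc (fun x hx => hx.1)
  have hSne : S.Nonempty := ⟨y, ⟨le_rfl, le_of_lt hyz⟩, hb⟩
  obtain ⟨hx3S⟩ : ∃ _ : sSup S ∈ S, True := ⟨hScomp.sSup_mem hSne, trivial⟩
  set x₃ := sSup S with hx3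
  have hx3y : y ≤ x₃ := hx3S.1.1
  have hx3z : x₃ ≤ z := hx3S.1.2
  have hbx3 : b ≤ f x₃ := hx3S.2
  have hx3z' : x₃ < z := by
    rcases lt_or_eq_of_le hx3z with h | h
    · exact h
    · exfalso; rw [h] at hbx3; linarith
  have hgt : ∀ x, x₃ < x → x ≤ z → f x < b := by
    intro x h1 h2
    by_contra hge
    push_neg at hge
    have : x ∈ S := ⟨⟨le_trans hx3y h1.le, h2⟩, hge⟩
    have := le_csSup hScomp.bddAbove this
    linarith
  have hfx3 : f x₃ = b := by
    rcases eq_or_lt_of_le hbx3 with h | h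
    · exact h.symm
    · exfalso
      have hev : ∀ᶠ x in nhds x₃, b < f x :=
        (hcont.continuousAt (x := x₃)).eventually_const_lt h
      have hev' : ∀ᶠ x in nhdsWithin x₃ (Ioi x₃), b < f x :=
        hev.filter_mono nhdsWithin_le_nhds
      have hmem : Ioc x₃ z ∈ nhdsWithin x₃ (Ioi x₃) := Ioc_mem_nhdsGT_of_mem ⟨le_rfl, hx3z'⟩
      have : ∀ᶠ x in nhdsWithin x₃ (Ioi x₃), False := by
        filter_upwards [hev', hmem] with x h1 h2
        exact absurd (hgt x h2.1 h2.2) (not_lt.2 h1.le)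
      exact this.exists.choose_spec
  have hder : 0 < deriv f x₃ := hkey x₃ hx3y hfx3
  have hdiff : HasDerivAt f (deriv f x₃) x₃ :=
    ((hf.differentiable one_ne_zero) x₃).hasDerivAt
  have hslope : Tendsto (slope f x₃) (nhdsWithin x₃ {x₃}ᶜ) (nhds (deriv f x₃)) :=
    hasDerivAt_iff_tendsto_slope.1 hdiff
  have hslope' : Tendsto (slope f x₃) (nhdsWithin x₃ (Ioi x₃)) (nhds (deriv f x₃)) :=
    hslope.mono_left (nhdsWithin_mono _ (fun x hx => ne_of_gt hx))
  have hev : ∀ᶠ x in nhdsWithin x₃ (Ioi x₃), 0 < slope f x₃ x :=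
    hslope'.eventually_const_lt hder
  have hmem : Ioc x₃ z ∈ nhdsWithin x₃ (Ioi x₃) := Ioc_mem_nhdsGT_of_mem ⟨le_rfl, hx3z'⟩
  have : ∀ᶠ x in nhdsWithin x₃ (Ioi x₃), False := by
    filter_upwards [hev, hmem, self_mem_nhdsWithin] with x h1 h2 h3
    have hx3x : (0:ℝ) < x - x₃ := by simp only [mem_Ioi] at h3; linarith
    have : 0 < f x - f x₃ := by
      have := mul_pos h1 hx3x
      rw [slope_def_field] at this
      field_simp at this
      nlinarith [this]
    have := hgt x h2.1 h2.2
    rw [hfx3] at *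
    linarith
  exact this.exists.choose_spec

lemma aux_grow (f : ℝ → ℝ) (hf : ContDiff ℝ 1 f) (δ y : ℝ)
    (h : ∀ x, y ≤ x → δ ≤ deriv f x) : ∀ x, y ≤ x → f y + δ * (x - y) ≤ f x := by
  intro x hx
  set g : ℝ → ℝ := fun t => f t - δ * t with hg
  have hdg : ∀ t, HasDerivAt g (deriv f t - δ) t := by
    intro t
    exact (((hf.differentiable one_ne_zero) t).hasDerivAt).sub ((hasDerivAt_id t).const_mul δ |>.congr_deriv (by ring))
  have hmono : MonotoneOn g (Ici y) := by
    apply monotoneOn_of_deriv_nonneg (convex_Ici y)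
    · exact (hf.continuous.sub (continuous_const.mul continuous_id)).continuousOn
    · intro t ht
      exact ((hdg t).differentiableAt).differentiableWithinAt
    · intro t ht
      rw [interior_Ici] at ht
      rw [(hdg t).deriv]
      have := h t (le_of_lt ht)
      linarith
  have := hmono (self_mem_Ici) (mem_Ici.2 hx) hx
  simp only [hg] at this
  nlinarith [this]

lemma aux_up (f : ℝ → ℝ) (hf : ContDiff ℝ 1 f) (c δ ℓ y : ℝ) (hδ : 0 < δ)
    (hcy : |f y| ≤ c) (hl1 : -c ≤ ℓ) (hl2 : ℓ ≤ c)
    (hband : ∀ x, -c ≤ f x → f x ≤ c → δ ≤ deriv f x) :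
    ∃ x₁, ∀ x, x₁ ≤ x → ℓ ≤ f x := by
  have hc0 : 0 ≤ c := le_trans (abs_nonneg _) hcy
  have hblock1 : ∀ x, y ≤ x → -c ≤ f x := by
    apply aux_block f hf y (-c) (neg_le_of_abs_le hcy)
    intro x hx hfx
    exact lt_of_lt_of_le hδ (hband x (hfx ▸ le_rfl) (by rw [hfx]; linarith))
  by_cases hreach : ∃ x₁, y ≤ x₁ ∧ c ≤ f x₁
  · obtain ⟨x₁, hx₁y, hx₁⟩ := hreach
    refine ⟨x₁, aux_block f hf x₁ ℓ (le_trans hl2 hx₁) ?_⟩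
    intro x hx hfx
    exact lt_of_lt_of_le hδ (hband x (hfx ▸ hl1) (hfx ▸ hl2))
  · exfalso
    push_neg at hreach
    have hlt : ∀ x, y ≤ x → f x < c := fun x hx => hreach x hx
    have hd : ∀ x, y ≤ x → δ ≤ deriv f x := fun x hx =>
      hband x (hblock1 x hx) (hlt x hx).le
    have hgrow := aux_grow f hf δ y hd
    have hx : y ≤ y + (c - f y) / δ + 1 := by
      have h1 : 0 ≤ (c - f y) / δ := div_nonneg (by nlinarith [le_of_abs_le hcy]) hδ.le
      linarith
    have := hgrow _ hx
    have h2 : f y + δ * ((y + (c - f y) / δ + 1) - y) = c + δ := by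
      field_simp
      ring
    rw [h2] at this
    have := hlt _ hx
    linarith

lemma aux_down (f : ℝ → ℝ) (hf : ContDiff ℝ 1 f) (M δ x₀ : ℝ) (hδ : 0 < δ)
    (hbd : ∀ x, |f x| ≤ M)
    (hkey : ∀ x, x₀ ≤ x → f x ≤ f x₀ → deriv f x ≤ -δ) : False := by
  have hM0 : 0 ≤ M := le_trans (abs_nonneg _) (hbd x₀)
  set g : ℝ → ℝ := fun x => -f x with hg
  have hgC : ContDiff ℝ 1 g := hf.neg
  have hdg : ∀ x, deriv g x = -deriv f x := fun x => deriv.neg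
  have hblock : ∀ x, x₀ ≤ x → -f x₀ ≤ g x := by
    apply aux_block g hgC x₀ (-f x₀) le_rfl
    intro x hx hgx
    have hfx : f x = f x₀ := by simp only [hg] at hgx; linarith
    rw [hdg]
    have := hkey x hx (hfx ▸ le_rfl)
    linarith
  have hd : ∀ x, x₀ ≤ x → δ ≤ deriv g x := by
    intro x hx
    rw [hdg]
    have hfx : f x ≤ f x₀ := by have := hblock x hx; simp only [hg] at this; linarith
    have := hkey x hx hfx
    linarith
  have hgrow := aux_grow g hgC δ x₀ hd
  have hx : x₀ ≤ x₀ + (2 * M + 1) / δ := by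
    have : 0 ≤ (2 * M + 1) / δ := by positivity
    linarith
  have := hgrow _ hx
  have h2 : g x₀ + δ * ((x₀ + (2 * M + 1) / δ) - x₀) = -f x₀ + (2 * M + 1) := by
    simp only [hg]
    field_simp
    ring
  rw [h2] at this
  have h3 := hbd x₀
  have h4 := hbd (x₀ + (2 * M + 1) / δ)
  simp only [hg] at this
  rw [abs_le] at h3 h4
  linarith [h3.1, h3.2, h4.1, h4.2, this]

lemma aux_GL (G_L : ℝ → ℝ) (hGm : ∀ p q : ℝ, |p| ≤ |q| → G_L p ≤ G_L q)
    (lam : ℝ) (f : ℝ → ℝ) (hf : ContDiff ℝ 1 f) (M : ℝ) (hbd : ∀ x, |f x| ≤ M)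
    (hder : ∀ x, lam < G_L (f x) → deriv f x ≤ lam - G_L (f x)) :
    ∀ x, G_L (f x) ≤ lam := by
  intro x₀
  by_contra hcon
  push_neg at hcon
  set δ := G_L (f x₀) - lam with hδdef
  have hδ : 0 < δ := by linarith
  rcases le_or_gt (f x₀) 0 with hneg | hpos
  · refine aux_down f hf M δ x₀ hδ hbd ?_
    intro x hx hfx
    have habs : |f x₀| ≤ |f x| := by
      rw [abs_of_nonpos hneg, abs_of_nonpos (le_trans hfx hneg)]
      linarith
    have h1 : G_L (f x₀) ≤ G_L (f x) := hGm _ _ habs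
    have := hder x (by linarith)
    linarith
  · set g : ℝ → ℝ := fun x => -f (2 * x₀ - x) with hg
    have hgC : ContDiff ℝ 1 g := by
      apply ContDiff.neg
      exact hf.comp (contDiff_const.sub contDiff_id)
    have hdg : ∀ x, deriv g x = deriv f (2 * x₀ - x) := by
      intro x
      have h1 : HasDerivAt (fun t : ℝ => 2 * x₀ - t) (-1) x := by
        simpa using (hasDerivAt_id x).const_sub (2 * x₀)
      have h2 : HasDerivAt f (deriv f (2 * x₀ - x)) (2 * x₀ - x) :=
        ((hf.differentiable one_ne_zero) _).hasDerivAt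
      have h3 := (h2.comp x h1).neg
      have : HasDerivAt g (-(deriv f (2 * x₀ - x) * (-1))) x := h3
      rw [this.deriv]; ring
    refine aux_down g hgC M δ x₀ hδ (fun x => by simp only [hg, abs_neg]; exact hbd _) ?_
    intro x hx hgx
    have hgx0 : g x₀ = -f x₀ := by simp [hg]; ring_nf
    have hfx : f x₀ ≤ f (2 * x₀ - x) := by
      rw [hgx0] at hgx; simp only [hg] at hgx; linarith
    have habs : |f x₀| ≤ |f (2 * x₀ - x)| := by
      rw [abs_of_pos hpos, abs_of_pos (lt_of_lt_of_le hpos hfx)]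
      exact hfx
    have h1 : G_L (f x₀) ≤ G_L (f (2 * x₀ - x)) := hGm _ _ habs
    have := hder (2 * x₀ - x) (by linarith)
    rw [hdg]
    linarith

lemma ae_mem_of_measure_eq_one {Ω : Type} [MeasurableSpace Ω] (P : Measure Ω)
    [IsProbabilityMeasure P] {A : Set Ω} (hA : MeasurableSet A) (h : P A = 1) :
    ∀ᵐ ω ∂P, ω ∈ A := by
  rw [ae_iff]
  have h2 : {ω | ¬ ω ∈ A} = Aᶜ := rfl
  rw [h2, measure_compl hA (measure_ne_top _ _), h, measure_univ, tsub_self]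

lemma ae_nmem_of_measure_eq_zero {Ω : Type} [MeasurableSpace Ω] (P : Measure Ω)
    {A : Set Ω} (h : P A = 0) : ∀ᵐ ω ∂P, ω ∉ A := by
  rw [ae_iff]
  simpa [not_not] using h

theorem stationary_solution_level_bounds
    {Ω : Type} [MeasurableSpace Ω] (P : Measure Ω) (τ : ℝ → Ω → Ω)
    (a : ℝ → Ω → ℝ) (H : ℝ → ℝ → Ω → ℝ) (G_L G_U : ℝ → ℝ)
    (hset : HJSetting P τ a H G_L G_U)
    (θ lam : ℝ) (f : ℝ → Ω → ℝ)
    (hf : StatSol P τ a H lam f) (hmean : (∫ ω, f 0 ω ∂P) = θ) :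
    (∀ᵐ ω ∂P, ∀ x, G_L (f x ω) ≤ lam ∧ lam ≤ G_U (f x ω)) ∧
    G_L θ ≤ lam ∧ lam ≤ G_U θ := by
  haveI hPr : IsProbabilityMeasure P := hset.prob
  obtain ⟨hmeasf, hstat, hC1, hae⟩ := hf
  have hcontf : ∀ ω, Continuous fun x => f x ω := fun ω => (hC1 ω).continuous
  have heL : ∀ p : ℝ, G_L |p| = G_L p := by
    intro p
    rcases abs_cases p with ⟨h1, _⟩ | ⟨h1, _⟩ <;> rw [h1]
    exact hset.GL_even p
  have heU : ∀ p : ℝ, G_U |p| = G_U p := by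
    intro p
    rcases abs_cases p with ⟨h1, _⟩ | ⟨h1, _⟩ <;> rw [h1]
    exact hset.GU_even p
  have habsL : ∀ p q : ℝ, |p| ≤ |q| → G_L p ≤ G_L q := by
    intro p q hpq
    rw [← heL p, ← heL q]
    exact hset.GL_mono (abs_nonneg p) (abs_nonneg q) hpq
  have habsU : ∀ p q : ℝ, |p| ≤ |q| → G_U p ≤ G_U q := by
    intro p q hpq
    rw [← heU p, ← heU q]
    exact hset.GU_mono (abs_nonneg p) (abs_nonneg q) hpq
  have hHlow : ∀ (p x : ℝ) ω, G_L p ≤ H p x ω := fun p x ω => by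
    rw [hset.H_stat]; exact hset.H_lower p _
  have hHup : ∀ (p x : ℝ) ω, H p x ω ≤ G_U p := fun p x ω => by
    rw [hset.H_stat]; exact hset.H_upper p _
  have hshift : ∀ (x y : ℝ) ω, f y (τ x ω) = f (y + x) ω := by
    intro x y ω
    rw [hstat y (τ x ω), ← hset.tau_add, ← hstat]
  have measfx : ∀ x : ℝ, Measurable fun ω => f x ω :=
    fun x => hmeasf.comp measurable_prodMk_left
  have E1 : ∀ᵐ ω ∂P, ∀ x, G_L (f x ω) ≤ lam := by
    filter_upwards [hae] with ω hω
    obtain ⟨⟨M, hM⟩, heq⟩ := hω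
    refine aux_GL G_L habsL lam (fun x => f x ω) (hC1 ω) M hM ?_
    intro x hx
    have heqx := heq x
    have hH := hHlow (f x ω) x ω
    have ha := hset.a_pos x ω
    have ha1 := hset.a_le_one x ω
    set D := deriv (fun y => f y ω) x with hD
    have h1 : a x ω * D ≤ lam - G_L (f x ω) := by linarith
    have hDneg : D ≤ 0 := by
      by_contra hDpos
      push_neg at hDpos
      nlinarith [mul_pos ha hDpos]
    nlinarith [mul_nonneg (neg_nonneg.2 hDneg) (sub_nonneg.2 ha1)]
  obtain ⟨R₀, hR₀⟩ : ∃ R₀, ∀ p, R₀ ≤ p → lam < G_L p := by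
    have h2 := hset.GL_coercive.eventually_gt_atTop lam
    rw [eventually_atTop] at h2
    obtain ⟨R₀, hR₀⟩ := h2
    exact ⟨R₀, hR₀⟩
  set R := max R₀ 0 with hRdef
  have hRbound : ∀ p, G_L p ≤ lam → |p| ≤ R := by
    intro p hp
    by_contra hcon
    push_neg at hcon
    have h1 : lam < G_L |p| := hR₀ _ (le_of_lt (lt_of_le_of_lt (le_max_left _ _) hcon))
    rw [heL] at h1
    linarith
  set B : Set Ω := {ω | ∃ y : ℝ, G_U (f y ω) < lam} with hBdef
  have hBq : B = ⋃ q : ℚ, {ω | G_U (f (q : ℝ) ω) < lam} := by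
    ext ω
    simp only [hBdef, mem_setOf_eq, mem_iUnion]
    constructor
    · rintro ⟨y, hy⟩
      have hopen : IsOpen {x : ℝ | G_U (f x ω) < lam} :=
        isOpen_lt (hset.GU_cont.comp (hcontf ω)) continuous_const
      obtain ⟨q, hq⟩ := (Rat.denseRange_cast (𝕜 := ℝ)).exists_mem_open hopen ⟨y, hy⟩
      exact ⟨q, hq⟩
    · rintro ⟨q, hq⟩
      exact ⟨q, hq⟩
  have measB : MeasurableSet B := by
    rw [hBq]
    exact MeasurableSet.iUnion fun q =>
      measurableSet_lt (hset.GU_cont.measurable.comp (measfx _)) measurable_const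
  have invB : ∀ x, τ x ⁻¹' B = B := by
    intro x
    ext ω
    simp only [hBdef, mem_preimage, mem_setOf_eq]
    constructor
    · rintro ⟨y, hy⟩
      rw [hshift] at hy
      exact ⟨y + x, hy⟩
    · rintro ⟨y, hy⟩
      refine ⟨y - x, ?_⟩
      rw [hshift, sub_add_cancel]
      exact hy
  have hPB0 : P B = 0 := by
    rcases hset.ergodic B measB invB with h | h
    · exact h
    exfalso
    have hBae : ∀ᵐ ω ∂P, ω ∈ B := ae_mem_of_measure_eq_one P measB h
    obtain ⟨ω₀, y₀, hp₀⟩ : ∃ ω y, G_U (f y ω) < lam := by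
      obtain ⟨ω₀, hω₀⟩ := nonempty_of_measure_ne_zero
        (show P B ≠ 0 by rw [h]; exact one_ne_zero)
      exact ⟨ω₀, hω₀⟩
    obtain ⟨ℓ, hℓpos, hℓ⟩ : ∃ ℓ, 0 < ℓ ∧ G_U ℓ < lam := by
      have h0 : G_U |f y₀ ω₀| < lam := by rw [heU]; exact hp₀
      have hopen : IsOpen {x : ℝ | G_U x < lam} := isOpen_lt hset.GU_cont continuous_const
      obtain ⟨ε, hε, hball⟩ := Metric.isOpen_iff.1 hopen _ h0
      refine ⟨|f y₀ ω₀| + ε / 2, by positivity, hball ?_⟩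
      rw [Metric.mem_ball, Real.dist_eq]
      have he : |f y₀ ω₀| + ε / 2 - |f y₀ ω₀| = ε / 2 := by ring
      rw [he, abs_of_nonneg (by linarith)]
      linarith
    have hfwd : ∀ᵐ ω ∂P, ∃ N : ℕ, ∀ n : ℕ, N ≤ n → ℓ ≤ f (n : ℝ) ω := by
      filter_upwards [hae, hBae] with ω hω hωB
      obtain ⟨⟨M, hM⟩, heq⟩ := hω
      obtain ⟨y, hy⟩ := hωB
      set c := max |f y ω| ℓ with hc
      have hc0 : 0 ≤ c := le_trans (abs_nonneg _) (le_max_left _ _)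
      have hcU : G_U c < lam := by
        rcases max_cases |f y ω| ℓ with ⟨h1, _⟩ | ⟨h1, _⟩ <;> rw [hc, h1]
        · rw [heU]; exact hy
        · exact hℓ
      set δ := lam - G_U c with hδdef
      have hδ : 0 < δ := by linarith
      have hkey : ∀ x, |f x ω| ≤ c → δ ≤ deriv (fun y => f y ω) x := by
        intro x h1
        have habs : |f x ω| ≤ |c| := by rwa [abs_of_nonneg hc0]
        have hGU : G_U (f x ω) ≤ G_U c := habsU _ _ habs
        have hH : H (f x ω) x ω ≤ G_U c := le_trans (hHup _ _ _) hGU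
        have heqx := heq x
        have ha := hset.a_pos x ω
        have ha1 := hset.a_le_one x ω
        set D := deriv (fun y => f y ω) x with hD
        have h3 : δ ≤ a x ω * D := by linarith
        have hD0 : 0 ≤ D := by
          by_contra hDneg
          push_neg at hDneg
          nlinarith [mul_pos ha (neg_pos.2 hDneg)]
        nlinarith [mul_nonneg hD0 (sub_nonneg.2 ha1)]
      have hband : ∀ x, -c ≤ f x ω → f x ω ≤ c → δ ≤ deriv (fun y => f y ω) x :=
        fun x h1 h2 => hkey x (abs_le.2 ⟨h1, h2⟩)
      obtain ⟨x₁, hx₁⟩ := aux_up (fun x => f x ω) (hC1 ω) c δ ℓ y hδ (le_max_left _ _)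
        (by linarith [le_max_right |f y ω| ℓ]) (le_max_right _ _) hband
      obtain ⟨N, hN⟩ := exists_nat_ge x₁
      exact ⟨N, fun n hn => hx₁ _ (le_trans hN (Nat.cast_le.2 hn))⟩
    have hbwd : ∀ᵐ ω ∂P, ∃ N : ℕ, ∀ n : ℕ, N ≤ n → f (-(n : ℝ)) ω ≤ -ℓ := by
      filter_upwards [hae, hBae] with ω hω hωB
      obtain ⟨⟨M, hM⟩, heq⟩ := hω
      obtain ⟨y, hy⟩ := hωB
      set c := max |f y ω| ℓ with hc
      have hc0 : 0 ≤ c := le_trans (abs_nonneg _) (le_max_left _ _)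
      have hcU : G_U c < lam := by
        rcases max_cases |f y ω| ℓ with ⟨h1, _⟩ | ⟨h1, _⟩ <;> rw [hc, h1]
        · rw [heU]; exact hy
        · exact hℓ
      set δ := lam - G_U c with hδdef
      have hδ : 0 < δ := by linarith
      have hkey : ∀ x, |f x ω| ≤ c → δ ≤ deriv (fun y => f y ω) x := by
        intro x h1
        have habs : |f x ω| ≤ |c| := by rwa [abs_of_nonneg hc0]
        have hGU : G_U (f x ω) ≤ G_U c := habsU _ _ habs
        have hH : H (f x ω) x ω ≤ G_U c := le_trans (hHup _ _ _) hGU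
        have heqx := heq x
        have ha := hset.a_pos x ω
        have ha1 := hset.a_le_one x ω
        set D := deriv (fun y => f y ω) x with hD
        have h3 : δ ≤ a x ω * D := by linarith
        have hD0 : 0 ≤ D := by
          by_contra hDneg
          push_neg at hDneg
          nlinarith [mul_pos ha (neg_pos.2 hDneg)]
        nlinarith [mul_nonneg hD0 (sub_nonneg.2 ha1)]
      set g : ℝ → ℝ := fun x => -f (-x) ω with hg
      have hgC : ContDiff ℝ 1 g := ((hC1 ω).comp contDiff_neg).neg
      have hdg : ∀ x, deriv g x = deriv (fun y => f y ω) (-x) := by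
        intro x
        have h1 : HasDerivAt (fun t : ℝ => -t) (-1) x := (hasDerivAt_id x).neg
        have h2 : HasDerivAt (fun y => f y ω) (deriv (fun y => f y ω) (-x)) (-x) :=
          (((hC1 ω).differentiable one_ne_zero) _).hasDerivAt
        have h3 : HasDerivAt g (-(deriv (fun y => f y ω) (-x) * (-1))) x := (h2.comp x h1).neg
        rw [h3.deriv]; ring
      have hband : ∀ x, -c ≤ g x → g x ≤ c → δ ≤ deriv g x := by
        intro x h1 h2
        rw [hdg]
        refine hkey (-x) ?_
        have h4 : |g x| ≤ c := abs_le.2 ⟨h1, h2⟩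
        simpa only [hg, abs_neg] using h4
      have hgy : |g (-y)| ≤ c := by
        simp only [hg, neg_neg, abs_neg]
        exact le_max_left _ _
      obtain ⟨x₁, hx₁⟩ := aux_up g hgC c δ ℓ (-y) hδ hgy
        (by linarith [le_max_right |f y ω| ℓ]) (le_max_right _ _) hband
      obtain ⟨N, hN⟩ := exists_nat_ge x₁
      refine ⟨N, fun n hn => ?_⟩
      have h5 := hx₁ (n : ℝ) (le_trans hN (Nat.cast_le.2 hn))
      simp only [hg] at h5
      linarith
    set D : Set Ω := {ω | ℓ ≤ f 0 ω} with hDdef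
    have measD : MeasurableSet D := measurableSet_le measurable_const (measfx 0)
    have half_lt : ∀ (Cs : ℕ → Set Ω), (∀ N, MeasurableSet (Cs N)) → Monotone Cs →
        (∀ᵐ ω ∂P, ∃ N, ω ∈ Cs N) → ∃ N, (1 : ENNReal) / 2 < P (Cs N) := by
      intro Cs hmeas hmono haeC
      have h1 : ∀ᵐ ω ∂P, ω ∈ ⋃ N, Cs N := by
        filter_upwards [haeC] with ω hω
        obtain ⟨N, hN⟩ := hω
        exact mem_iUnion.2 ⟨N, hN⟩
      have h2 : P (⋃ N, Cs N) = 1 := by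
        rw [← prob_compl_eq_zero_iff (MeasurableSet.iUnion hmeas)]
        exact ae_iff.1 h1
      have h3 : (1 : ENNReal) / 2 < ⨆ N, P (Cs N) := by
        rw [← hmono.directed_le.measure_iUnion, h2]
        exact ENNReal.half_lt_self one_ne_zero ENNReal.one_ne_top
      exact lt_iSup_iff.1 h3
    obtain ⟨N, hN⟩ := half_lt (fun N => {ω | ∀ n : ℕ, N ≤ n → ℓ ≤ f (n : ℝ) ω})
      (fun N => by
        show MeasurableSet {ω | ∀ n : ℕ, N ≤ n → ℓ ≤ f (n : ℝ) ω}
        have he : {ω | ∀ n : ℕ, N ≤ n → ℓ ≤ f (n : ℝ) ω} =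
            ⋂ (n : ℕ), ⋂ (_ : N ≤ n), {ω | ℓ ≤ f (n : ℝ) ω} := by
          ext ω; simp
        rw [he]
        exact MeasurableSet.iInter fun n => MeasurableSet.iInter fun _ =>
          measurableSet_le measurable_const (measfx _))
      (fun N M hNM ω hω n hn => hω n (le_trans hNM hn)) hfwd
    obtain ⟨N', hN'⟩ := half_lt (fun N => {ω | ∀ n : ℕ, N ≤ n → f (-(n : ℝ)) ω ≤ -ℓ})
      (fun N => by
        show MeasurableSet {ω | ∀ n : ℕ, N ≤ n → f (-(n : ℝ)) ω ≤ -ℓ}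
        have he : {ω | ∀ n : ℕ, N ≤ n → f (-(n : ℝ)) ω ≤ -ℓ} =
            ⋂ (n : ℕ), ⋂ (_ : N ≤ n), {ω | f (-(n : ℝ)) ω ≤ -ℓ} := by
          ext ω; simp
        rw [he]
        exact MeasurableSet.iInter fun n => MeasurableSet.iInter fun _ =>
          measurableSet_le (measfx _) measurable_const)
      (fun N M hNM ω hω n hn => hω n (le_trans hNM hn)) hbwd
    have hPD : (1 : ENNReal) / 2 < P D := by
      have hsub : {ω | ∀ n : ℕ, N ≤ n → ℓ ≤ f (n : ℝ) ω} ⊆ τ (N : ℝ) ⁻¹' D := by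
        intro ω hω
        simp only [hDdef, mem_preimage, mem_setOf_eq]
        rw [hshift, zero_add]
        exact hω N le_rfl
      calc (1 : ENNReal) / 2 < P {ω | ∀ n : ℕ, N ≤ n → ℓ ≤ f (n : ℝ) ω} := hN
        _ ≤ P (τ (N : ℝ) ⁻¹' D) := measure_mono hsub
        _ = P D := (hset.mp_tau _).measure_preimage measD.nullMeasurableSet
    have hPDc : (1 : ENNReal) / 2 < P Dᶜ := by
      have hsub : {ω | ∀ n : ℕ, N' ≤ n → f (-(n : ℝ)) ω ≤ -ℓ} ⊆ τ (-(N' : ℝ)) ⁻¹' Dᶜ := by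
        intro ω hω
        simp only [hDdef, mem_preimage, mem_compl_iff, mem_setOf_eq, not_le]
        rw [hshift, zero_add]
        have := hω N' le_rfl
        linarith
      calc (1 : ENNReal) / 2 < P {ω | ∀ n : ℕ, N' ≤ n → f (-(n : ℝ)) ω ≤ -ℓ} := hN'
        _ ≤ P (τ (-(N' : ℝ)) ⁻¹' Dᶜ) := measure_mono hsub
        _ = P Dᶜ := (hset.mp_tau _).measure_preimage measD.compl.nullMeasurableSet
    have hsum : P D + P Dᶜ = 1 := prob_add_prob_compl measD
    have hcontra : (1 : ENNReal) < 1 := by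
      calc (1 : ENNReal) = 1 / 2 + 1 / 2 := (ENNReal.add_halves 1).symm
        _ < P D + P Dᶜ := ENNReal.add_lt_add hPD hPDc
        _ = 1 := hsum
    exact lt_irrefl _ hcontra
  have EU : ∀ᵐ ω ∂P, ∀ x, lam ≤ G_U (f x ω) := by
    filter_upwards [ae_nmem_of_measure_eq_zero P hPB0] with ω hω x
    by_contra hcon
    push_neg at hcon
    exact hω ⟨x, hcon⟩
  have hint : Integrable (fun ω => f 0 ω) P := by
    refine Integrable.mono' (integrable_const R) (measfx 0).aestronglyMeasurable ?_
    filter_upwards [E1] with ω hω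
    rw [Real.norm_eq_abs]
    exact hRbound _ (hω 0)
  refine ⟨?_, ?_, ?_⟩
  · filter_upwards [E1, EU] with ω h1 h2 x
    exact ⟨h1 x, h2 x⟩
  · haveI : (MeasureTheory.ae P).NeBot := ae_neBot.2 (IsProbabilityMeasure.ne_zero P)
    set SL : Set ℝ := {p | 0 ≤ p ∧ G_L p ≤ lam} with hSL
    have hSLne : SL.Nonempty := by
      obtain ⟨ω, hω⟩ := E1.exists
      exact ⟨|f 0 ω|, abs_nonneg _, by rw [heL]; exact hω 0⟩
    have hSLbdd : BddAbove SL := ⟨R, fun p hp => by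
      have h2 := hRbound p hp.2
      rwa [abs_of_nonneg hp.1] at h2⟩
    have hSLsub : SL ⊆ Icc 0 R := fun p hp => ⟨hp.1, by
      have h2 := hRbound p hp.2
      rwa [abs_of_nonneg hp.1] at h2⟩
    have hSLclosed : IsClosed SL := by
      have he : SL = Ici 0 ∩ G_L ⁻¹' Iic lam := by
        ext p
        simp [hSL, mem_Ici, mem_preimage, mem_Iic]
      rw [he]
      exact isClosed_Ici.inter (isClosed_Iic.preimage hset.GL_cont)
    have hSLcomp : IsCompact SL := isCompact_Icc.of_isClosed_subset hSLclosed hSLsub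
    set s := sSup SL with hs
    have hsmem : s ∈ SL := hSLcomp.sSup_mem hSLne
    have haef : ∀ᵐ ω ∂P, -s ≤ f 0 ω ∧ f 0 ω ≤ s := by
      filter_upwards [E1] with ω hω
      have hm : |f 0 ω| ∈ SL := ⟨abs_nonneg _, by rw [heL]; exact hω 0⟩
      exact abs_le.1 (le_csSup hSLbdd hm)
    have hup : θ ≤ s := by
      rw [← hmean]
      calc ∫ ω, f 0 ω ∂P ≤ ∫ _, s ∂P :=
            integral_mono_ae hint (integrable_const s) (haef.mono fun ω hω => hω.2)
        _ = s := by simp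
    have hlo : -s ≤ θ := by
      rw [← hmean]
      calc -s = ∫ _, (-s) ∂P := by simp
        _ ≤ ∫ ω, f 0 ω ∂P :=
            integral_mono_ae (integrable_const _) hint (haef.mono fun ω hω => hω.1)
    calc G_L θ ≤ G_L s := habsL _ _ (by
        rw [abs_of_nonneg hsmem.1]
        exact abs_le.2 ⟨hlo, hup⟩)
      _ ≤ lam := hsmem.2
  · by_contra hcon
    push_neg at hcon
    have hθabs := abs_nonneg θ
    obtain ⟨ℓ', hθℓ', hℓ'⟩ : ∃ ℓ', |θ| < ℓ' ∧ G_U ℓ' < lam := by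
      have h0 : G_U |θ| < lam := by rw [heU]; exact hcon
      have hopen : IsOpen {x : ℝ | G_U x < lam} := isOpen_lt hset.GU_cont continuous_const
      obtain ⟨ε, hε, hball⟩ := Metric.isOpen_iff.1 hopen _ h0
      refine ⟨|θ| + ε / 2, by linarith, hball ?_⟩
      rw [Metric.mem_ball, Real.dist_eq]
      have he : |θ| + ε / 2 - |θ| = ε / 2 := by ring
      rw [he, abs_of_nonneg (by linarith)]
      linarith
    have hℓ'pos : 0 < ℓ' := lt_of_le_of_lt hθabs hθℓ'
    have hfar : ∀ᵐ ω ∂P, ∀ x, ℓ' ≤ |f x ω| := by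
      filter_upwards [EU] with ω hω x
      by_contra hc2
      push_neg at hc2
      have h2 : G_U (f x ω) ≤ G_U ℓ' := habsU _ _ (by
        rw [abs_of_nonneg hℓ'pos.le]
        exact hc2.le)
      linarith [hω x]
    set A : Set Ω := {ω | ∀ y : ℝ, 0 ≤ f y ω} with hA
    have hAq : A = ⋂ q : ℚ, {ω | 0 ≤ f (q : ℝ) ω} := by
      ext ω
      simp only [hA, mem_setOf_eq, mem_iInter]
      constructor
      · intro h2 q
        exact h2 q
      · intro h2 y
        by_contra hc2
        push_neg at hc2
        have hopen : IsOpen {x : ℝ | f x ω < 0} := isOpen_lt (hcontf ω) continuous_const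
        obtain ⟨q, hq⟩ := (Rat.denseRange_cast (𝕜 := ℝ)).exists_mem_open hopen ⟨y, hc2⟩
        exact absurd (h2 q) (not_le.2 hq)
    have measA : MeasurableSet A := by
      rw [hAq]
      exact MeasurableSet.iInter fun q => measurableSet_le measurable_const (measfx _)
    have invA : ∀ x, τ x ⁻¹' A = A := by
      intro x
      ext ω
      simp only [hA, mem_preimage, mem_setOf_eq]
      constructor
      · intro hy y
        have h2 := hy (y - x)
        rwa [hshift, sub_add_cancel] at h2
      · intro hy y
        rw [hshift]
        exact hy _
    rcases hset.ergodic A measA invA with h0 | h1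
    · have haef : ∀ᵐ ω ∂P, f 0 ω ≤ -ℓ' := by
        filter_upwards [ae_nmem_of_measure_eq_zero P h0, hfar] with ω hωA hωfar
        simp only [hA, mem_setOf_eq, not_forall, not_le] at hωA
        obtain ⟨y, hy⟩ := hωA
        have hneg : f 0 ω < 0 := by
          by_contra hc2
          push_neg at hc2
          have hsub := intermediate_value_uIcc (a := y) (b := (0:ℝ))
            (f := fun x => f x ω) (hcontf ω).continuousOn
          have h0mem : (0 : ℝ) ∈ uIcc (f y ω) (f 0 ω) := by
            rw [mem_uIcc]
            left
            exact ⟨hy.le, hc2⟩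
          obtain ⟨z, _, hz⟩ := hsub h0mem
          have hz' : f z ω = 0 := hz
          have h3 := hωfar z
          rw [hz', abs_zero] at h3
          linarith
        have h3 := hωfar 0
        rw [abs_of_neg hneg] at h3
        linarith
      have hθle : θ ≤ -ℓ' := by
        rw [← hmean]
        calc ∫ ω, f 0 ω ∂P ≤ ∫ _, (-ℓ') ∂P :=
              integral_mono_ae hint (integrable_const _) haef
          _ = -ℓ' := by simp
      have h4 : θ < θ :=
        calc θ ≤ -ℓ' := hθle
          _ < -|θ| := by linarith
          _ ≤ θ := neg_abs_le θ
      exact lt_irrefl _ h4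
    · have haef : ∀ᵐ ω ∂P, ℓ' ≤ f 0 ω := by
        filter_upwards [ae_mem_of_measure_eq_one P measA h1, hfar] with ω hωA hωfar
        have h3 := hωfar 0
        rwa [abs_of_nonneg (hωA 0)] at h3
      have hθge : ℓ' ≤ θ := by
        rw [← hmean]
        calc ℓ' = ∫ _, ℓ' ∂P := by simp
          _ ≤ ∫ ω, f 0 ω ∂P := integral_mono_ae (integrable_const _) hint haef
      have h4 : θ < θ := lt_of_lt_of_le (lt_of_le_of_lt (le_abs_self θ) hθℓ') hθge
      exact lt_irrefl _ h4
end

section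
/- Let θ₁, θ₂ ∈ E, λ₁, λ₂ ∈ ℝ, f₁ ∈ S_st^{λ₁} with 𝔼[f₁(0,·)] = θ₁ and f₂ ∈ S_st^{λ₂} with 𝔼[f₂(0,·)] = θ₂. Set R = max{ R̄^{G_U(θ₁)}, R̄^{G_U(θ₂)} }, where R̄^λ := max{p ≥ 0 : G_L(p) ≤ λ}, and let K_R be the Lipschitz constant from (H3) for this R. Then |λ₁ − λ₂| ≤ K_R |θ₁ − θ₂|. -/
open MeasureTheory Filter Set
open Topology

/-- `R̄^lam = max { p ≥ 0 : G_L p ≤ lam }`. -/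
noncomputable def Rbar (G_L : ℝ → ℝ) (lam : ℝ) : ℝ :=
  sSup {p : ℝ | 0 ≤ p ∧ G_L p ≤ lam}


lemma div_trick_neg {A v c : ℝ} (hA0 : 0 < A) (hA1 : A ≤ 1) (hc : 0 < c)
    (h : A * v ≤ -c) : v ≤ -c := by
  by_contra hcon
  push_neg at hcon
  nlinarith [mul_pos hA0 (by linarith : (0:ℝ) < v + c), mul_nonneg (by linarith : (0:ℝ) ≤ 1 - A) hc.le]

lemma div_trick_pos {A v c : ℝ} (hA0 : 0 < A) (hA1 : A ≤ 1) (hc : 0 < c)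
    (h : c ≤ A * v) : c ≤ v := by
  have := div_trick_neg hA0 hA1 hc (v := -v) (by linarith [h])
  linarith

lemma cross_lemma {f : ℝ → ℝ} (hfc : Continuous f) (hfd : ∀ t, DifferentiableAt ℝ f t)
    {x y c : ℝ} (hxy : x ≤ y) (hx : c < f x) (hy : f y < c) :
    ∃ z, f z = c ∧ deriv f z ≤ 0 := by
  set S : Set ℝ := Icc x y ∩ f ⁻¹' (Ici c) with hS
  have hSclosed : IsClosed S := isClosed_Icc.inter (isClosed_Ici.preimage hfc)
  have hSne : S.Nonempty := ⟨x, ⟨le_rfl, hxy⟩, hx.le⟩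
  have hSbdd : BddAbove S := (bddAbove_Icc (a := x) (b := y)).mono inter_subset_left
  set z := sSup S with hz
  have hzS : z ∈ S := hSclosed.csSup_mem hSne hSbdd
  have hxz : x ≤ z := hzS.1.1
  have hzy : z ≤ y := hzS.1.2
  have hzc : c ≤ f z := hzS.2
  have hzy' : z < y := hzy.lt_of_ne (fun h => (not_le.mpr hy) (h ▸ hzc))
  have hlt : ∀ t, z < t → t ≤ y → f t < c := by
    intro t hzt hty
    by_contra hcon
    push_neg at hcon
    have : t ∈ S := ⟨⟨hxz.trans hzt.le, hty⟩, hcon⟩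
    exact absurd (le_csSup hSbdd this) (not_le.mpr hzt)
  have hIoc : Ioc z y ∈ 𝓝[>] z := Ioc_mem_nhdsGT_of_mem ⟨le_rfl, hzy'⟩
  have hfz : f z = c := by
    have htt : Tendsto f (𝓝[>] z) (𝓝 (f z)) := (hfc.tendsto z).mono_left nhdsWithin_le_nhds
    have hev : ∀ᶠ t in 𝓝[>] z, f t ≤ c := by
      filter_upwards [hIoc] with t ht
      exact (hlt t ht.1 ht.2).le
    exact le_antisymm (le_of_tendsto htt hev) hzc
  refine ⟨z, hfz, ?_⟩
  have hd : Tendsto (slope f z) (𝓝[≠] z) (𝓝 (deriv f z)) :=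
    hasDerivAt_iff_tendsto_slope.mp (hfd z).hasDerivAt
  have hd' : Tendsto (slope f z) (𝓝[>] z) (𝓝 (deriv f z)) :=
    hd.mono_left (nhdsWithin_mono z (fun t ht => ne_of_gt ht))
  refine le_of_tendsto hd' ?_
  filter_upwards [hIoc] with t ht
  rw [slope_def_field]
  apply div_nonpos_of_nonpos_of_nonneg
  · rw [hfz]; linarith [hlt t ht.1 ht.2]
  · linarith [ht.1]

lemma escape_lemma {f : ℝ → ℝ} (hfc : Continuous f) (hfd : ∀ t, DifferentiableAt ℝ f t)
    {α β δ : ℝ} (hδ : 0 < δ) (hαβ : α ≤ β)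
    (hstrip : ∀ t, f t ∈ Icc α β → δ ≤ deriv f t)
    {x₀ : ℝ} (hx : α ≤ f x₀) : ∃ y, β < f y := by
  by_contra hcon
  push_neg at hcon
  -- step 1 : find a point strictly above α
  obtain ⟨x₁, hx₁⟩ : ∃ x₁, α < f x₁ := by
    rcases lt_or_eq_of_le hx with h | h
    · exact ⟨x₀, h⟩
    · -- f x₀ = α, derivative ≥ δ > 0 there
      have hder : δ ≤ deriv f x₀ := hstrip x₀ ⟨hx, hcon x₀⟩
      have hd : Tendsto (slope f x₀) (𝓝[>] x₀) (𝓝 (deriv f x₀)) :=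
        (hasDerivAt_iff_tendsto_slope.mp (hfd x₀).hasDerivAt).mono_left
          (nhdsWithin_mono x₀ (fun t ht => ne_of_gt ht))
      have hev : ∀ᶠ t in 𝓝[>] x₀, 0 < slope f x₀ t :=
        hd.eventually (eventually_gt_nhds (by linarith))
      obtain ⟨t, hts, htx⟩ := (hev.and self_mem_nhdsWithin).exists
      refine ⟨t, ?_⟩
      rw [slope_def_field] at hts
      have h1 : 0 < t - x₀ := by simpa [sub_pos] using htx
      have h2 : 0 < f t - f x₀ := by
        by_contra hcc
        push_neg at hcc
        exact absurd hts (not_lt.mpr (div_nonpos_of_nonpos_of_nonneg (by linarith) h1.le))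
      linarith [h ▸ h2]
  -- step 2 : f stays strictly above α to the right of x₁
  have hgt : ∀ t, x₁ ≤ t → α < f t := by
    intro t ht
    by_contra hcc
    push_neg at hcc
    obtain ⟨z, hz1, hz2⟩ := cross_lemma hfc hfd ht (c := (α + f x₁) / 2)
      (by linarith) (by linarith)
    have : δ ≤ deriv f z := hstrip z ⟨by linarith [hz1], by linarith [hcon x₁, hz1]⟩
    linarith
  -- step 3 : mean value / monotonicity
  set g : ℝ → ℝ := fun t => f t - δ * t with hg
  have hgd : ∀ t, HasDerivAt g (deriv f t - δ) t := by
    intro t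
    have h1 : HasDerivAt (fun t : ℝ => δ * t) (δ * 1) t := (hasDerivAt_id t).const_mul δ
    have h2 := (hfd t).hasDerivAt.sub h1
    rw [mul_one] at h2
    exact h2
  have hmono : MonotoneOn g (Ici x₁) := by
    refine monotoneOn_of_deriv_nonneg (convex_Ici x₁) ?_ ?_ ?_
    · exact (Continuous.sub hfc (continuous_const.mul continuous_id)).continuousOn
    · intro t _
      exact (hgd t).differentiableAt.differentiableWithinAt
    · intro t ht
      rw [(hgd t).deriv]
      have hmem : f t ∈ Icc α β := ⟨(hgt t (le_of_lt (by simpa using ht))).le, hcon t⟩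
      linarith [hstrip t hmem]
  set y := x₁ + (β - f x₁) / δ + 1 with hy
  have hyge : x₁ ≤ y := by
    have h0 : 0 ≤ (β - f x₁) / δ := div_nonneg (by linarith [hcon x₁]) hδ.le
    rw [hy]; linarith
  have := hmono (self_mem_Ici) (mem_Ici.mpr hyge) hyge
  simp only [hg] at this
  have hfy : f x₁ + δ * (y - x₁) ≤ f y := by nlinarith
  have : β < f y := by
    have hδy : δ * (y - x₁) = (β - f x₁) + δ := by
      rw [hy]
      have h' : δ * ((β - f x₁) / δ) = β - f x₁ := mul_div_cancel₀ _ hδ.ne'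
      linear_combination h'
    nlinarith
  exact absurd this (not_lt.mpr (hcon y))

lemma dich_lemma {Ω : Type} [MeasurableSpace Ω] (P : Measure Ω) [IsProbabilityMeasure P]
    (τ : ℝ → Ω → Ω)
    (mp : ∀ x, MeasurePreserving (τ x) P P)
    (h0 : ∀ ω, τ 0 ω = ω)
    (hadd : ∀ x y ω, τ (x + y) ω = τ x (τ y ω))
    (herg : ∀ A : Set Ω, MeasurableSet A → (∀ x, τ x ⁻¹' A = A) → P A = 0 ∨ P A = 1)
    (F : ℝ → Ω → ℝ) (hFm : Measurable fun ω => F 0 ω)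
    (hFs : ∀ x ω, F x ω = F 0 (τ x ω))
    (hFc : ∀ ω, Continuous fun x => F x ω)
    (θ : ℝ)
    (hfwd : ∀ᵐ ω ∂P, ∀ x y : ℝ, x ≤ y → θ ≤ F x ω → θ ≤ F y ω) :
    (∀ᵐ ω ∂P, ∀ x : ℝ, θ ≤ F x ω) ∨ (∀ᵐ ω ∂P, ∀ x : ℝ, F x ω ≤ θ) := by
  classical
  set A : Set Ω := {ω | θ ≤ F 0 ω} with hA
  have hAm : MeasurableSet A := measurableSet_le measurable_const hFm
  have hpre : ∀ x : ℝ, τ x ⁻¹' A = {ω | θ ≤ F x ω} := by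
    intro x; ext ω; simp [hA, Set.mem_preimage, hFs x ω]
  -- the invariant set B
  set B : Set Ω := {ω | ∀ x : ℝ, θ ≤ F x ω} with hB
  have hdense : ∀ ω, (∀ q : ℚ, θ ≤ F (q : ℝ) ω) → ∀ x : ℝ, θ ≤ F x ω := by
    intro ω hq x
    have hcl : IsClosed {x : ℝ | θ ≤ F x ω} := isClosed_le continuous_const (hFc ω)
    have hsub : Set.range ((↑) : ℚ → ℝ) ⊆ {x : ℝ | θ ≤ F x ω} := by
      rintro _ ⟨q, rfl⟩; exact hq q
    have := hcl.closure_subset_iff.mpr hsub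
    rw [Rat.denseRange_cast.closure_eq] at this
    exact this (mem_univ x)
  have hBeq : B = ⋂ q : ℚ, τ (q : ℝ) ⁻¹' A := by
    ext ω
    simp only [hB, Set.mem_iInter, mem_setOf_eq, hpre]
    exact ⟨fun h q => h q, fun h => hdense ω h⟩
  have hBm : MeasurableSet B := by
    rw [hBeq]
    exact MeasurableSet.iInter fun q => (mp (q:ℝ)).measurable hAm
  have hBinv : ∀ z : ℝ, τ z ⁻¹' B = B := by
    intro z
    ext ω
    simp only [hB, Set.mem_preimage, mem_setOf_eq]
    constructor
    · intro h y
      calc θ ≤ F (y - z) (τ z ω) := h (y - z)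
        _ = F 0 (τ (y - z) (τ z ω)) := hFs _ _
        _ = F 0 (τ (y - z + z) ω) := by rw [hadd]
        _ = F y ω := by rw [sub_add_cancel, ← hFs]
    · intro h x
      calc θ ≤ F (x + z) ω := h (x + z)
        _ = F 0 (τ (x + z) ω) := hFs _ _
        _ = F 0 (τ x (τ z ω)) := by rw [hadd]
        _ = F x (τ z ω) := (hFs _ _).symm
  -- P B = P A
  have hAeN : ∀ n : ℕ, P (τ (-(n:ℝ)) ⁻¹' A) = P A := fun n => (mp _).measure_preimage hAm.nullMeasurableSet
  have hbad : P {ω | ¬ ∀ x y : ℝ, x ≤ y → θ ≤ F x ω → θ ≤ F y ω} = 0 := by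
    rw [← compl_setOf]
    exact (ae_iff.mp hfwd) |>.symm ▸ (ae_iff.mp hfwd)
  set E : ℕ → Set Ω := fun n => ⋂ (k : ℕ) (_ : k ≤ n), τ (-(k:ℝ)) ⁻¹' A with hE
  have hEm : ∀ n, MeasurableSet (E n) :=
    fun n => MeasurableSet.iInter fun k => MeasurableSet.iInter fun _ => (mp _).measurable hAm
  have hEanti : Antitone E := by
    intro n m hnm ω hω
    exact Set.mem_iInter.mpr fun k => Set.mem_iInter.mpr fun hk =>
      Set.mem_iInter.mp (Set.mem_iInter.mp hω k) (hk.trans hnm)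
  have hEeq : ∀ n, P (E n) = P A := by
    intro n
    refine le_antisymm ?_ ?_
    · have : E n ⊆ τ (-(n:ℝ)) ⁻¹' A := by
        intro ω hω
        exact (Set.mem_iInter.mp (Set.mem_iInter.mp hω n)) le_rfl
      calc P (E n) ≤ P (τ (-(n:ℝ)) ⁻¹' A) := measure_mono this
        _ = P A := hAeN n
    · rw [← hAeN n]
      have hsub : τ (-(n:ℝ)) ⁻¹' A ⊆ E n ∪ {ω | ¬ ∀ x y : ℝ, x ≤ y → θ ≤ F x ω → θ ≤ F y ω} := by
        intro ω hω
        by_cases hg : ∀ x y : ℝ, x ≤ y → θ ≤ F x ω → θ ≤ F y ω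
        · left
          refine Set.mem_iInter.mpr fun k => Set.mem_iInter.mpr fun hk => ?_
          rw [hpre] at hω ⊢
          exact hg _ _ (by norm_num; exact_mod_cast hk) hω
        · right; exact hg
      calc P (τ (-(n:ℝ)) ⁻¹' A) ≤ P (E n) + P {ω | ¬ ∀ x y : ℝ, x ≤ y → θ ≤ F x ω → θ ≤ F y ω} :=
            le_trans (measure_mono hsub) (measure_union_le _ _)
        _ = P (E n) := by rw [hbad, add_zero]
  have hBiInter : P B = P A := by
    have h1 : P (⋂ n, E n) = P A := by
      have ht := tendsto_measure_iInter_atTop (μ := P) (fun n => (hEm n).nullMeasurableSet)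
        hEanti ⟨0, measure_ne_top _ _⟩
      have ht2 : Tendsto (P ∘ E) atTop (𝓝 (P A)) := by
        have : (P ∘ E) = fun _ => P A := funext fun n => hEeq n
        rw [this]; exact tendsto_const_nhds
      exact tendsto_nhds_unique ht ht2
    have hBsub : B ⊆ ⋂ n, E n := by
      intro ω hω
      refine Set.mem_iInter.mpr fun n => Set.mem_iInter.mpr fun k => Set.mem_iInter.mpr fun _ => ?_
      rw [hpre]; exact hω _
    have hsub2 : (⋂ n, E n) ⊆ B ∪ {ω | ¬ ∀ x y : ℝ, x ≤ y → θ ≤ F x ω → θ ≤ F y ω} := by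
      intro ω hω
      by_cases hg : ∀ x y : ℝ, x ≤ y → θ ≤ F x ω → θ ≤ F y ω
      · left
        intro x
        obtain ⟨n, hn⟩ := exists_nat_ge (-x)
        have hωn : θ ≤ F (-(n:ℝ)) ω := by
          have := Set.mem_iInter.mp (Set.mem_iInter.mp (Set.mem_iInter.mp hω n) n) le_rfl
          rwa [hpre] at this
        exact hg _ _ (by linarith) hωn
      · right; exact hg
    refine le_antisymm ?_ ?_
    · calc P B ≤ P (⋂ n, E n) := measure_mono hBsub
        _ = P A := h1
    · rw [← h1]
      calc P (⋂ n, E n) ≤ P (B ∪ _) := measure_mono hsub2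
        _ ≤ P B + _ := measure_union_le _ _
        _ = P B := by rw [hbad, add_zero]
  rcases herg B hBm hBinv with h0' | h1'
  · -- P A = 0 : second alternative
    right
    have hAx : ∀ x : ℝ, P {ω | θ ≤ F x ω} = 0 := by
      intro x
      rw [← hpre, (mp x).measure_preimage hAm.nullMeasurableSet, ← hBiInter, h0']
    have hq : ∀ᵐ ω ∂P, ∀ q : ℚ, F (q:ℝ) ω < θ := by
      rw [ae_all_iff]
      intro q
      have := hAx (q:ℝ)
      rw [ae_iff]
      simpa [not_lt] using this
    filter_upwards [hq] with ω hω x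
    have hcl : IsClosed {x : ℝ | F x ω ≤ θ} := isClosed_le (hFc ω) continuous_const
    have hsub : Set.range ((↑) : ℚ → ℝ) ⊆ {x : ℝ | F x ω ≤ θ} := by
      rintro _ ⟨q, rfl⟩; exact (hω q).le
    have := hcl.closure_subset_iff.mpr hsub
    rw [Rat.denseRange_cast.closure_eq] at this
    exact this (mem_univ x)
  · -- P B = 1 : first alternative
    left
    have : P Bᶜ = 0 := by
      rw [measure_compl hBm (measure_ne_top _ _), h1']
      simp
    rw [ae_iff]
    rw [show {ω | ¬ ∀ x : ℝ, θ ≤ F x ω} = Bᶜ by ext ω; simp [hB]]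
    exact this

lemma evenFun_abs {G : ℝ → ℝ} (h : ∀ p, G (-p) = G p) (p : ℝ) : G |p| = G p := by
  rcases abs_cases p with ⟨h1, _⟩ | ⟨h1, _⟩
  · rw [h1]
  · rw [h1, h]

lemma stepA_pathwise (G_L : ℝ → ℝ) (hGe : ∀ p, G_L (-p) = G_L p) (hGm : MonotoneOn G_L (Ici 0))
    {g : ℝ → ℝ} (hgc : Continuous g) (hgd : ∀ t, DifferentiableAt ℝ g t)
    {lam M : ℝ} (hM : ∀ x, |g x| ≤ M)
    (hd : ∀ t c, 0 < c → lam + c ≤ G_L (|g t|) → deriv g t ≤ -c) :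
    ∀ x, G_L (|g x|) ≤ lam := by
  intro x₀
  by_contra hcon
  push_neg at hcon
  set δ := G_L (|g x₀|) - lam with hδdef
  have hδ : 0 < δ := by linarith
  set p₀ := |g x₀| with hp₀
  have hp₀0 : 0 ≤ p₀ := abs_nonneg _
  have hkey : ∀ t, p₀ ≤ |g t| → deriv g t ≤ -δ := by
    intro t ht
    refine hd t δ hδ ?_
    have := hGm (mem_Ici.mpr hp₀0) (mem_Ici.mpr (abs_nonneg (g t))) ht
    linarith
  have hp₀M : p₀ ≤ M := hM x₀
  rcases le_or_gt 0 (g x₀) with hsgn | hsgn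
  · -- g x₀ ≥ 0 ; escape backward
    set gg : ℝ → ℝ := fun t => g (-t) with hgg
    have hggd : ∀ t, HasDerivAt gg (deriv g (-t) * (-1)) t := by
      intro t
      exact HasDerivAt.comp t (hgd (-t)).hasDerivAt (hasDerivAt_neg t)
    have hggc : Continuous gg := hgc.comp continuous_neg
    have hstrip : ∀ t, gg t ∈ Icc p₀ (M + 1) → δ ≤ deriv gg t := by
      intro t ht
      have h1 : p₀ ≤ |g (-t)| := le_trans ht.1 (le_abs_self _)
      have := hkey (-t) h1
      rw [(hggd t).deriv]
      linarith
    have hx : p₀ ≤ gg (-x₀) := by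
      simp only [hgg, neg_neg]
      rw [hp₀, abs_of_nonneg hsgn]
    obtain ⟨y, hy⟩ := escape_lemma hggc (fun t => (hggd t).differentiableAt) hδ
      (by linarith) hstrip hx
    have := hM (-y)
    have := le_abs_self (g (-y))
    simp only [hgg] at hy
    linarith
  · -- g x₀ < 0 ; escape forward on -g
    set gg : ℝ → ℝ := fun t => -g t with hgg
    have hggd : ∀ t, HasDerivAt gg (-(deriv g t)) t := fun t => (hgd t).hasDerivAt.neg
    have hggc : Continuous gg := hgc.neg
    have hstrip : ∀ t, gg t ∈ Icc p₀ (M + 1) → δ ≤ deriv gg t := by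
      intro t ht
      have h1 : p₀ ≤ |g t| := le_trans ht.1 (neg_le_abs _)
      have := hkey t h1
      rw [(hggd t).deriv]
      linarith
    have hx : p₀ ≤ gg x₀ := by
      simp only [hgg]
      rw [hp₀, abs_of_neg hsgn]
    obtain ⟨y, hy⟩ := escape_lemma hggc (fun t => (hggd t).differentiableAt) hδ
      (by linarith) hstrip hx
    have := hM y
    have := neg_le_abs (g y)
    simp only [hgg] at hy
    linarith

section Setting

variable {Ω : Type} [MeasurableSpace Ω] {P : Measure Ω} {τ : ℝ → Ω → Ω}
  {a : ℝ → Ω → ℝ} {H : ℝ → ℝ → Ω → ℝ} {G_L G_U : ℝ → ℝ}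

lemma StatSol.cont {lam : ℝ} {f : ℝ → Ω → ℝ} (hf : StatSol P τ a H lam f) (ω : Ω) :
    Continuous fun x => f x ω := (hf.2.2.1 ω).continuous

lemma StatSol.diff {lam : ℝ} {f : ℝ → Ω → ℝ} (hf : StatSol P τ a H lam f) (ω : Ω) :
    ∀ t, DifferentiableAt ℝ (fun x => f x ω) t :=
  fun t => ((hf.2.2.1 ω).differentiable one_ne_zero).differentiableAt

lemma StatSol.meas0 {lam : ℝ} {f : ℝ → Ω → ℝ} (hf : StatSol P τ a H lam f) (x : ℝ) :
    Measurable fun ω => f x ω := hf.1.comp measurable_prodMk_left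

lemma claimA (hset : HJSetting P τ a H G_L G_U) {lam : ℝ} {f : ℝ → Ω → ℝ}
    (hf : StatSol P τ a H lam f) :
    ∀ᵐ ω ∂P, ∀ x : ℝ, G_L (|f x ω|) ≤ lam := by
  filter_upwards [hf.2.2.2] with ω hω
  obtain ⟨⟨M, hM⟩, heq⟩ := hω
  refine stepA_pathwise G_L hset.GL_even hset.GL_mono (hf.cont ω) (hf.diff ω) hM ?_
  intro t c hc hGL
  have heqt := heq t
  have hH : G_L (f t ω) ≤ H (f t ω) t ω := by
    rw [hset.H_stat]; exact hset.H_lower _ _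
  have habs : G_L (|f t ω|) = G_L (f t ω) := evenFun_abs hset.GL_even _
  have hprod : a t ω * deriv (fun y => f y ω) t ≤ -c := by
    rw [habs] at hGL; linarith
  exact div_trick_neg (hset.a_pos t ω) (hset.a_le_one t ω) hc hprod

lemma unifBound (hset : HJSetting P τ a H G_L G_U) {lam : ℝ} {f : ℝ → Ω → ℝ}
    (hf : StatSol P τ a H lam f) :
    ∃ C : ℝ, ∀ᵐ ω ∂P, ∀ x : ℝ, |f x ω| ≤ C := by
  obtain ⟨P₀, hP₀⟩ := eventually_atTop.mp (hset.GL_coercive.eventually_ge_atTop (lam + 1))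
  refine ⟨P₀, ?_⟩
  filter_upwards [claimA hset hf] with ω hω x
  by_contra hcc
  push_neg at hcc
  have := hP₀ _ hcc.le
  have := hω x
  linarith

lemma integ0 (hset : HJSetting P τ a H G_L G_U) {lam : ℝ} {f : ℝ → Ω → ℝ}
    (hf : StatSol P τ a H lam f) :
    Integrable (fun ω => f 0 ω) P := by
  haveI := hset.prob
  obtain ⟨C, hC⟩ := unifBound hset hf
  refine ⟨(hf.meas0 0).aestronglyMeasurable, HasFiniteIntegral.of_bounded (C := C) ?_⟩
  filter_upwards [hC] with ω hω
  simpa [Real.norm_eq_abs] using hω 0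

lemma stepB (hset : HJSetting P τ a H G_L G_U) {lam θ : ℝ} {f : ℝ → Ω → ℝ}
    (hf : StatSol P τ a H lam f) (hmean : (∫ ω, f 0 ω ∂P) = θ) :
    lam ≤ G_U θ := by
  haveI := hset.prob
  by_contra hcon
  push_neg at hcon
  set δ₀ := (lam - G_U θ) / 2 with hδ₀def
  have hδ₀ : 0 < δ₀ := by simp only [hδ₀def]; linarith
  obtain ⟨η₀, hη₀pos, hη₀⟩ := Metric.continuousAt_iff.mp (hset.GU_cont.continuousAt (x := θ)) δ₀ hδ₀
  set η := η₀ / 2 with hηdef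
  have hη : 0 < η := by simp only [hηdef]; linarith
  -- pathwise strip
  have hstrip : ∀ ω, (∀ x, a x ω * deriv (fun y => f y ω) x + H (f x ω) x ω = lam) →
      ∀ t, |f t ω - θ| ≤ η → δ₀ ≤ deriv (fun y => f y ω) t := by
    intro ω heq t ht
    have hGU : G_U (f t ω) ≤ G_U θ + δ₀ := by
      have hd : dist (f t ω) θ < η₀ := by
        rw [Real.dist_eq]
        calc |f t ω - θ| ≤ η := ht
          _ < η₀ := by rw [hηdef]; linarith
      have := hη₀ hd
      rw [Real.dist_eq] at this
      have := abs_le.mp this.le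
      linarith [this.2]
    have hH : H (f t ω) t ω ≤ G_U θ + δ₀ := by
      rw [hset.H_stat]
      exact le_trans (hset.H_upper _ _) hGU
    have hprod : δ₀ ≤ a t ω * deriv (fun y => f y ω) t := by
      have := heq t
      have hlam : lam - (G_U θ + δ₀) = δ₀ := by rw [hδ₀def]; ring
      linarith
    exact div_trick_pos (hset.a_pos t ω) (hset.a_le_one t ω) hδ₀ hprod
  -- forward propagation
  have hfwd : ∀ᵐ ω ∂P, ∀ x y : ℝ, x ≤ y → θ ≤ f x ω → θ ≤ f y ω := by
    filter_upwards [hf.2.2.2] with ω hω x y hxy hx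
    obtain ⟨_, heq⟩ := hω
    by_contra hy
    push_neg at hy
    set m := max (θ - η) (f y ω) with hm
    have hmlt : m < θ := max_lt (by linarith) hy
    set c := (m + θ) / 2 with hc
    have hc1 : c < θ := by rw [hc]; linarith
    have hc2 : f y ω < c := by
      have : f y ω ≤ m := le_max_right _ _
      rw [hc]; linarith
    have hc3 : θ - η ≤ c := by
      have : θ - η ≤ m := le_max_left _ _
      rw [hc]; linarith
    obtain ⟨z, hz1, hz2⟩ := cross_lemma (hf.cont ω) (hf.diff ω) hxy
      (c := c) (by linarith) hc2
    have : δ₀ ≤ deriv (fun y => f y ω) z := by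
      refine hstrip ω heq z ?_
      rw [hz1, abs_le]
      constructor <;> linarith
    linarith
  -- dichotomy
  have hdich := dich_lemma P τ hset.mp_tau hset.tau_zero hset.tau_add hset.ergodic
    f (hf.meas0 0) hf.2.1 (fun ω => hf.cont ω) θ hfwd
  have hint : Integrable (fun ω => f 0 ω) P := integ0 hset hf
  have hf0 : ∀ᵐ ω ∂P, f 0 ω = θ := by
    rcases hdich with h1 | h1
    · have h0 : ∀ᵐ ω ∂P, 0 ≤ f 0 ω - θ := by
        filter_upwards [h1] with ω hω; linarith [hω 0]
      have hint' : Integrable (fun ω => f 0 ω - θ) P := hint.sub (integrable_const θ)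
      have hzero : (∫ ω, (f 0 ω - θ) ∂P) = 0 := by
        rw [integral_sub hint (integrable_const θ), hmean, integral_const]
        simp
      have := (integral_eq_zero_iff_of_nonneg_ae h0 hint').mp hzero
      filter_upwards [this] with ω hω
      have : f 0 ω - θ = 0 := hω
      linarith
    · have h0 : ∀ᵐ ω ∂P, 0 ≤ θ - f 0 ω := by
        filter_upwards [h1] with ω hω; linarith [hω 0]
      have hint' : Integrable (fun ω => θ - f 0 ω) P := (integrable_const θ).sub hint
      have hzero : (∫ ω, (θ - f 0 ω) ∂P) = 0 := by
        rw [integral_sub (integrable_const θ) hint, hmean, integral_const]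
        simp
      have := (integral_eq_zero_iff_of_nonneg_ae h0 hint').mp hzero
      filter_upwards [this] with ω hω
      have : θ - f 0 ω = 0 := hω
      linarith
  -- upgrade to all x
  have hallq : ∀ᵐ ω ∂P, ∀ q : ℚ, f (q : ℝ) ω = θ := by
    rw [ae_all_iff]
    intro q
    have hS : P {ω | ¬ f 0 ω = θ} = 0 := ae_iff.mp hf0
    have hSm : MeasurableSet {ω | ¬ f 0 ω = θ} :=
      ((hf.meas0 0) (measurableSet_singleton θ)).compl
    have hpre : {ω | ¬ f (q : ℝ) ω = θ} = τ (q : ℝ) ⁻¹' {ω | ¬ f 0 ω = θ} := by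
      ext ω; simp [Set.mem_preimage, hf.2.1 (q : ℝ) ω]
    rw [ae_iff, hpre, (hset.mp_tau (q : ℝ)).measure_preimage hSm.nullMeasurableSet]
    exact hS
  have hall : ∀ᵐ ω ∂P, ∀ x : ℝ, f x ω = θ := by
    filter_upwards [hallq] with ω hω x
    have hcl : IsClosed {x : ℝ | f x ω = θ} := isClosed_eq (hf.cont ω) continuous_const
    have hsub : Set.range ((↑) : ℚ → ℝ) ⊆ {x : ℝ | f x ω = θ} := by
      rintro _ ⟨q, rfl⟩; exact hω q
    have := hcl.closure_subset_iff.mpr hsub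
    rw [Rat.denseRange_cast.closure_eq] at this
    exact this (mem_univ x)
  -- extract a point
  haveI : (ae P).NeBot := by
    refine ae_neBot.mpr ?_
    intro h
    have := measure_univ (μ := P)
    rw [h] at this
    simp at this
  obtain ⟨ω₀, hω₀all, hω₀eq⟩ := (hall.and hf.2.2.2).exists
  obtain ⟨_, heq⟩ := hω₀eq
  have heq0 := heq 0
  have hconst : (fun y => f y ω₀) = fun _ => θ := funext fun y => hω₀all y
  rw [hconst] at heq0
  rw [deriv_const, mul_zero, zero_add, hω₀all 0] at heq0
  have := hset.H_upper θ ω₀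
  rw [heq0] at this
  linarith

lemma stepC (hset : HJSetting P τ a H G_L G_U)
    {lam₁ lam₂ θ₁ θ₂ R K : ℝ} {f₁ f₂ : ℝ → Ω → ℝ}
    (hf₁ : StatSol P τ a H lam₁ f₁) (hf₂ : StatSol P τ a H lam₂ f₂)
    (hmean₁ : (∫ ω, f₁ 0 ω ∂P) = θ₁) (hmean₂ : (∫ ω, f₂ 0 ω ∂P) = θ₂)
    (hb₁ : ∀ᵐ ω ∂P, ∀ x : ℝ, |f₁ x ω| ≤ R) (hb₂ : ∀ᵐ ω ∂P, ∀ x : ℝ, |f₂ x ω| ≤ R)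
    (hK : 0 < K)
    (hKlip : ∀ p q ω, |p| ≤ R → |q| ≤ R → |H p 0 ω - H q 0 ω| ≤ K * |p - q|) :
    lam₁ - lam₂ ≤ K * |θ₁ - θ₂| := by
  haveI := hset.prob
  rcases le_or_gt (lam₁ - lam₂) 0 with hΔ | hΔ
  · exact le_trans hΔ (mul_nonneg hK.le (abs_nonneg _))
  set Δ := lam₁ - lam₂ with hΔdef
  -- derivative identity for the difference, pathwise
  have hder : ∀ ω, (∀ x, a x ω * deriv (fun y => f₁ y ω) x + H (f₁ x ω) x ω = lam₁) →
      (∀ x, a x ω * deriv (fun y => f₂ y ω) x + H (f₂ x ω) x ω = lam₂) →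
      (∀ x, |f₁ x ω| ≤ R) → (∀ x, |f₂ x ω| ≤ R) →
      ∀ η t, |f₁ t ω - f₂ t ω| ≤ η →
        Δ - K * η ≤ a t ω * deriv (fun y => f₁ y ω - f₂ y ω) t := by
    intro ω h1 h2 hbb₁ hbb₂ η t ht
    have hdsub : deriv (fun y => f₁ y ω - f₂ y ω) t
        = deriv (fun y => f₁ y ω) t - deriv (fun y => f₂ y ω) t :=
      deriv_sub (hf₁.diff ω t) (hf₂.diff ω t)
    have hlip : |H (f₁ t ω) t ω - H (f₂ t ω) t ω| ≤ K * η := by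
      rw [hset.H_stat (f₁ t ω) t ω, hset.H_stat (f₂ t ω) t ω]
      calc |H (f₁ t ω) 0 (τ t ω) - H (f₂ t ω) 0 (τ t ω)|
          ≤ K * |f₁ t ω - f₂ t ω| := hKlip _ _ _ (hbb₁ t) (hbb₂ t)
        _ ≤ K * η := mul_le_mul_of_nonneg_left ht hK.le
    have habs := abs_le.mp hlip
    have e1 := h1 t
    have e2 := h2 t
    rw [hdsub, mul_sub]
    have : lam₁ - lam₂ = Δ := hΔdef.symm
    linarith [habs.1, habs.2]
  have hstrip : ∀ ω, (∀ x, a x ω * deriv (fun y => f₁ y ω) x + H (f₁ x ω) x ω = lam₁) →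
      (∀ x, a x ω * deriv (fun y => f₂ y ω) x + H (f₂ x ω) x ω = lam₂) →
      (∀ x, |f₁ x ω| ≤ R) → (∀ x, |f₂ x ω| ≤ R) →
      ∀ η, K * η < Δ → ∀ t, |f₁ t ω - f₂ t ω| ≤ η →
        Δ - K * η ≤ deriv (fun y => f₁ y ω - f₂ y ω) t := by
    intro ω h1 h2 hbb₁ hbb₂ η hη t ht
    exact div_trick_pos (hset.a_pos t ω) (hset.a_le_one t ω) (by linarith)
      (hder ω h1 h2 hbb₁ hbb₂ η t ht)
  have hdc : ∀ ω, Continuous fun x => f₁ x ω - f₂ x ω :=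
    fun ω => (hf₁.cont ω).sub (hf₂.cont ω)
  have hdd : ∀ ω t, DifferentiableAt ℝ (fun x => f₁ x ω - f₂ x ω) t :=
    fun ω t => (hf₁.diff ω t).sub (hf₂.diff ω t)
  -- forward propagation for the difference at level 0
  have hfwd : ∀ᵐ ω ∂P, ∀ x y : ℝ, x ≤ y →
      (0:ℝ) ≤ f₁ x ω - f₂ x ω → (0:ℝ) ≤ f₁ y ω - f₂ y ω := by
    filter_upwards [hf₁.2.2.2, hf₂.2.2.2, hb₁, hb₂] with ω hω₁ hω₂ hbb₁ hbb₂ x y hxy hx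
    set η := Δ / (2 * K) with hηdef
    have hη : 0 < η := by positivity
    have hKη : K * η < Δ := by
      rw [hηdef]
      rw [show K * (Δ / (2 * K)) = Δ / 2 by field_simp]
      linarith
    by_contra hy
    push_neg at hy
    set dy := f₁ y ω - f₂ y ω with hdy
    set m := max (-η) dy with hm
    have hm0 : m < 0 := max_lt (by linarith) hy
    set c := m / 2 with hc
    have hc0 : c < 0 := by rw [hc]; linarith
    have hc2 : dy < c := by
      have h1 : dy ≤ m := le_max_right _ _
      rw [hc]; linarith
    have hc3 : -η ≤ c := by
      have h1 : -η ≤ m := le_max_left _ _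
      rw [hc]; linarith
    obtain ⟨z, hz1, hz2⟩ := cross_lemma (hdc ω) (hdd ω) hxy (c := c) (by linarith) hc2
    have : Δ - K * η ≤ deriv (fun x => f₁ x ω - f₂ x ω) z := by
      refine hstrip ω hω₁.2 hω₂.2 hbb₁ hbb₂ η hKη z ?_
      rw [hz1, abs_le]
      constructor <;> linarith
    linarith
  have hdich := dich_lemma P τ hset.mp_tau hset.tau_zero hset.tau_add hset.ergodic
    (fun x ω => f₁ x ω - f₂ x ω) ((hf₁.meas0 0).sub (hf₂.meas0 0))
    (fun x ω => by rw [hf₁.2.1 x ω, hf₂.2.1 x ω]) hdc 0 hfwd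
  have hint : Integrable (fun ω => f₁ 0 ω - f₂ 0 ω) P := (integ0 hset hf₁).sub (integ0 hset hf₂)
  have hintval : (∫ ω, (f₁ 0 ω - f₂ 0 ω) ∂P) = θ₁ - θ₂ := by
    rw [integral_sub (integ0 hset hf₁) (integ0 hset hf₂), hmean₁, hmean₂]
  rcases hdich with hpos | hneg
  · -- d ≥ 0 everywhere a.s.
    have hclaim : ∀ η : ℝ, K * η < Δ → ∀ᵐ ω ∂P, η ≤ f₁ 0 ω - f₂ 0 ω := by
      intro η hKη
      filter_upwards [hf₁.2.2.2, hf₂.2.2.2, hb₁, hb₂, hpos] with ω hω₁ hω₂ hbb₁ hbb₂ hp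
      rcases le_or_gt η 0 with hη0 | hη0
      · exact le_trans hη0 (hp 0)
      by_contra hd0
      push_neg at hd0
      -- escape backward
      set dfun : ℝ → ℝ := fun x => f₁ x ω - f₂ x ω with hdfun
      set gg : ℝ → ℝ := fun t => -(dfun (-t)) with hgg
      have hggd : ∀ t, HasDerivAt gg (deriv dfun (-t)) t := by
        intro t
        have h1 : HasDerivAt (fun t : ℝ => dfun (-t)) (deriv dfun (-t) * (-1)) t :=
          HasDerivAt.comp t (hdd ω (-t)).hasDerivAt (hasDerivAt_neg t)
        have := h1.neg
        rw [mul_neg_one, neg_neg] at this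
        exact this
      have hggc : Continuous gg := ((hdc ω).comp continuous_neg).neg
      have hstripg : ∀ t, gg t ∈ Icc (-η) η → Δ - K * η ≤ deriv gg t := by
        intro t ht
        rw [(hggd t).deriv]
        refine hstrip ω hω₁.2 hω₂.2 hbb₁ hbb₂ η hKη (-t) ?_
        have h1 : |gg t| ≤ η := abs_le.mpr ht
        simpa [hgg, abs_neg] using h1
      have hx : -η ≤ gg 0 := by
        simp only [hgg, hdfun, neg_zero]
        linarith
      obtain ⟨y, hy⟩ := escape_lemma hggc (fun t => (hggd t).differentiableAt)
        (by linarith : (0:ℝ) < Δ - K * η) (by linarith) hstripg hx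
      have hge := hp (-y)
      simp only [hgg, hdfun] at hy
      linarith
    have hfinal : Δ ≤ K * (θ₁ - θ₂) := by
      by_contra hcc
      push_neg at hcc
      set η := (K * (θ₁ - θ₂) + Δ) / (2 * K) with hηdef
      have hKη : K * η < Δ := by
        rw [hηdef, show K * ((K * (θ₁ - θ₂) + Δ) / (2 * K)) = (K * (θ₁ - θ₂) + Δ) / 2 by
          field_simp]
        linarith
      have hae := hclaim η hKη
      have hmono : (∫ _ω, η ∂P) ≤ (∫ ω, (f₁ 0 ω - f₂ 0 ω) ∂P) :=
        integral_mono_ae (integrable_const η) hint hae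
      rw [hintval, integral_const] at hmono
      simp at hmono
      have : K * η ≤ K * (θ₁ - θ₂) := mul_le_mul_of_nonneg_left hmono hK.le
      rw [hηdef, show K * ((K * (θ₁ - θ₂) + Δ) / (2 * K)) = (K * (θ₁ - θ₂) + Δ) / 2 by
        field_simp] at this
      linarith
    calc Δ ≤ K * (θ₁ - θ₂) := hfinal
      _ ≤ K * |θ₁ - θ₂| := mul_le_mul_of_nonneg_left (le_abs_self _) hK.le
  · -- d ≤ 0 everywhere a.s.
    have hclaim : ∀ η : ℝ, K * η < Δ → ∀ᵐ ω ∂P, f₁ 0 ω - f₂ 0 ω ≤ -η := by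
      intro η hKη
      filter_upwards [hf₁.2.2.2, hf₂.2.2.2, hb₁, hb₂, hneg] with ω hω₁ hω₂ hbb₁ hbb₂ hp
      rcases le_or_gt η 0 with hη0 | hη0
      · have := hp 0
        linarith
      by_contra hd0
      push_neg at hd0
      have hstripg : ∀ t, (fun x => f₁ x ω - f₂ x ω) t ∈ Icc (-η) η →
          Δ - K * η ≤ deriv (fun x => f₁ x ω - f₂ x ω) t := by
        intro t ht
        exact hstrip ω hω₁.2 hω₂.2 hbb₁ hbb₂ η hKη t (abs_le.mpr ht)
      have hx : -η ≤ (fun x => f₁ x ω - f₂ x ω) 0 := by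
        show -η ≤ f₁ 0 ω - f₂ 0 ω
        linarith
      obtain ⟨y, hy⟩ := escape_lemma (hdc ω) (hdd ω)
        (by linarith : (0:ℝ) < Δ - K * η) (by linarith) hstripg hx
      have h2 := hp y
      have h3 : η < f₁ y ω - f₂ y ω := hy
      linarith
    have hfinal : Δ ≤ K * (θ₂ - θ₁) := by
      by_contra hcc
      push_neg at hcc
      set η := (K * (θ₂ - θ₁) + Δ) / (2 * K) with hηdef
      have hKη : K * η < Δ := by
        rw [hηdef, show K * ((K * (θ₂ - θ₁) + Δ) / (2 * K)) = (K * (θ₂ - θ₁) + Δ) / 2 by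
          field_simp]
        linarith
      have hae := hclaim η hKη
      have hmono : (∫ ω, (f₁ 0 ω - f₂ 0 ω) ∂P) ≤ (∫ _ω, -η ∂P) :=
        integral_mono_ae hint (integrable_const (-η)) hae
      rw [hintval, integral_const] at hmono
      simp at hmono
      have : K * η ≤ K * (θ₂ - θ₁) := mul_le_mul_of_nonneg_left (by linarith) hK.le
      rw [hηdef, show K * ((K * (θ₂ - θ₁) + Δ) / (2 * K)) = (K * (θ₂ - θ₁) + Δ) / 2 by
        field_simp] at this
      linarith
    calc Δ ≤ K * (θ₂ - θ₁) := hfinal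
      _ ≤ K * |θ₁ - θ₂| := by
          have h1 : θ₂ - θ₁ ≤ |θ₁ - θ₂| := by
            rw [abs_sub_comm]; exact le_abs_self _
          exact mul_le_mul_of_nonneg_left h1 hK.le

end Setting


theorem lambda_lipschitz_in_theta
    {Ω : Type} [MeasurableSpace Ω] (P : Measure Ω) (τ : ℝ → Ω → Ω)
    (a : ℝ → Ω → ℝ) (H : ℝ → ℝ → Ω → ℝ) (G_L G_U : ℝ → ℝ)
    (hset : HJSetting P τ a H G_L G_U)
    (θ₁ θ₂ lam₁ lam₂ : ℝ) (f₁ f₂ : ℝ → Ω → ℝ)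
    (hf₁ : StatSol P τ a H lam₁ f₁) (hf₂ : StatSol P τ a H lam₂ f₂)
    (hmean₁ : (∫ ω, f₁ 0 ω ∂P) = θ₁) (hmean₂ : (∫ ω, f₂ 0 ω ∂P) = θ₂)
    (K : ℝ) (hK : 0 < K)
    (hKlip : ∀ p q ω, |p| ≤ max (Rbar G_L (G_U θ₁)) (Rbar G_L (G_U θ₂)) →
      |q| ≤ max (Rbar G_L (G_U θ₁)) (Rbar G_L (G_U θ₂)) →
      |H p 0 ω - H q 0 ω| ≤ K * |p - q|) :
    |lam₁ - lam₂| ≤ K * |θ₁ - θ₂| := by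
  haveI := hset.prob
  set R := max (Rbar G_L (G_U θ₁)) (Rbar G_L (G_U θ₂)) with hR
  have hB₁ : lam₁ ≤ G_U θ₁ := stepB hset hf₁ hmean₁
  have hB₂ : lam₂ ≤ G_U θ₂ := stepB hset hf₂ hmean₂
  have hbdd : ∀ θ : ℝ, BddAbove {p : ℝ | 0 ≤ p ∧ G_L p ≤ G_U θ} := by
    intro θ
    obtain ⟨P₀, hP₀⟩ := eventually_atTop.mp (hset.GL_coercive.eventually_ge_atTop (G_U θ + 1))
    refine ⟨P₀, fun p hp => ?_⟩
    by_contra hq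
    push_neg at hq
    have := hP₀ p hq.le
    have := hp.2
    linarith
  have hbR : ∀ (lam θ : ℝ) (f : ℝ → Ω → ℝ), StatSol P τ a H lam f → lam ≤ G_U θ →
      ∀ᵐ ω ∂P, ∀ x : ℝ, |f x ω| ≤ Rbar G_L (G_U θ) := by
    intro lam θ f hf hlam
    filter_upwards [claimA hset hf] with ω hω x
    exact le_csSup (hbdd θ) ⟨abs_nonneg _, (hω x).trans hlam⟩
  have hbR₁ : ∀ᵐ ω ∂P, ∀ x : ℝ, |f₁ x ω| ≤ R := by
    filter_upwards [hbR lam₁ θ₁ f₁ hf₁ hB₁] with ω hω x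
    exact (hω x).trans (le_max_left _ _)
  have hbR₂ : ∀ᵐ ω ∂P, ∀ x : ℝ, |f₂ x ω| ≤ R := by
    filter_upwards [hbR lam₂ θ₂ f₂ hf₂ hB₂] with ω hω x
    exact (hω x).trans (le_max_right _ _)
  have h1 : lam₁ - lam₂ ≤ K * |θ₁ - θ₂| :=
    stepC hset hf₁ hf₂ hmean₁ hmean₂ hbR₁ hbR₂ hK hKlip
  have hKlip' : ∀ p q ω, |p| ≤ R → |q| ≤ R → |H p 0 ω - H q 0 ω| ≤ K * |p - q| := hKlip
  have h2 : lam₂ - lam₁ ≤ K * |θ₂ - θ₁| :=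
    stepC hset hf₂ hf₁ hmean₂ hmean₁ hbR₂ hbR₁ hK hKlip'
  rw [abs_sub_comm] at h2
  exact abs_le.mpr ⟨by linarith, h1⟩
end
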